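/- arXiv:1411.0132 — 9 statements merged into one kernel-verified Lean document; each statement's English description precedes it below -/
import Mathlib

section
/- Let G be a simple graph, f a signed k-submatching of G with f(E(G)) = β_S^k(G), and let G_1, …, G_ω be the connected components of G. Let A be a set of k vertices v with f(E_G(v)) ≤ 1, and let k_i = |V(G_i) ∩ A|. Then the restriction of f to each E(G_i) is an optimal signed k_i-submatching of G_i, i.e., f(E(G_i)) = β_S^{k_i}(G_i) for every i, and β_S^k(G) = Σ_i β_S^{k_i}(G_i). -/
open Finset

variable {V : Type*}

/-- Sum of `f` over all edges of `G`. -/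
noncomputable def edgeSum (G : SimpleGraph V) (f : Sym2 V → ℤ) : ℤ :=
  ∑ᶠ e ∈ G.edgeSet, f e

/-- Sum of `f` over all edges of `G` incident with `v`, i.e. `f(E_G(v))`. -/
noncomputable def vertexSum (G : SimpleGraph V) (f : Sym2 V → ℤ) (v : V) : ℤ :=
  ∑ᶠ e ∈ {e ∈ G.edgeSet | v ∈ e}, f e

/-- `f` is a signed `k`-submatching of `G`: it takes values `±1` on edges and
`f(E_G(v)) ≤ 1` for at least `k` vertices. -/
def IsSignedSubmatching (G : SimpleGraph V) (f : Sym2 V → ℤ) (k : ℕ) : Prop :=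
  (∀ e ∈ G.edgeSet, f e = 1 ∨ f e = -1) ∧ k ≤ {v | vertexSum G f v ≤ 1}.ncard

/-- The signed `k`-submatching number `β_S^k(G)`. -/
noncomputable def betaS (G : SimpleGraph V) (k : ℕ) : ℤ :=
  sSup {s : ℤ | ∃ f, IsSignedSubmatching G f k ∧ s = edgeSum G f}


set_option linter.unusedSectionVars false

section Comp
variable [Fintype V] (G : SimpleGraph V)

def compEdges (c : G.ConnectedComponent) : Set (Sym2 V) :=
  {e ∈ G.edgeSet | ∀ v ∈ e, v ∈ c.supp}

lemma adj_mem_supp {a b : V} (h : G.Adj a b) {c : G.ConnectedComponent}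
    (ha : a ∈ c.supp) : b ∈ c.supp := by
  rw [SimpleGraph.ConnectedComponent.mem_supp_iff] at *
  rw [← ha]
  exact (SimpleGraph.ConnectedComponent.sound h.symm.reachable)

lemma image_edgeSet (c : G.ConnectedComponent) :
    Sym2.map (Subtype.val) '' (SimpleGraph.induce c.supp G).edgeSet = compEdges G c := by
  ext e
  constructor
  · rintro ⟨e', he', rfl⟩
    induction e' using Sym2.ind with
    | _ u w =>
      rw [SimpleGraph.mem_edgeSet] at he'
      have hadj : G.Adj u.1 w.1 := he'
      rw [Sym2.map_pair_eq]
      refine ⟨hadj, ?_⟩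
      intro v hv
      rw [Sym2.mem_iff] at hv
      rcases hv with rfl | rfl
      exacts [u.2, w.2]
  · rintro ⟨he, hall⟩
    induction e using Sym2.ind with
    | _ a b =>
      have ha : a ∈ c.supp := hall a (Sym2.mem_mk_left a b)
      have hb : b ∈ c.supp := hall b (Sym2.mem_mk_right a b)
      have hadj : G.Adj a b := he
      refine ⟨s(⟨a, ha⟩, ⟨b, hb⟩), ?_, by rw [Sym2.map_pair_eq]⟩
      exact hadj

lemma iUnion_compEdges : ⋃ c, compEdges G c = G.edgeSet := by
  ext e
  simp only [Set.mem_iUnion]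
  constructor
  · rintro ⟨c, he, -⟩; exact he
  · intro he
    induction e using Sym2.ind with
    | _ a b =>
      have hadj : G.Adj a b := he
      refine ⟨G.connectedComponentMk a, he, ?_⟩
      intro v hv
      rw [Sym2.mem_iff] at hv
      have ha : a ∈ (G.connectedComponentMk a).supp :=
        (SimpleGraph.ConnectedComponent.mem_supp_iff _ _).mpr rfl
      rcases hv with rfl | rfl
      · exact ha
      · exact adj_mem_supp G hadj ha

lemma pairwise_compEdges : Pairwise (Function.onFun Disjoint (compEdges G)) := by
  intro c c' hne
  simp only [Function.onFun]
  rw [Set.disjoint_left]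
  rintro e ⟨he, h1⟩ ⟨-, h2⟩
  induction e using Sym2.ind with
  | _ a b =>
    have ha : a ∈ c.supp := h1 a (Sym2.mem_mk_left a b)
    have ha' : a ∈ c'.supp := h2 a (Sym2.mem_mk_left a b)
    rw [SimpleGraph.ConnectedComponent.mem_supp_iff] at ha ha'
    exact hne (ha ▸ ha')

lemma edgeSum_restrict (c : G.ConnectedComponent) (g : Sym2 V → ℤ) :
    edgeSum (SimpleGraph.induce c.supp G) (fun e => g (e.map Subtype.val))
      = ∑ᶠ e ∈ compEdges G c, g e := by
  rw [← image_edgeSet,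
    finsum_mem_image ((Sym2.map.injective Subtype.val_injective).injOn)]
  rfl

lemma edgeSum_decomp (g : Sym2 V → ℤ) :
    edgeSum G g = ∑ᶠ c : G.ConnectedComponent, ∑ᶠ e ∈ compEdges G c, g e := by
  rw [edgeSum, ← iUnion_compEdges,
    finsum_mem_iUnion (pairwise_compEdges G) (fun c => Set.toFinite _)]

lemma vertexSum_restrict (c : G.ConnectedComponent) (g : Sym2 V → ℤ) (v : V)
    (hv : v ∈ c.supp) :
    vertexSum (SimpleGraph.induce c.supp G) (fun e => g (e.map Subtype.val)) ⟨v, hv⟩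
      = vertexSum G g v := by
  rw [vertexSum, vertexSum]
  have himg : Sym2.map (Subtype.val) ''
      {e ∈ (SimpleGraph.induce c.supp G).edgeSet | (⟨v, hv⟩ : c.supp) ∈ e}
      = {e ∈ G.edgeSet | v ∈ e} := by
    ext e
    constructor
    · rintro ⟨e', ⟨he', hve'⟩, rfl⟩
      constructor
      · induction e' using Sym2.ind with
        | _ u w =>
          rw [SimpleGraph.mem_edgeSet] at he'
          have hadj : G.Adj u.1 w.1 := he'
          rw [Sym2.map_pair_eq]
          exact hadj
      · rw [Sym2.mem_map]
        exact ⟨⟨v, hv⟩, hve', rfl⟩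
    · rintro ⟨he, hve⟩
      induction e using Sym2.ind with
      | _ a b =>
        have hadj : G.Adj a b := he
        rw [Sym2.mem_iff] at hve
        have ha : a ∈ c.supp := by
          rcases hve with rfl | rfl
          · exact hv
          · exact adj_mem_supp G hadj.symm hv
        have hb : b ∈ c.supp := by
          rcases hve with rfl | rfl
          · exact adj_mem_supp G hadj hv
          · exact hv
        refine ⟨s(⟨a, ha⟩, ⟨b, hb⟩), ⟨hadj, ?_⟩, by rw [Sym2.map_pair_eq]⟩
        rw [Sym2.mem_iff]
        rcases hve with rfl | rfl
        · left; exact Subtype.ext rfl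
        · right; exact Subtype.ext rfl
  rw [← himg,
    finsum_mem_image ((Sym2.map.injective Subtype.val_injective).injOn)]

end Comp

section Aux
variable {W : Type*} [Finite W]

lemma edgeSum_le_card (H : SimpleGraph W) (g : Sym2 W → ℤ)
    (hg : ∀ e ∈ H.edgeSet, g e = 1 ∨ g e = -1) :
    edgeSum H g ≤ (H.edgeSet.ncard : ℤ) := by
  have hfin : H.edgeSet.Finite := Set.toFinite _
  rw [edgeSum, finsum_mem_eq_finite_toFinset_sum _ hfin,
    Set.ncard_eq_toFinset_card _ hfin]
  calc ∑ e ∈ hfin.toFinset, g e ≤ ∑ e ∈ hfin.toFinset, 1 := by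
        apply Finset.sum_le_sum
        intro e he
        rcases hg e (hfin.mem_toFinset.mp he) with h | h <;> omega
    _ = (hfin.toFinset.card : ℤ) := by simp
    _ = _ := by norm_num

lemma bddAbove_betaSet (H : SimpleGraph W) (k : ℕ) :
    BddAbove {s : ℤ | ∃ g, IsSignedSubmatching H g k ∧ s = edgeSum H g} := by
  refine ⟨(H.edgeSet.ncard : ℤ), ?_⟩
  rintro s ⟨g, hg, rfl⟩
  exact edgeSum_le_card H g hg.1

lemma le_betaS (H : SimpleGraph W) (k : ℕ) (g : Sym2 W → ℤ)
    (hg : IsSignedSubmatching H g k) : edgeSum H g ≤ betaS H k :=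
  le_csSup (bddAbove_betaSet H k) ⟨g, hg, rfl⟩

lemma exists_opt (H : SimpleGraph W) (k : ℕ) (g0 : Sym2 W → ℤ)
    (hg0 : IsSignedSubmatching H g0 k) :
    ∃ g, IsSignedSubmatching H g k ∧ betaS H k = edgeSum H g := by
  have h := Int.csSup_mem (s := {s : ℤ | ∃ g, IsSignedSubmatching H g k ∧ s = edgeSum H g})
    ⟨edgeSum H g0, g0, hg0, rfl⟩ (bddAbove_betaSet H k)
  obtain ⟨g, hg, he⟩ := h
  exact ⟨g, hg, he⟩

end Aux

section Main
variable [Fintype V] (G : SimpleGraph V)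

lemma restrict_submatching (f : Sym2 V → ℤ) (k : ℕ) (hf : IsSignedSubmatching G f k)
    (A : Set V) (hA : A ⊆ {v | vertexSum G f v ≤ 1}) (c : G.ConnectedComponent) :
    IsSignedSubmatching (SimpleGraph.induce c.supp G) (fun e => f (e.map Subtype.val))
      ((c.supp ∩ A).ncard) := by
  constructor
  · intro e' he'
    have hmem : Sym2.map Subtype.val e' ∈ compEdges G c := by
      rw [← image_edgeSet]; exact ⟨e', he', rfl⟩
    exact hf.1 _ hmem.1
  · have hsub : (Subtype.val ⁻¹' A : Set c.supp) ⊆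
        {w | vertexSum (SimpleGraph.induce c.supp G) (fun e => f (e.map Subtype.val)) w ≤ 1} := by
      rintro ⟨v, hv⟩ hvA
      have h1 := hA hvA
      simp only [Set.mem_setOf_eq] at h1 ⊢
      rw [vertexSum_restrict G c f v hv]
      exact h1
    calc (c.supp ∩ A).ncard = (Subtype.val ⁻¹' A : Set c.supp).ncard := by
          rw [← Set.ncard_image_of_injective _ Subtype.val_injective,
            Subtype.image_preimage_coe]
      _ ≤ _ := Set.ncard_le_ncard hsub (Set.toFinite _)

theorem optimal_restricts_to_components' (k : ℕ)
    (f : Sym2 V → ℤ) (hf : IsSignedSubmatching G f k)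
    (hopt : edgeSum G f = betaS G k)
    (A : Set V) (hA : A ⊆ {v | vertexSum G f v ≤ 1}) (hAcard : A.ncard = k) :
    (∀ c : G.ConnectedComponent,
      edgeSum (SimpleGraph.induce c.supp G) (fun e => f (e.map Subtype.val))
        = betaS (SimpleGraph.induce c.supp G) ((c.supp ∩ A).ncard)) ∧
    betaS G k
      = ∑ᶠ c : G.ConnectedComponent,
          betaS (SimpleGraph.induce c.supp G) ((c.supp ∩ A).ncard) := by
  classical
  haveI : Fintype G.ConnectedComponent := Fintype.ofFinite _
  have main : ∀ c : G.ConnectedComponent,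
      edgeSum (SimpleGraph.induce c.supp G) (fun e => f (e.map Subtype.val))
        = betaS (SimpleGraph.induce c.supp G) ((c.supp ∩ A).ncard) := by
    intro c0
    have hres := restrict_submatching G f k hf A hA c0
    refine le_antisymm (le_betaS _ _ _ hres) ?_
    obtain ⟨g0, hg0, hbe⟩ := exists_opt _ _ _ hres
    rw [hbe]
    set F : Sym2 V → ℤ := fun e =>
      if h : ∃ e' : Sym2 c0.supp, e'.map Subtype.val = e then g0 h.choose else f e with hF
    have hlift : ∀ e' : Sym2 c0.supp, F (e'.map Subtype.val) = g0 e' := by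
      intro e'
      have h : ∃ e'' : Sym2 c0.supp, e''.map Subtype.val = e'.map Subtype.val := ⟨e', rfl⟩
      rw [hF]
      simp only
      rw [dif_pos h]
      congr 1
      exact Sym2.map.injective Subtype.val_injective h.choose_spec
    have hnot : ∀ e, (¬ ∀ v ∈ e, v ∈ c0.supp) → F e = f e := by
      intro e hne
      rw [hF]
      simp only
      rw [dif_neg]
      rintro ⟨e', rfl⟩
      apply hne
      intro v hv
      rw [Sym2.mem_map] at hv
      obtain ⟨w, hw, rfl⟩ := hv
      exact w.2
    have hvout : ∀ v, v ∉ c0.supp → vertexSum G F v = vertexSum G f v := by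
      intro v hv
      refine finsum_mem_congr rfl ?_
      rintro e ⟨he, hve⟩
      refine hnot e fun hall => hv (hall v hve)
    have hvin : ∀ (v : V) (hv : v ∈ c0.supp),
        vertexSum G F v = vertexSum (SimpleGraph.induce c0.supp G) g0 ⟨v, hv⟩ := by
      intro v hv
      rw [← vertexSum_restrict G c0 F v hv]
      exact finsum_mem_congr rfl fun e' _ => hlift e'
    have hFsign : ∀ e ∈ G.edgeSet, F e = 1 ∨ F e = -1 := by
      intro e he
      by_cases hall : ∀ v ∈ e, v ∈ c0.supp
      · have hmem : e ∈ compEdges G c0 := ⟨he, hall⟩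
        rw [← image_edgeSet] at hmem
        obtain ⟨e', he', rfl⟩ := hmem
        rw [hlift e']
        exact hg0.1 e' he'
      · rw [hnot e hall]; exact hf.1 e he
    have hcount : k ≤ {v | vertexSum G F v ≤ 1}.ncard := by
      set S : Set V := Subtype.val ''
        {w : c0.supp | vertexSum (SimpleGraph.induce c0.supp G) g0 w ≤ 1} with hS
      have h1 : (A \ c0.supp) ⊆ {v | vertexSum G F v ≤ 1} := by
        rintro v ⟨hvA, hvn⟩
        simp only [Set.mem_setOf_eq]
        rw [hvout v hvn]
        exact hA hvA
      have h2 : S ⊆ {v | vertexSum G F v ≤ 1} := by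
        rintro v ⟨⟨v', hv'⟩, hw, rfl⟩
        simp only [Set.mem_setOf_eq] at hw ⊢
        rw [hvin v' hv']
        exact hw
      have hdisj : Disjoint (A \ c0.supp) S := by
        rw [Set.disjoint_left]
        rintro v ⟨-, hvn⟩ ⟨w, -, rfl⟩
        exact hvn w.2
      have hcard : (c0.supp ∩ A).ncard ≤ S.ncard := by
        rw [hS, Set.ncard_image_of_injective _ Subtype.val_injective]
        exact hg0.2
      calc k = A.ncard := hAcard.symm
        _ = (A ∩ c0.supp).ncard + (A \ c0.supp).ncard :=
            (Set.ncard_inter_add_ncard_diff_eq_ncard A c0.supp (Set.toFinite _)).symm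
        _ ≤ S.ncard + (A \ c0.supp).ncard := by
            rw [Set.inter_comm]; exact Nat.add_le_add_right hcard _
        _ = (A \ c0.supp ∪ S).ncard := by
            rw [Set.ncard_union_eq hdisj (Set.toFinite _) (Set.toFinite _)]; ring
        _ ≤ _ := Set.ncard_le_ncard (Set.union_subset h1 h2) (Set.toFinite _)
    have hFsub : IsSignedSubmatching G F k := ⟨hFsign, hcount⟩
    have hle : edgeSum G F ≤ edgeSum G f := hopt ▸ le_betaS G k F hFsub
    have hterm : ∀ c, c ≠ c0 → (∑ᶠ e ∈ compEdges G c, F e) = ∑ᶠ e ∈ compEdges G c, f e := by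
      intro c hc
      refine finsum_mem_congr rfl ?_
      rintro e ⟨he, hall⟩
      refine hnot e fun hall0 => ?_
      induction e using Sym2.ind with
      | _ a b =>
        have h1 := hall a (Sym2.mem_mk_left a b)
        have h2 := hall0 a (Sym2.mem_mk_left a b)
        rw [SimpleGraph.ConnectedComponent.mem_supp_iff] at h1 h2
        exact hc (h1 ▸ h2)
    have hc0F : (∑ᶠ e ∈ compEdges G c0, F e)
        = edgeSum (SimpleGraph.induce c0.supp G) g0 := by
      rw [← edgeSum_restrict]
      exact congrArg _ (funext fun e' => hlift e')
    rw [edgeSum_decomp G F, edgeSum_decomp G f] at hle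
    rw [finsum_eq_sum_of_fintype, finsum_eq_sum_of_fintype] at hle
    rw [← Finset.add_sum_erase _ _ (Finset.mem_univ c0),
      ← Finset.add_sum_erase _ _ (Finset.mem_univ c0)] at hle
    have hrest : ∑ c ∈ Finset.univ.erase c0, (∑ᶠ e ∈ compEdges G c, F e)
        = ∑ c ∈ Finset.univ.erase c0, ∑ᶠ e ∈ compEdges G c, f e :=
      Finset.sum_congr rfl fun c hc => hterm c (Finset.ne_of_mem_erase hc)
    rw [hrest] at hle
    have hle2 := (add_le_add_iff_right _).mp hle
    rw [hc0F] at hle2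
    rw [edgeSum_restrict]
    exact hle2
  refine ⟨main, ?_⟩
  rw [← hopt, edgeSum_decomp G f]
  refine finsum_congr fun c => ?_
  rw [← main c, edgeSum_restrict]

end Main

theorem optimal_restricts_to_components [Fintype V] (G : SimpleGraph V) (k : ℕ)
    (f : Sym2 V → ℤ) (hf : IsSignedSubmatching G f k)
    (hopt : edgeSum G f = betaS G k)
    (A : Set V) (hA : A ⊆ {v | vertexSum G f v ≤ 1}) (hAcard : A.ncard = k) :
    (∀ c : G.ConnectedComponent,
      edgeSum (SimpleGraph.induce c.supp G) (fun e => f (e.map Subtype.val))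
        = betaS (SimpleGraph.induce c.supp G) ((c.supp ∩ A).ncard)) ∧
    betaS G k
      = ∑ᶠ c : G.ConnectedComponent,
          betaS (SimpleGraph.induce c.supp G) ((c.supp ∩ A).ncard) :=
  optimal_restricts_to_components' G k f hf hopt A hA hAcard
end

section
/- Let G be an Eulerian simple graph (connected, all degrees even) with m edges and n vertices. Then β_S^n(G) = 0 if m is even and β_S^n(G) = −1 if m is odd. -/
open Finset

variable {V : Type*}

/-! ### Auxiliary machinery -/

open SimpleGraph Walk

/-- alternating sign starting with `-1` -/
private def alt (i : ℕ) : ℤ := if i % 2 = 0 then -1 else 1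

private lemma alt_succ (k : ℕ) : alt (k+1) = - alt k := by
  unfold alt; rcases Nat.even_or_odd k with h | h
  · simp [Nat.even_iff.mp h, Nat.succ_mod_two_eq_one_iff.mpr (Nat.even_iff.mp h)]
  · simp [Nat.odd_iff.mp h, Nat.succ_mod_two_eq_zero_iff.mpr (Nat.odd_iff.mp h)]

private lemma alt_abs (k : ℕ) : alt k = 1 ∨ alt k = -1 := by
  unfold alt; split <;> simp

private lemma list_alt_sum (f : Sym2 V → ℤ) :
    ∀ (l : List (Sym2 V)) (k : ℕ),
      (∀ i (h : i < l.length), f (l.get ⟨i, h⟩) = alt (k + i)) →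
      (l.map f).sum = if l.length % 2 = 0 then 0 else alt k := by
  intro l
  induction l with
  | nil => simp
  | cons a t ih =>
    intro k hf
    have ha : f a = alt k := by simpa using hf 0 (by simp)
    have ht := ih (k+1) (fun i h => by
      rw [show k + 1 + i = k + (i+1) by omega]
      have := hf (i+1) (by simpa using Nat.succ_lt_succ h)
      simpa using this)
    simp only [List.map_cons, List.sum_cons, ha, ht, List.length_cons]
    rcases Nat.even_or_odd t.length with h | h
    · have h2 := Nat.even_iff.mp h
      have h3 : (t.length + 1) % 2 = 1 := Nat.succ_mod_two_eq_one_iff.mpr h2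
      simp [h2, h3]
    · have h2 := Nat.odd_iff.mp h
      have h3 : (t.length + 1) % 2 = 0 := Nat.succ_mod_two_eq_zero_iff.mpr h2
      simp [h2, h3, alt_succ]

section Dec
variable [DecidableEq V]

private lemma walk_alt_vsum {G : SimpleGraph V} (v : V) (f : Sym2 V → ℤ) :
    ∀ {a b : V} (p : G.Walk a b) (k : ℕ),
      (∀ i (h : i < p.edges.length), f (p.edges.get ⟨i, h⟩) = alt (k + i)) →
      ((p.edges.filter (fun e => decide (v ∈ e))).map f).sum =
        (if v = a ∧ 0 < p.length then alt k else 0) +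
        (if v = b ∧ 0 < p.length then alt (k + p.length - 1) else 0) := by
  intro a b p
  induction p with
  | nil => simp
  | @cons a c b h q ih =>
    intro k hf
    have ha : f (s(a, c)) = alt k := by simpa using hf 0 (by simp)
    have hq := ih (k+1) (fun i hi => by
      rw [show k + 1 + i = k + (i+1) by omega]
      have := hf (i+1) (by simpa using Nat.succ_lt_succ hi)
      simpa using this)
    have hac : a ≠ c := h.ne
    have hsplit : (((Walk.cons h q).edges.filter (fun e => decide (v ∈ e))).map f).sum
        = (if v ∈ s(a,c) then alt k else 0)
          + ((q.edges.filter (fun e => decide (v ∈ e))).map f).sum := by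
      by_cases hv : v ∈ s(a,c) <;>
        simp [Walk.edges_cons, List.filter_cons, hv, ha]
    rw [hsplit, hq]
    by_cases hlen : 0 < q.length
    · have e1 : k + 1 + q.length - 1 = k + (q.length + 1) - 1 := by omega
      have e2 : k + (q.length + 1) - 1 = k + q.length := by omega
      simp only [Walk.length_cons, hlen, and_true, Nat.succ_pos, e1, e2, Sym2.mem_iff]
      by_cases hva : v = a <;> by_cases hvc : v = c <;>
        simp [hva, hvc, alt_succ, hac] <;> (try (intro h'; exact absurd h'.symm hac))
    · have h0 : q.length = 0 := by omega
      have : c = b := Walk.eq_of_length_eq_zero h0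
      subst this
      simp only [h0, Walk.length_cons, Nat.lt_irrefl, and_false, if_false, add_zero,
        Nat.zero_add, Nat.succ_pos, and_true, Nat.add_sub_cancel, Sym2.mem_iff]
      by_cases hva : v = a <;> by_cases hvc : v = c <;>
        simp [hva, hvc, hac] <;> (try (intro h'; exact absurd h'.symm hac))

private lemma count_incid_parity {G : SimpleGraph V} (v : V) :
    ∀ {a b : V} (p : G.Walk a b),
      (p.edges.countP (fun e => decide (v ∈ e))) % 2 =
        ((if v = a then 1 else 0) + (if v = b then 1 else 0)) % 2 := by
  intro a b p
  induction p with
  | nil => rename_i u; by_cases h : v = u <;> simp [h]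
  | @cons a c b h q ih =>
    have hac : a ≠ c := h.ne
    have hvac : ¬(v = a ∧ v = c) := fun ⟨h1, h2⟩ => hac (h1.symm.trans h2)
    simp only [Walk.edges_cons, List.countP_cons, decide_eq_true_eq, Sym2.mem_iff]
    split_ifs at ih ⊢ <;> first | omega | tauto

private lemma card_filter_eq_countP {α : Type*} [DecidableEq α] (l : List α) (hl : l.Nodup)
    (P : α → Prop) [DecidablePred P] :
    (l.toFinset.filter (fun e => P e)).card = l.countP (fun e => decide (P e)) := by
  rw [List.countP_eq_length_filter, ← List.toFinset_card_of_nodup (hl.filter _)]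
  congr 1
  rw [List.toFinset_filter]
  ext e
  simp

private lemma sum_toFinset_eq {α : Type*} [DecidableEq α] (f : α → ℤ) :
    ∀ (l : List α), l.Nodup → l.toFinset.sum f = (l.map f).sum := by
  intro l
  induction l with
  | nil => simp
  | cons a t ih =>
    intro h
    rw [List.toFinset_cons, Finset.sum_insert (by simp [List.nodup_cons.mp h |>.1]),
      List.map_cons, List.sum_cons, ih (List.nodup_cons.mp h).2]

variable [Fintype V]

private theorem exists_eulerian (G : SimpleGraph V) [DecidableRel G.Adj]
    (hconn : G.Connected) (heven : ∀ v, Even (G.degree v)) :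
    ∃ (u : V) (p : G.Walk u u), p.IsEulerian := by
  classical
  set S : Set ℕ := {n | ∃ (u : V) (p : G.Walk u u), p.IsTrail ∧ p.length = n} with hS
  obtain ⟨u0⟩ := hconn.nonempty
  have hne : S.Nonempty := ⟨0, u0, Walk.nil, by simp [Walk.isTrail_def], rfl⟩
  have hbdd : BddAbove S := by
    refine ⟨Fintype.card (Sym2 V), ?_⟩
    rintro n ⟨u, p, hp, rfl⟩
    rw [← Walk.length_edges]
    exact hp.edges_nodup.length_le_card
  obtain ⟨u, p, hp, hlen⟩ := Nat.sSup_mem hne hbdd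
  refine ⟨u, p, ?_⟩
  by_contra hnot
  rw [isEulerian_iff] at hnot
  push_neg at hnot
  obtain ⟨e0, he0, he0'⟩ := hnot hp
  have hkey : ∃ x ∈ p.support, ∃ y, G.Adj x y ∧ s(x, y) ∉ p.edges := by
    by_contra hno
    push_neg at hno
    have step : ∀ {a b : V} (w : G.Walk a b), b ∈ p.support → a ∈ p.support := by
      intro a b w
      induction w with
      | nil => exact id
      | @cons a c b h q ih =>
        intro hb
        exact p.snd_mem_support_of_mem_edges (hno c (ih hb) a h.symm)
    have hsupp : ∀ v, v ∈ p.support := fun v =>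
      step (hconn v u).some p.start_mem_support
    induction e0 with
    | _ a b => exact he0' (hno a (hsupp a) b he0)
  obtain ⟨x, hx, y, hadj, hxy⟩ := hkey
  set q := p.rotate x hx with hqdef
  have hperm : List.Perm q.edges p.edges := (p.rotate_edges x hx).perm
  have hq : q.IsTrail := ⟨hperm.nodup_iff.mpr hp.edges_nodup⟩
  have hqlen : q.length = p.length := by
    rw [← Walk.length_edges, ← Walk.length_edges]; exact hperm.length_eq
  have hqmem : ∀ e, e ∈ q.edges ↔ e ∈ p.edges := fun e => hperm.mem_iff
  set ES : Set (Sym2 V) := {e : Sym2 V | e ∈ q.edges} with hESdef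
  set G' := G.deleteEdges ES with hG'def
  have hG'adj : ∀ a b, G'.Adj a b ↔ G.Adj a b ∧ s(a, b) ∉ q.edges := by
    intro a b; rw [hG'def, deleteEdges_adj]; rfl
  have hG'mem : ∀ e, e ∈ G'.edgeSet ↔ e ∈ G.edgeSet ∧ e ∉ q.edges := by
    intro e; rw [hG'def, edgeSet_deleteEdges]; rfl
  letI : DecidableRel G'.Adj := fun a b => decidable_of_iff _ (hG'adj a b).symm
  have hcount_even : ∀ v, Even (q.edges.countP (fun e => decide (v ∈ e))) := by
    intro v
    have h2 := count_incid_parity v q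
    rw [Nat.even_iff]
    by_cases hvx : v = x <;> simp [hvx] at h2 ⊢ <;> omega
  have hdegsplit : ∀ v, G.degree v = G'.degree v + q.edges.countP (fun e => decide (v ∈ e)) := by
    intro v
    rw [← G.card_incidenceFinset_eq_degree, ← G'.card_incidenceFinset_eq_degree]
    have hsplit : G.incidenceFinset v =
        G'.incidenceFinset v ∪ (q.edges.toFinset.filter (fun e => v ∈ e)) := by
      ext e
      simp only [mem_incidenceFinset, Finset.mem_union, Finset.mem_filter, List.mem_toFinset]
      constructor
      · rintro ⟨he, hv⟩
        by_cases hq : e ∈ q.edges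
        · exact Or.inr ⟨hq, hv⟩
        · exact Or.inl ⟨(hG'mem e).mpr ⟨he, hq⟩, hv⟩
      · rintro (⟨he, hv⟩ | ⟨he, hv⟩)
        · exact ⟨((hG'mem e).mp he).1, hv⟩
        · exact ⟨q.edges_subset_edgeSet he, hv⟩
    have hdisj : Disjoint (G'.incidenceFinset v) (q.edges.toFinset.filter (fun e => v ∈ e)) := by
      rw [Finset.disjoint_left]
      intro e he1 he2
      simp only [Finset.mem_filter, List.mem_toFinset] at he2
      exact (((hG'mem e).mp ((mem_incidenceFinset _ _ _).mp he1).1).2) he2.1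
    rw [hsplit, Finset.card_union_of_disjoint hdisj]
    congr 1
    exact card_filter_eq_countP _ hq.edges_nodup _
  have hG'even : ∀ v, Even (G'.degree v) := by
    intro v
    have h1 := heven v
    have h2 := hcount_even v
    have h3 := hdegsplit v
    rw [Nat.even_iff] at h1 h2 ⊢
    omega
  have hxyG' : G'.Adj x y := (hG'adj x y).mpr ⟨hadj, fun h => hxy ((hqmem _).mp h)⟩
  set T : Set ℕ := {n | ∃ (z : V) (r : G'.Walk x z), r.IsTrail ∧ r.length = n} with hT
  have hTne : T.Nonempty := ⟨0, x, Walk.nil, by simp [Walk.isTrail_def], rfl⟩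
  have hTbdd : BddAbove T := by
    refine ⟨Fintype.card (Sym2 V), ?_⟩
    rintro n ⟨z, r, hr, rfl⟩
    rw [← Walk.length_edges]
    exact hr.edges_nodup.length_le_card
  obtain ⟨z, r, hr, hrlen⟩ := Nat.sSup_mem hTne hTbdd
  have hrpos : 0 < r.length := by
    have h1 : (1 : ℕ) ∈ T :=
      ⟨y, Walk.cons hxyG' Walk.nil, by simp [Walk.isTrail_def], rfl⟩
    have := le_csSup hTbdd h1
    omega
  have hmax : ∀ w, G'.Adj z w → s(z, w) ∈ r.edges := by
    intro w hw
    by_contra hmem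
    have hnd : (r.concat hw).edges.Nodup := by
      rw [Walk.edges_concat, List.concat_eq_append]
      refine hr.edges_nodup.append (List.nodup_singleton _) ?_
      intro e he1 he2
      simp only [List.mem_singleton] at he2
      subst he2
      exact hmem he1
    have h1 : r.length + 1 ∈ T :=
      ⟨w, r.concat hw, ⟨hnd⟩, by rw [Walk.length_concat]⟩
    have := le_csSup hTbdd h1
    omega
  have hfin : r.edges.toFinset.filter (fun e => z ∈ e) = G'.incidenceFinset z := by
    ext e
    simp only [Finset.mem_filter, List.mem_toFinset, mem_incidenceFinset]
    constructor
    · rintro ⟨he, hv⟩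
      exact ⟨r.edges_subset_edgeSet he, hv⟩
    · rintro ⟨he, hv⟩
      refine ⟨?_, hv⟩
      induction e with
      | _ a b =>
        rcases Sym2.mem_iff.mp hv with rfl | rfl
        · exact hmax b ((G'.mem_edgeSet).mp he)
        · rw [Sym2.eq_swap]
          exact hmax a ((G'.mem_edgeSet).mp he).symm
  have hzx : z = x := by
    by_contra hzx
    have h1 := count_incid_parity z r
    have h2 : r.edges.countP (fun e => decide (z ∈ e)) = G'.degree z := by
      rw [← G'.card_incidenceFinset_eq_degree, ← hfin]
      exact (card_filter_eq_countP _ hr.edges_nodup _).symm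
    have h3 := hG'even z
    rw [Nat.even_iff] at h3
    simp [hzx] at h1
    omega
  subst hzx
  have hrsub : ∀ e ∈ r.edges, e ∈ G.edgeSet := fun e he =>
    ((hG'mem e).mp (r.edges_subset_edgeSet he)).1
  set r' := r.transfer G hrsub with hr'def
  have hr'edges : r'.edges = r.edges := Walk.edges_transfer r hrsub
  set w := q.append r' with hwdef
  have hwtrail : w.IsTrail := by
    constructor
    rw [Walk.edges_append, hr'edges]
    refine hq.edges_nodup.append hr.edges_nodup ?_
    intro e he1 he2
    exact ((hG'mem e).mp (r.edges_subset_edgeSet he2)).2 he1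
  have hwlen : w.length ∈ S := ⟨z, w, hwtrail, rfl⟩
  have hle := le_csSup hbdd hwlen
  rw [hwdef, Walk.length_append, Walk.length_transfer, hqlen, hlen] at hle
  omega

private lemma edgeSum_eq (G : SimpleGraph V) [DecidableRel G.Adj] (f : Sym2 V → ℤ) :
    edgeSum G f = ∑ e ∈ G.edgeFinset, f e := by
  rw [edgeSum, ← coe_edgeFinset, finsum_mem_coe_finset]

private lemma vertexSum_eq (G : SimpleGraph V) [DecidableRel G.Adj] (f : Sym2 V → ℤ) (v : V) :
    vertexSum G f v = ∑ e ∈ G.incidenceFinset v, f e := by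
  rw [vertexSum]
  have h : {e ∈ G.edgeSet | v ∈ e} = ↑(G.incidenceFinset v) := by
    simp only [incidenceFinset, Set.coe_toFinset]; rfl
  rw [h, finsum_mem_coe_finset]

private lemma sum_pm_parity (s : Finset (Sym2 V)) (f : Sym2 V → ℤ)
    (h : ∀ e ∈ s, f e = 1 ∨ f e = -1) :
    Even (∑ e ∈ s, f e - s.card) := by
  have h2 : (∑ e ∈ s, f e) - (s.card : ℤ) = ∑ e ∈ s, (f e - 1) := by
    rw [Finset.sum_sub_distrib]; simp
  rw [h2]
  apply Finset.even_sum
  intro e he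
  rcases h e he with h' | h' <;> simp [h']

private lemma double_count (G : SimpleGraph V) [DecidableRel G.Adj] (f : Sym2 V → ℤ) :
    ∑ v, vertexSum G f v = 2 * edgeSum G f := by
  simp_rw [vertexSum_eq, edgeSum_eq, incidenceFinset_eq_filter, Finset.sum_filter]
  rw [Finset.sum_comm, Finset.mul_sum]
  refine Finset.sum_congr rfl ?_
  intro e he
  rw [← Finset.sum_filter]
  have hd : ¬ e.IsDiag := G.not_isDiag_of_mem_edgeSet (by simpa using he)
  induction e with
  | _ a b =>
    have hab : a ≠ b := by simpa using hd
    have : Finset.univ.filter (fun v => v ∈ s(a,b)) = {a, b} := by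
      ext v; simp [Sym2.mem_iff]
    rw [this, Finset.sum_pair hab]
    ring

private lemma vertexSum_nonpos (G : SimpleGraph V) [DecidableRel G.Adj] (f : Sym2 V → ℤ) (v : V)
    (heven : Even (G.degree v)) (h1 : ∀ e ∈ G.edgeSet, f e = 1 ∨ f e = -1)
    (hle : vertexSum G f v ≤ 1) : vertexSum G f v ≤ 0 := by
  have hpar : Even (vertexSum G f v - (G.degree v : ℤ)) := by
    rw [vertexSum_eq, ← G.card_incidenceFinset_eq_degree]
    exact sum_pm_parity _ f (fun e he =>
      h1 e (G.incidenceSet_subset v (by simpa [mem_incidenceFinset] using he)))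
  have hev : Even (vertexSum G f v) := by
    have h2 : Even ((G.degree v : ℤ)) := by exact_mod_cast heven.natCast
    obtain ⟨t, ht⟩ := hpar
    obtain ⟨u, hu⟩ := h2
    exact ⟨t + u, by omega⟩
  obtain ⟨t, ht⟩ := hev; omega

private lemma exists_good_f (G : SimpleGraph V) [DecidableRel G.Adj]
    (hconn : G.Connected) (heven : ∀ v, Even (G.degree v)) :
    ∃ f : Sym2 V → ℤ, (∀ e ∈ G.edgeSet, f e = 1 ∨ f e = -1) ∧
      (∀ v, vertexSum G f v ≤ 0) ∧
      edgeSum G f = if G.edgeSet.ncard % 2 = 0 then 0 else -1 := by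
  obtain ⟨u, p, hE⟩ := exists_eulerian G hconn heven
  have hp : p.IsTrail := hE.isTrail
  set L := p.edges with hL
  set f : Sym2 V → ℤ := fun e => alt (L.idxOf e) with hf
  have hidx : ∀ i (h : i < L.length), f (L.get ⟨i, h⟩) = alt (0 + i) := by
    intro i h
    simp only [hf, List.get_eq_getElem]
    rw [hp.edges_nodup.idxOf_getElem, Nat.zero_add]
  have hEF : G.edgeFinset = L.toFinset := by
    rw [← hE.edgesFinset_eq]
    exact List.toFinset_eq hp.edges_nodup
  have hm : G.edgeSet.ncard = p.length := by
    rw [← coe_edgeFinset, Set.ncard_coe_finset, hEF,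
      List.toFinset_card_of_nodup hp.edges_nodup]
    exact Walk.length_edges p
  refine ⟨f, fun e _ => alt_abs _, ?_, ?_⟩
  · intro v
    rw [vertexSum_eq, incidenceFinset_eq_filter, hEF]
    have hfil : L.toFinset.filter (fun e => v ∈ e) =
        (L.filter (fun e => decide (v ∈ e))).toFinset := by
      rw [List.toFinset_filter]; ext e; simp
    rw [hfil, sum_toFinset_eq f _ (hp.edges_nodup.filter _),
      walk_alt_vsum v f p 0 hidx]
    have h0 : alt 0 = -1 := by simp [alt]
    by_cases hcond : v = u ∧ 0 < p.length
    · rw [if_pos hcond, if_pos hcond, h0]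
      rcases alt_abs (0 + p.length - 1) with h' | h' <;> rw [h'] <;> norm_num
    · rw [if_neg hcond, if_neg hcond]; norm_num
  · rw [edgeSum_eq, hEF, sum_toFinset_eq f _ hp.edges_nodup,
      list_alt_sum f L 0 hidx, hm]
    rw [show L.length = p.length from Walk.length_edges p]
    split_ifs with h <;> simp [alt]

end Dec

theorem eulerian_betaS [Fintype V] (G : SimpleGraph V) [DecidableRel G.Adj]
    (hconn : G.Connected) (heven : ∀ v, Even (G.degree v)) :
    (Even G.edgeSet.ncard → betaS G (Fintype.card V) = 0) ∧
    (Odd G.edgeSet.ncard → betaS G (Fintype.card V) = -1) := by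
  classical
  obtain ⟨f0, hf01, hf02, hf03⟩ := exists_good_f G hconn heven
  set m := G.edgeSet.ncard with hm
  set t : ℤ := if m % 2 = 0 then 0 else -1 with ht
  have hmem : t ∈ {s : ℤ | ∃ f, IsSignedSubmatching G f (Fintype.card V) ∧ s = edgeSum G f} := by
    refine ⟨f0, ⟨hf01, ?_⟩, hf03.symm⟩
    have hU : {v | vertexSum G f0 v ≤ 1} = Set.univ :=
      Set.eq_univ_of_forall (fun v => le_trans (hf02 v) (by norm_num))
    rw [hU, Set.ncard_univ, Nat.card_eq_fintype_card]
  have hub : ∀ s ∈ {s : ℤ | ∃ f, IsSignedSubmatching G f (Fintype.card V) ∧ s = edgeSum G f},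
      s ≤ t := by
    rintro s ⟨f, ⟨h1, h2⟩, rfl⟩
    have hall : ∀ v, vertexSum G f v ≤ 1 := by
      have hset : {v | vertexSum G f v ≤ 1} = Set.univ :=
        Set.eq_of_subset_of_ncard_le (Set.subset_univ _)
          (by rwa [Set.ncard_univ, Nat.card_eq_fintype_card]) Set.finite_univ
      intro v
      have : v ∈ {v | vertexSum G f v ≤ 1} := by rw [hset]; trivial
      exact this
    have hnp : ∀ v, vertexSum G f v ≤ 0 := fun v =>
      vertexSum_nonpos G f v (heven v) h1 (hall v)
    have h2e : 2 * edgeSum G f ≤ 0 := by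
      rw [← double_count G f]
      exact Finset.sum_nonpos (fun v _ => hnp v)
    have hpar : Even (edgeSum G f - (m : ℤ)) := by
      have hsp := sum_pm_parity G.edgeFinset f
        (fun e he => h1 e (by rwa [← mem_edgeFinset]))
      rw [← edgeSum_eq] at hsp
      have hcard : (G.edgeFinset.card : ℤ) = (m : ℤ) := by
        rw [hm, ← coe_edgeFinset, Set.ncard_coe_finset]
      rwa [hcard] at hsp
    obtain ⟨a, ha⟩ := hpar
    rw [ht]
    split_ifs with h <;> omega
  have hbeta : betaS G (Fintype.card V) = t := by
    rw [betaS]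
    exact le_antisymm (csSup_le ⟨t, hmem⟩ hub) (le_csSup ⟨t, hub⟩ hmem)
  constructor
  · intro hEv
    rw [hbeta, ht, if_pos (Nat.even_iff.mp hEv)]
  · intro hOdd
    rw [hbeta, ht, if_neg (by rw [Nat.odd_iff.mp hOdd]; norm_num)]
end

section
/- Let G be a non-Eulerian connected simple graph of order n with exactly 2k odd-degree vertices, and let P be any complete partition of E(G) into k trails. If f : E(G) → {−1, 1} assigns values +1 and −1 alternately along each trail of P (starting each trail with +1 when the trail has odd length), then f is a signed submatching of G and f(E(G)) = τ(P), the number of odd-length trails in P. Consequently β_S^n(G) ≥ η(G). -/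
open Finset

variable {V : Type*}

/-- `P` is a complete partition of `E(G)` into `k` edge-disjoint trails. -/
def IsCompletePartition (G : SimpleGraph V) {k : ℕ}
    (P : Fin k → Σ u : V, Σ v : V, G.Walk u v) : Prop :=
  (∀ i, (P i).2.2.IsTrail) ∧
  (∀ i j, i ≠ j → ∀ e, e ∈ (P i).2.2.edges → e ∉ (P j).2.2.edges) ∧
  (∀ e, e ∈ G.edgeSet ↔ ∃ i, e ∈ (P i).2.2.edges)

/-- `τ(P)`: the number of trails in the partition with an odd number of edges. -/
noncomputable def tauP {G : SimpleGraph V} {k : ℕ}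
    (P : Fin k → Σ u : V, Σ v : V, G.Walk u v) : ℕ :=
  {i | Odd (P i).2.2.length}.ncard

/-- `η(G)`: the maximum of `τ(P)` over all complete partitions of `G` into `k` trails. -/
noncomputable def eta (G : SimpleGraph V) (k : ℕ) : ℕ :=
  sSup {t : ℕ | ∃ P : Fin k → Σ u : V, Σ v : V, G.Walk u v,
    IsCompletePartition G P ∧ t = tauP P}


section AuxForProof
open List
variable {V : Type*}


lemma alt_list_sum {α : Type*} (f : α → ℤ) : ∀ (l : List α) (a : α),
    List.Chain' (fun x y => f y = - f x) (a :: l) →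
    ((a :: l).map f).sum = if Odd l.length then 0 else f a
  | [], a, _ => by simp
  | [b], a, h => by
    have hb : f b = - f a := (List.isChain_cons_cons.mp h).1
    simp [hb]
  | b :: c :: t, a, h => by
    have h2 := (List.isChain_cons_cons.mp h).2
    have hb : f b = - f a := (List.isChain_cons_cons.mp h).1
    have hc : f c = - f b := (List.isChain_cons_cons.mp h2).1
    have ih := alt_list_sum f t c h2.tail
    simp only [List.map_cons, List.sum_cons] at ih ⊢
    rw [ih, hc, hb]
    have hl : (b :: c :: t).length = t.length + 2 := rfl
    rw [hl]
    by_cases ho : Odd t.length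
    · rw [if_pos ho, if_pos (by rw [Nat.odd_iff] at ho ⊢; omega)]; ring
    · rw [if_neg ho, if_neg (by rw [Nat.odd_iff] at ho ⊢; omega)]; ring

lemma walk_countP_even [DecidableEq V] {G : SimpleGraph V} (v : V) :
    ∀ {u w : V} (W : G.Walk u w),
      Even (W.edges.countP (fun e => decide (v ∈ e))) ↔ ((v = u) ↔ (v = w))
  | u, _, SimpleGraph.Walk.nil => by simp
  | u, w, @SimpleGraph.Walk.cons _ _ _ x _ h p => by
    have ih := walk_countP_even v p
    have hne : u ≠ x := h.ne
    rw [SimpleGraph.Walk.edges_cons, List.countP_cons]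
    by_cases h1 : v = u <;> by_cases h2 : v = x
    · exact absurd (h1.symm.trans h2) hne
    · have hd : decide (v ∈ s(u,x)) = true := by simp [Sym2.mem_iff, h1]
      rw [hd, if_pos rfl, Nat.even_add_one, ih]
      simp [h1, h2, hne, Ne.symm hne]
    · have hd : decide (v ∈ s(u,x)) = true := by simp [Sym2.mem_iff, h2]
      rw [hd, if_pos rfl, Nat.even_add_one, ih]
      simp [h1, h2, hne, Ne.symm hne]
    · have hd : decide (v ∈ s(u,x)) = false := by simp [Sym2.mem_iff, h1, h2]
      rw [hd, if_neg (by simp), Nat.add_zero, ih]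
      simp [h1, h2, hne, Ne.symm hne]

lemma walk_incidence_sum [DecidableEq V] {G : SimpleGraph V} (f : Sym2 V → ℤ) (v : V) :
    ∀ {u w : V} (W : G.Walk u w), List.Chain' (fun a b => f b = - f a) W.edges →
      ((W.edges.filter (fun e => decide (v ∈ e))).map f).sum =
        (if v = u then W.edges.head?.elim 0 f else 0) +
        (if v = w then W.edges.getLast?.elim 0 f else 0)
  | u, _, SimpleGraph.Walk.nil, _ => by simp
  | u, w, @SimpleGraph.Walk.cons _ _ _ x _ h p, hch => by
    rw [SimpleGraph.Walk.edges_cons] at hch ⊢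
    have hne : u ≠ x := h.ne
    have ih := walk_incidence_sum f v p hch.tail
    rcases hp : p.edges with _ | ⟨b, t⟩
    · have hxw : x = w := SimpleGraph.Walk.eq_of_length_eq_zero
        (by rw [← SimpleGraph.Walk.length_edges, hp]; rfl)
      subst hxw
      by_cases h1 : v = u <;> by_cases h2 : v = x
      · exact absurd (h1.symm.trans h2) hne
      · simp [h1, h2, Sym2.mem_iff, List.filter_cons, hne, Ne.symm hne]
      · simp [h1, h2, Sym2.mem_iff, List.filter_cons, hne, Ne.symm hne]
      · simp [h1, h2, Sym2.mem_iff, List.filter_cons, hne, Ne.symm hne]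
    · rw [hp] at ih hch
      have hb : f b = - f (s(u, x)) := (List.isChain_cons_cons.mp hch).1
      rw [List.filter_cons, List.getLast?_cons_cons, List.head?_cons]
      by_cases h1 : v = u <;> by_cases h2 : v = x
      · exact absurd (h1.symm.trans h2) hne
      · have hd : decide (v ∈ s(u,x)) = true := by simp [Sym2.mem_iff, h1]
        rw [hd, if_pos rfl]
        simp only [List.map_cons, List.sum_cons, ih, List.head?_cons, Option.elim_some]
        rw [if_pos h1, if_neg h2]
        ring
      · have hd : decide (v ∈ s(u,x)) = true := by simp [Sym2.mem_iff, h2]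
        rw [hd, if_pos rfl]
        simp only [List.map_cons, List.sum_cons, ih, List.head?_cons, Option.elim_some]
        rw [if_neg h1, if_pos h2, hb]
        ring
      · have hd : decide (v ∈ s(u,x)) = false := by simp [Sym2.mem_iff, h1, h2]
        rw [hd, if_neg (by simp)]
        rw [ih, if_neg h1, if_neg h2]

lemma countP_eq_sum_map {α : Type*} (p : α → Bool) : ∀ l : List α,
    l.countP p = (l.map (fun a => if p a then 1 else 0)).sum
  | [] => rfl
  | a :: l => by
    rw [List.countP_cons, countP_eq_sum_map p l]; simp [Nat.add_comm]

lemma filter_map_sum {α : Type*} (p : α → Bool) (f : α → ℤ) : ∀ l : List α,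
    ((l.filter p).map f).sum = (l.map (fun a => if p a then f a else 0)).sum
  | [] => rfl
  | a :: l => by
    rw [List.filter_cons]
    split <;> simp [filter_map_sum p f l, *]

lemma key_lemma [Fintype V] [DecidableEq V] (G : SimpleGraph V) [DecidableRel G.Adj]
    (k : ℕ) (hodd : {v | Odd (G.degree v)}.ncard = 2 * k)
    (P : Fin k → Σ u : V, Σ v : V, G.Walk u v) (hP : IsCompletePartition G P)
    (f : Sym2 V → ℤ) (hf1 : ∀ e ∈ G.edgeSet, f e = 1 ∨ f e = -1)
    (halt : ∀ i, List.Chain' (fun a b => f b = - f a) (P i).2.2.edges)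
    (hstart : ∀ i, Odd (P i).2.2.length →
      ∀ h : (P i).2.2.edges ≠ [], f ((P i).2.2.edges.head h) = 1) :
    (∀ v, vertexSum G f v ≤ 1) ∧ edgeSum G f = (tauP P : ℤ) := by
  have hnd : ∀ i, (P i).2.2.edges.Nodup := fun i => (hP.1 i).edges_nodup
  have hcov : G.edgeFinset = Finset.univ.biUnion (fun i => (P i).2.2.edges.toFinset) := by
    ext e
    simp [SimpleGraph.mem_edgeFinset, hP.2.2 e]
  have hdisj : ((Finset.univ : Finset (Fin k)) : Set (Fin k)).PairwiseDisjoint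
      (fun i => (P i).2.2.edges.toFinset) := by
    intro i _ j _ hij
    rw [Function.onFun, Finset.disjoint_left]
    intro e he1 he2
    exact hP.2.1 i j hij e (by simpa using he1) (by simpa using he2)
  have hsplit : ∀ (M : Type) (_ : AddCommMonoid M) (g : Sym2 V → M),
      ∑ e ∈ G.edgeFinset, g e = ∑ i, ((P i).2.2.edges.map g).sum := by
    intro M _ g
    rw [hcov, Finset.sum_biUnion hdisj]
    exact Finset.sum_congr rfl fun i _ => List.sum_toFinset g (hnd i)
  have hmemE : ∀ i, ∀ e ∈ (P i).2.2.edges, e ∈ G.edgeSet := by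
    intro i e he
    exact (hP.2.2 e).mpr ⟨i, he⟩
  have hfle : ∀ e ∈ G.edgeSet, f e ≤ 1 := by
    intro e he; rcases hf1 e he with h | h <;> omega
  constructor
  · -- vertexSum bound
    intro v
    -- express vertexSum as a finset sum
    have hset : {e ∈ G.edgeSet | v ∈ e} =
        ↑(G.edgeFinset.filter (fun e => v ∈ e)) := by
      ext e
      simp [SimpleGraph.mem_edgeFinset]
    have hvs : vertexSum G f v =
        ∑ i, (((P i).2.2.edges.filter (fun e => decide (v ∈ e))).map f).sum := by
      rw [vertexSum, hset, finsum_mem_coe_finset, Finset.sum_filter,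
        hsplit ℤ inferInstance (fun e => if v ∈ e then f e else 0)]
      refine Finset.sum_congr rfl fun i _ => ?_
      rw [filter_map_sum]
      simp
    rw [hvs]
    -- endpoint count
    set es : V → ℕ := fun v => ∑ i,
      ((if v = (P i).1 then 1 else 0) + (if v = (P i).2.1 then 1 else 0)) with hes
    have hbound : ∀ i, (((P i).2.2.edges.filter (fun e => decide (v ∈ e))).map f).sum ≤
        ((if v = (P i).1 then 1 else 0) + (if v = (P i).2.1 then 1 else 0) : ℤ) := by
      intro i
      rw [walk_incidence_sum f v (P i).2.2 (halt i)]
      have h1 : (P i).2.2.edges.head?.elim 0 f ≤ 1 := by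
        rcases hh : (P i).2.2.edges.head? with _ | e
        · simp
        · simp only [Option.elim_some]
          exact hfle e (hmemE i e (List.mem_of_mem_head? hh))
      have h2 : (P i).2.2.edges.getLast?.elim 0 f ≤ 1 := by
        rcases hh : (P i).2.2.edges.getLast? with _ | e
        · simp
        · simp only [Option.elim_some]
          exact hfle e (hmemE i e (List.mem_of_mem_getLast? hh))
      gcongr ?_ + ?_ <;> split <;> simp [h1, h2]
    calc ∑ i, (((P i).2.2.edges.filter (fun e => decide (v ∈ e))).map f).sum
        ≤ ∑ i, ((if v = (P i).1 then 1 else 0) + (if v = (P i).2.1 then 1 else 0) : ℤ) :=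
          Finset.sum_le_sum fun i _ => hbound i
      _ = (es v : ℤ) := by
          rw [hes]; push_cast; rfl
      _ ≤ 1 := by
          -- the counting argument
          have hdeg : ∀ x, G.degree x =
              ∑ i, ((P i).2.2.edges.countP (fun e => decide (x ∈ e))) := by
            intro x
            rw [← SimpleGraph.card_incidenceFinset_eq_degree,
              SimpleGraph.incidenceFinset_eq_filter, Finset.card_filter,
              hsplit ℕ inferInstance (fun e => if x ∈ e then 1 else 0)]
            refine Finset.sum_congr rfl fun i _ => ?_
            rw [countP_eq_sum_map]
            simp
          have hpar : ∀ x, es x % 2 = G.degree x % 2 := by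
            intro x
            rw [hdeg x, hes]
            simp only
            rw [Finset.sum_nat_mod, Finset.sum_nat_mod Finset.univ 2
              (fun i => (P i).2.2.edges.countP (fun e => decide (x ∈ e)))]
            congr 1
            refine Finset.sum_congr rfl fun i _ => ?_
            have hiff := walk_countP_even x (P i).2.2
            rw [Nat.even_iff] at hiff
            by_cases h1 : x = (P i).1 <;> by_cases h2 : x = (P i).2.1
            · rw [if_pos h1, if_pos h2]
              have hc := hiff.mpr (iff_of_true h1 h2)
              omega
            · rw [if_pos h1, if_neg h2]
              have hc : ¬(List.countP (fun e => decide (x ∈ e)) (P i).2.2.edges % 2 = 0) :=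
                fun hc => h2 ((hiff.mp hc).mp h1)
              omega
            · rw [if_neg h1, if_pos h2]
              have hc : ¬(List.countP (fun e => decide (x ∈ e)) (P i).2.2.edges % 2 = 0) :=
                fun hc => h1 ((hiff.mp hc).mpr h2)
              omega
            · rw [if_neg h1, if_neg h2]
              have hc := hiff.mpr (iff_of_false h1 h2)
              omega
          have hestot : ∑ x, es x = 2 * k := by
            rw [hes]
            simp only
            rw [Finset.sum_comm]
            have : ∀ i, ∑ x, ((if x = (P i).1 then 1 else 0) +
                (if x = (P i).2.1 then 1 else 0)) = 2 := by
              intro i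
              rw [Finset.sum_add_distrib]
              simp [Finset.sum_ite_eq']
            rw [Finset.sum_congr rfl fun i _ => this i]
            simp [Finset.sum_const, mul_comm]
          set T := Finset.univ.filter (fun x => Odd (G.degree x)) with hTdef
          have hT : T.card = 2 * k := by
            rw [← hodd, Set.ncard_eq_toFinset_card', Set.toFinset_setOf]
          have hes1 : ∀ x ∈ T, 1 ≤ es x := by
            intro x hx
            rw [hTdef, Finset.mem_filter] at hx
            have := hpar x
            rw [Nat.odd_iff] at hx
            omega
          have hSumT : 2 * k ≤ ∑ x ∈ T, es x := by
            calc 2 * k = T.card • 1 := by rw [hT]; simp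
              _ ≤ ∑ x ∈ T, es x := Finset.card_nsmul_le_sum T es 1 hes1
          have hkey : es v ≤ 1 := by
            by_contra hlt
            push_neg at hlt
            by_cases hv : v ∈ T
            · have hstrict : ∑ x ∈ T, (fun _ => 1) x < ∑ x ∈ T, es x :=
                Finset.sum_lt_sum hes1 ⟨v, hv, by omega⟩
              have hle : ∑ x ∈ T, es x ≤ ∑ x, es x :=
                Finset.sum_le_sum_of_subset (Finset.subset_univ T)
              simp only [Finset.sum_const, smul_eq_mul, mul_one] at hstrict
              omega
            · have hins : ∑ x ∈ insert v T, es x ≤ ∑ x, es x :=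
                Finset.sum_le_sum_of_subset (Finset.subset_univ _)
              rw [Finset.sum_insert hv] at hins
              have hle2 : ∑ x ∈ T, es x ≤ ∑ x, es x - es v := by omega
              omega
          exact_mod_cast hkey
  · -- edge sum
    have hes : edgeSum G f = ∑ e ∈ G.edgeFinset, f e := by
      rw [edgeSum, ← SimpleGraph.coe_edgeFinset, finsum_mem_coe_finset]
    have htrail : ∀ i, ((P i).2.2.edges.map f).sum =
        if Odd (P i).2.2.length then 1 else 0 := by
      intro i
      rcases hE : (P i).2.2.edges with _ | ⟨b, t⟩
      · have hlen : (P i).2.2.length = 0 := by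
          rw [← SimpleGraph.Walk.length_edges, hE]; rfl
        simp [hlen]
      · have hch : List.Chain' (fun x y => f y = - f x) (b :: t) := by
          rw [← hE]; exact halt i
        have hsum := alt_list_sum f t b hch
        have hlen : (P i).2.2.length = t.length + 1 := by
          rw [← SimpleGraph.Walk.length_edges, hE]; rfl
        rw [hsum, hlen]
        by_cases ho : Odd t.length
        · rw [if_pos ho, if_neg (by rw [Nat.odd_iff] at ho ⊢; omega)]
        · have hol : Odd (t.length + 1) := by rw [Nat.odd_iff] at ho ⊢; omega
          have hb : f b = 1 := by
            have hne : (P i).2.2.edges ≠ [] := by rw [hE]; simp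
            have := hstart i (by rw [hlen]; exact hol) hne
            rwa [show (P i).2.2.edges.head hne = b from by simp [hE]] at this
          rw [if_neg ho, if_pos hol, hb]
    rw [hes, hsplit ℤ inferInstance f, Finset.sum_congr rfl fun i _ => htrail i,
      Finset.sum_boole]
    have : tauP P = (Finset.univ.filter (fun i => Odd (P i).2.2.length)).card := by
      rw [tauP, Set.ncard_eq_toFinset_card', Set.toFinset_setOf]
    rw [this]

end AuxForProof

theorem alternating_on_partition_is_submatching [Fintype V] (G : SimpleGraph V)
    [DecidableRel G.Adj]
    (hconn : G.Connected) (hnotEuler : ¬ ∀ v, Even (G.degree v))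
    (k : ℕ) (hodd : {v | Odd (G.degree v)}.ncard = 2 * k)
    (P : Fin k → Σ u : V, Σ v : V, G.Walk u v) (hP : IsCompletePartition G P)
    (f : Sym2 V → ℤ) (hf1 : ∀ e ∈ G.edgeSet, f e = 1 ∨ f e = -1)
    (halt : ∀ i, List.Chain' (fun a b => f b = - f a) (P i).2.2.edges)
    (hstart : ∀ i, Odd (P i).2.2.length →
      ∀ h : (P i).2.2.edges ≠ [], f ((P i).2.2.edges.head h) = 1) :
    IsSignedSubmatching G f (Fintype.card V) ∧ edgeSum G f = (tauP P : ℤ) ∧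
    (eta G k : ℤ) ≤ betaS G (Fintype.card V) := by
  letI : DecidableEq V := Classical.decEq V
  have hcard : ∀ (g : Sym2 V → ℤ), (∀ v, vertexSum G g v ≤ 1) →
      Fintype.card V ≤ {v | vertexSum G g v ≤ 1}.ncard := by
    intro g hg
    have huniv : {v | vertexSum G g v ≤ 1} = Set.univ := Set.eq_univ_of_forall hg
    rw [huniv, Set.ncard_univ, Nat.card_eq_fintype_card]
  obtain ⟨hv1, hedge⟩ := key_lemma G k hodd P hP f hf1 halt hstart
  have hsub : IsSignedSubmatching G f (Fintype.card V) := ⟨hf1, hcard f hv1⟩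
  refine ⟨hsub, hedge, ?_⟩
  set S : Set ℤ := {s : ℤ | ∃ f, IsSignedSubmatching G f (Fintype.card V) ∧ s = edgeSum G f}
    with hS
  have hbdd : BddAbove S := by
    refine ⟨(G.edgeFinset.card : ℤ), ?_⟩
    rintro s ⟨g, hg, rfl⟩
    rw [edgeSum, ← SimpleGraph.coe_edgeFinset, finsum_mem_coe_finset]
    calc ∑ e ∈ G.edgeFinset, g e ≤ ∑ e ∈ G.edgeFinset, 1 :=
          Finset.sum_le_sum (fun e he => by
            rcases hg.1 e (by rwa [SimpleGraph.mem_edgeFinset] at he) with h | h <;> omega)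
      _ = (G.edgeFinset.card : ℤ) := by simp [mul_comm]
  have hmem : ∀ (P' : Fin k → Σ u : V, Σ v : V, G.Walk u v), IsCompletePartition G P' →
      ((tauP P' : ℤ)) ∈ S := by
    intro P' hP'
    set f' : Sym2 V → ℤ := fun e =>
      if h : ∃ i, e ∈ (P' i).2.2.edges then
        (-1) ^ ((P' h.choose).2.2.edges.idxOf e) else 1 with hf'
    have hval : ∀ i e, e ∈ (P' i).2.2.edges →
        f' e = (-1) ^ ((P' i).2.2.edges.idxOf e) := by
      intro i e he
      have hex : ∃ j, e ∈ (P' j).2.2.edges := ⟨i, he⟩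
      have hch : hex.choose = i := by
        by_contra hne
        exact hP'.2.1 _ _ hne e hex.choose_spec he
      rw [hf']
      simp only [dif_pos hex]
      exact congrArg (fun j : Fin k => ((-1 : ℤ)) ^ ((P' j).2.2.edges.idxOf e)) hch
    have hpm : ∀ e ∈ G.edgeSet, f' e = 1 ∨ f' e = -1 := by
      intro e he
      obtain ⟨i, hi⟩ := (hP'.2.2 e).mp he
      rw [hval i e hi]
      rcases Nat.even_or_odd ((P' i).2.2.edges.idxOf e) with h | h
      · left; exact h.neg_one_pow
      · right; exact h.neg_one_pow
    have hvalget : ∀ i (m : ℕ) (hm : m < (P' i).2.2.edges.length),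
        f' ((P' i).2.2.edges.get ⟨m, hm⟩) = (-1) ^ m := by
      intro i m hm
      have hnd := (hP'.1 i).edges_nodup
      rw [hval i _ (List.get_mem _ ⟨m, hm⟩), List.get_idxOf hnd]
    have halt' : ∀ i, List.Chain' (fun a b => f' b = - f' a) (P' i).2.2.edges := by
      intro i
      refine List.isChain_iff_getElem.mpr ?_
      intro j hj
      have e1 := hvalget i (j + 1) hj
      have e2 := hvalget i j (by omega)
      simp only [List.get_eq_getElem] at e1 e2
      rw [e1, e2]
      rw [pow_succ]
      ring
    have hstart' : ∀ i, Odd (P' i).2.2.length →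
        ∀ h : (P' i).2.2.edges ≠ [], f' ((P' i).2.2.edges.head h) = 1 := by
      intro i _ h
      have h0 : 0 < (P' i).2.2.edges.length := List.length_pos_iff.mpr h
      have hg := List.get_mk_zero h0
      rw [← hg, hvalget i 0 h0, pow_zero]
    obtain ⟨hv1', hedge'⟩ := key_lemma G k hodd P' hP' f' hpm halt' hstart'
    exact ⟨f', ⟨hpm, hcard f' hv1'⟩, hedge'.symm⟩
  have hbs : betaS G (Fintype.card V) = sSup S := rfl
  have h0 : (0 : ℤ) ≤ betaS G (Fintype.card V) :=
    le_trans (by positivity) (le_csSup hbdd (hmem P hP))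
  have heta : eta G k ≤ (betaS G (Fintype.card V)).toNat := by
    rw [eta]
    refine csSup_le ?_ ?_
    · exact ⟨tauP P, P, hP, rfl⟩
    rintro t ⟨P', hP', rfl⟩
    have hle := le_csSup hbdd (hmem P' hP')
    rw [← hbs] at hle
    have h2 := Int.toNat_of_nonneg h0
    omega
  calc (eta G k : ℤ) ≤ ((betaS G (Fintype.card V)).toNat : ℤ) := by exact_mod_cast heta
    _ = betaS G (Fintype.card V) := Int.toNat_of_nonneg h0
end

section
/- Let G be a non-Eulerian connected simple graph of order n and let f be a signed submatching of G attaining β_S^n(G) which, among all such optimal signed submatchings, maximizes |O_f(G)| where O_f(G) = {v : d(v) odd and f(E_G(v)) < 1}. Then f(E_G(v)) ≥ −1 for every vertex v of G. -/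
open Finset

variable {V : Type*}

set_option linter.unusedSectionVars false

namespace SignedProof

open SimpleGraph

variable [Fintype V] [DecidableEq V] {G : SimpleGraph V} [DecidableRel G.Adj] {f : Sym2 V → ℤ}

theorem edgeSum_eq (G : SimpleGraph V) [DecidableRel G.Adj] (f : Sym2 V → ℤ) :
    edgeSum G f = ∑ e ∈ G.edgeFinset, f e := by
  rw [edgeSum, ← finsum_mem_coe_finset, coe_edgeFinset]

theorem vertexSum_eq (G : SimpleGraph V) [DecidableRel G.Adj] (f : Sym2 V → ℤ) (v : V) :
    vertexSum G f v = ∑ e ∈ G.incidenceFinset v, f e := by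
  rw [vertexSum, ← finsum_mem_coe_finset]
  congr 1
  rw [incidenceFinset, Set.coe_toFinset]
  rfl

theorem vertexSum_parity (hf1 : ∀ e ∈ G.edgeSet, f e = 1 ∨ f e = -1) (v : V) :
    ∃ N : ℕ, vertexSum G f v = G.degree v - 2 * N := by
  classical
  rw [vertexSum_eq]
  set s := G.incidenceFinset v with hs
  have hsplit := Finset.sum_filter_add_sum_filter_not s (fun e => f e = 1) f
  have h1 : ∑ e ∈ s.filter (fun e => f e = 1), f e = (s.filter (fun e => f e = 1)).card := by
    rw [Finset.sum_congr rfl (fun e he => (Finset.mem_filter.mp he).2)]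
    simp
  have h2 : ∑ e ∈ s.filter (fun e => ¬ f e = 1), f e
      = -((s.filter (fun e => ¬ f e = 1)).card : ℤ) := by
    have hv : ∀ e ∈ s.filter (fun e => ¬ f e = 1), f e = -1 := by
      intro e he
      have hes := Finset.mem_filter.mp he
      have hE : e ∈ G.edgeSet := by
        have h' := hes.1
        rw [SimpleGraph.mem_incidenceFinset] at h'
        exact h'.1
      rcases hf1 e hE with h | h
      · exact absurd h hes.2
      · exact h
    rw [Finset.sum_congr rfl hv]
    simp
  have hdeg : (s.filter (fun e => f e = 1)).card + (s.filter (fun e => ¬ f e = 1)).card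
      = G.degree v := by
    rw [Finset.card_filter_add_card_filter_not]
    simp [hs]
  refine ⟨(s.filter (fun e => ¬ f e = 1)).card, ?_⟩
  have : ((s.filter (fun e => f e = 1)).card : ℤ) + (s.filter (fun e => ¬ f e = 1)).card
      = (G.degree v : ℤ) := by exact_mod_cast hdeg
  rw [← hsplit, h1, h2]
  linarith [this]

inductive AltL : ℤ → ℤ → List ℤ → Prop
  | single (s : ℤ) : AltL s s [s]
  | cons (s t : ℤ) (l : List ℤ) (h : AltL (-s) t l) : AltL s t (s :: l)

theorem AltL.ne_nil {s t : ℤ} {l : List ℤ} (h : AltL s t l) : l ≠ [] := by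
  cases h <;> simp

theorem AltL.sum_eq {s t : ℤ} {l : List ℤ} (h : AltL s t l) : 2 * l.sum = s + t := by
  induction h with
  | single s => simp [two_mul]
  | cons s t l h ih => simp only [List.sum_cons]; linarith

theorem AltL.end_eq {s t : ℤ} {l : List ℤ} (h : AltL s t l) : t = s ∨ t = -s := by
  induction h with
  | single s => left; rfl
  | cons s t l h ih => omega

theorem AltL.concat {s t : ℤ} {l : List ℤ} (h : AltL s t l) : AltL s (-t) (l ++ [-t]) := by
  induction h with
  | single s => exact AltL.cons _ _ _ (by simpa using AltL.single (-s))
  | cons s t l h ih => exact AltL.cons _ _ _ ih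

theorem AltL.reverse {s t : ℤ} {l : List ℤ} (h : AltL s t l) : AltL t s l.reverse := by
  induction h with
  | single s => simpa using AltL.single s
  | cons s t l h ih => simpa using ih.concat

theorem AltL.append_split {s t : ℤ} {l₁ l₂ : List ℤ} (h : AltL s t (l₁ ++ l₂))
    (h1 : l₁ ≠ []) (h2 : l₂ ≠ []) : ∃ t₁, AltL s t₁ l₁ ∧ AltL (-t₁) t l₂ := by
  induction l₁ generalizing s with
  | nil => exact absurd rfl h1
  | cons a l₁ ih =>
    cases l₁ with
    | nil =>
      cases h with
      | single => exact absurd rfl h2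
      | cons _ _ _ h' => exact ⟨a, AltL.single a, h'⟩
    | cons b l₁' =>
      cases h with
      | cons _ _ _ h' =>
        obtain ⟨t₁, hl, hr⟩ := ih h' (by simp)
        exact ⟨t₁, AltL.cons _ _ _ hl, hr⟩

theorem mem_incF {e : Sym2 V} {v : V} :
    e ∈ G.incidenceFinset v ↔ e ∈ G.edgeSet ∧ v ∈ e := by
  rw [SimpleGraph.mem_incidenceFinset]
  rfl

theorem exists_adj_of_mem_inc {e : Sym2 V} {z : V} (h : e ∈ G.incidenceFinset z) :
    ∃ x, G.Adj z x ∧ e = s(z, x) := by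
  obtain ⟨hE, hz⟩ := mem_incF.mp h
  induction e with
  | _ a b =>
    rw [SimpleGraph.mem_edgeSet] at hE
    rcases Sym2.mem_iff.mp hz with rfl | rfl
    · exact ⟨b, hE, rfl⟩
    · exact ⟨a, hE.symm, Sym2.eq_swap⟩

/-- flip the sign of `f` on the edges in `L`. -/
def flip (f : Sym2 V → ℤ) (L : List (Sym2 V)) [DecidableEq V] : Sym2 V → ℤ :=
  fun e => if e ∈ L then -f e else f e

theorem flip_values (hf1 : ∀ e ∈ G.edgeSet, f e = 1 ∨ f e = -1) (L : List (Sym2 V)) :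
    ∀ e ∈ G.edgeSet, flip f L e = 1 ∨ flip f L e = -1 := by
  intro e he
  unfold flip
  rcases hf1 e he with h | h <;> by_cases hL : e ∈ L <;> simp [h, hL]

theorem flip_edgeSum {L : List (Sym2 V)} (hL : L.Nodup) (hsub : ∀ e ∈ L, e ∈ G.edgeSet) :
    edgeSum G (flip f L) = edgeSum G f - 2 * (L.map f).sum := by
  rw [edgeSum_eq, edgeSum_eq]
  have key : ∀ e ∈ G.edgeFinset, flip f L e = f e + (if e ∈ L then -2 * f e else 0) := by
    intro e _
    unfold flip
    by_cases h : e ∈ L <;> simp [h] <;> ring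
  rw [Finset.sum_congr rfl key, Finset.sum_add_distrib, ← Finset.sum_filter]
  have hfe : G.edgeFinset.filter (· ∈ L) = L.toFinset := by
    ext e
    simp only [Finset.mem_filter, List.mem_toFinset, SimpleGraph.mem_edgeFinset]
    exact ⟨fun h => h.2, fun h => ⟨hsub e h, h⟩⟩
  rw [hfe]
  have : ∑ e ∈ L.toFinset, (-2 * f e) = -2 * ∑ e ∈ L.toFinset, f e := by
    rw [Finset.mul_sum]
  rw [this, List.sum_toFinset f hL]
  ring

theorem flip_vertexSum {L : List (Sym2 V)} (hsub : ∀ e ∈ L, e ∈ G.edgeSet) (v : V) :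
    vertexSum G (flip f L) v
      = vertexSum G f v - 2 * ∑ e ∈ L.toFinset.filter (fun e => v ∈ e), f e := by
  rw [vertexSum_eq, vertexSum_eq]
  have key : ∀ e ∈ G.incidenceFinset v, flip f L e = f e + (if e ∈ L then -2 * f e else 0) := by
    intro e _
    unfold flip
    by_cases h : e ∈ L <;> simp [h] <;> ring
  rw [Finset.sum_congr rfl key, Finset.sum_add_distrib, ← Finset.sum_filter]
  have hfe : (G.incidenceFinset v).filter (· ∈ L) = L.toFinset.filter (fun e => v ∈ e) := by
    ext e
    simp only [Finset.mem_filter, List.mem_toFinset, mem_incF]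
    tauto
  rw [hfe]
  have h2 : ∑ e ∈ L.toFinset.filter (fun e => v ∈ e), (-2 * f e)
      = -2 * ∑ e ∈ L.toFinset.filter (fun e => v ∈ e), f e := by
    rw [Finset.mul_sum]
  rw [h2]
  ring

open SimpleGraph Walk

theorem AltL.cons_inv {s t x : ℤ} {l : List ℤ} (h : AltL s t (x :: l)) :
    x = s ∧ ((l = [] ∧ t = s) ∨ AltL (-s) t l) := by
  cases h with
  | single => exact ⟨rfl, Or.inl ⟨rfl, rfl⟩⟩
  | cons _ _ _ h' => exact ⟨rfl, Or.inr h'⟩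

theorem alt_count {a b : V} (W : G.Walk a b) :
    ∀ (_hW : W.IsTrail) (s t : ℤ) (_hA : AltL s t (W.edges.map f)) (u : V),
      ∑ e ∈ W.edges.toFinset.filter (fun e => u ∈ e), f e
        = (if u = a then s else 0) + (if u = b then t else 0) := by
  induction W with
  | nil =>
    intro _ s t hA u
    exact absurd (by simp : List.map f (Walk.nil : G.Walk _ _).edges = []) hA.ne_nil
  | @cons a a₁ b hadj p ih =>
    intro hW s t hA u
    rw [Walk.edges_cons, List.map_cons] at hA
    have hane : a ≠ a₁ := hadj.ne
    have hnd := hW.edges_nodup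
    rw [Walk.edges_cons, List.nodup_cons] at hnd
    have hsum : ∑ e ∈ (s(a, a₁) :: p.edges).toFinset.filter (fun e => u ∈ e), f e
        = (if u ∈ s(a, a₁) then f s(a, a₁) else 0)
          + ∑ e ∈ p.edges.toFinset.filter (fun e => u ∈ e), f e := by
      rw [List.toFinset_cons, Finset.filter_insert]
      by_cases hu : u ∈ s(a, a₁)
      · rw [if_pos hu, if_pos hu, Finset.sum_insert]
        simp only [Finset.mem_filter, List.mem_toFinset]
        tauto
      · rw [if_neg hu, if_neg hu, zero_add]
    rw [Walk.edges_cons, hsum]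
    obtain ⟨hx, hrest⟩ := hA.cons_inv
    rcases hrest with ⟨hmap, ht⟩ | h'
    · have hpe : p.edges = [] := by simpa using hmap
      have hb : a₁ = b := by
        have hn : p.Nil := Walk.nil_iff_length_eq.mpr (by rw [← Walk.length_edges, hpe]; rfl)
        exact hn.eq
      subst hb
      subst ht
      rw [hpe]
      simp only [List.toFinset_nil, Finset.filter_empty, Finset.sum_empty, add_zero]
      by_cases h1 : u = a <;> by_cases h2 : u = b <;>
        simp_all [Sym2.mem_iff]
    · have ihp := ih hW.of_cons (-s) t h' u
      rw [ihp]
      by_cases h1 : u = a <;> by_cases h2 : u = a₁ <;>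
        simp_all [Sym2.mem_iff] <;> omega

theorem trail_length_le {a b : V} (W : G.Walk a b) (hW : W.IsTrail) :
    W.length ≤ G.edgeFinset.card := by
  rw [← Walk.length_edges, ← List.toFinset_card_of_nodup hW.edges_nodup]
  apply Finset.card_le_card
  intro e he
  rw [List.mem_toFinset] at he
  rw [SimpleGraph.mem_edgeFinset]
  exact W.edges_subset_edgeSet he

theorem concat_trail {a b x : V} {W : G.Walk a b} (hW : W.IsTrail) (hadj : G.Adj b x)
    (hnotin : s(b, x) ∉ W.edges) : (W.concat hadj).IsTrail := by
  rw [Walk.isTrail_def, Walk.edges_concat]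
  have := hW.edges_nodup
  simp [List.nodup_append, this, hnotin]
  exact fun e he h => hnotin (h ▸ he)

theorem concat_alt {a b x : V} {W : G.Walk a b} {t : ℤ} (hA : AltL (-1) t (W.edges.map f))
    (hadj : G.Adj b x) (hfx : f s(b, x) = -t) :
    AltL (-1) (-t) ((W.concat hadj).edges.map f) := by
  rw [Walk.edges_concat, List.concat_eq_append, List.map_append]
  have := hA.concat
  simpa [hfx] using this

theorem exists_maximal (v₀ : V) (n : ℕ) :
    ∀ (z : V) (W : G.Walk v₀ z) (t : ℤ), W.IsTrail → AltL (-1) t (W.edges.map f) →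
      G.edgeFinset.card ≤ W.length + n →
      ∃ (z' : V) (M : G.Walk v₀ z') (t' : ℤ), M.IsTrail ∧ AltL (-1) t' (M.edges.map f) ∧
        (∀ x ∈ W.support, x ∈ M.support) ∧
        (∀ x, G.Adj z' x → f s(z', x) = -t' → s(z', x) ∈ M.edges) := by
  induction n with
  | zero =>
    intro z W t hW hA hlen
    by_cases hmax : ∀ x, G.Adj z x → f s(z, x) = -t → s(z, x) ∈ W.edges
    · exact ⟨z, W, t, hW, hA, fun x hx => hx, hmax⟩
    · push_neg at hmax
      obtain ⟨x, hadj, hfx, hnotin⟩ := hmax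
      have h1 : (W.concat hadj).length ≤ G.edgeFinset.card :=
        trail_length_le _ (concat_trail hW hadj hnotin)
      rw [Walk.length_concat] at h1
      omega
  | succ n ih =>
    intro z W t hW hA hlen
    by_cases hmax : ∀ x, G.Adj z x → f s(z, x) = -t → s(z, x) ∈ W.edges
    · exact ⟨z, W, t, hW, hA, fun x hx => hx, hmax⟩
    · push_neg at hmax
      obtain ⟨x, hadj, hfx, hnotin⟩ := hmax
      obtain ⟨z', M, t', h1, h2, h3, h4⟩ :=
        ih x (W.concat hadj) (-t) (concat_trail hW hadj hnotin) (concat_alt hA hadj hfx)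
          (by rw [Walk.length_concat]; omega)
      refine ⟨z', M, t', h1, h2, fun y hy => h3 y ?_, h4⟩
      rw [Walk.support_concat]
      exact List.mem_append_left _ hy

theorem maximal_endpoint {v₀ z : V} (M : G.Walk v₀ z) (t : ℤ) (hW : M.IsTrail)
    (hA : AltL (-1) t (M.edges.map f)) (hf1 : ∀ e ∈ G.edgeSet, f e = 1 ∨ f e = -1)
    (ht : t = 1 ∨ t = -1)
    (hmax : ∀ x, G.Adj z x → f s(z, x) = -t → s(z, x) ∈ M.edges) :
    ∃ c : ℕ, vertexSum G f z = ((if z = v₀ then -1 else 0) + t) + c * t ∧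
      (c = 0 → ∀ e ∈ G.incidenceFinset z, e ∈ M.edges) := by
  rw [vertexSum_eq]
  set A := M.edges.toFinset.filter (fun e => z ∈ e) with hA'
  have hAsub : A ⊆ G.incidenceFinset z := by
    intro e he
    rw [hA', Finset.mem_filter, List.mem_toFinset] at he
    exact mem_incF.mpr ⟨M.edges_subset_edgeSet he.1, he.2⟩
  have hSA : ∑ e ∈ A, f e = (if z = v₀ then -1 else 0) + t := by
    rw [hA', alt_count M hW _ _ hA z]
    simp
  have hoff : ∀ e ∈ G.incidenceFinset z \ A, f e = t := by
    intro e he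
    rw [Finset.mem_sdiff] at he
    obtain ⟨x, hadj, rfl⟩ := exists_adj_of_mem_inc he.1
    have hfe := hf1 _ ((mem_incF.mp he.1).1)
    by_contra hne
    have hfx : f s(z, x) = -t := by rcases ht with rfl | rfl <;> rcases hfe with h | h <;> omega
    exact he.2 (Finset.mem_filter.mpr ⟨List.mem_toFinset.mpr (hmax x hadj hfx),
      Sym2.mem_mk_left _ _⟩)
  have hsplit : ∑ e ∈ G.incidenceFinset z \ A, f e + ∑ e ∈ A, f e
      = ∑ e ∈ G.incidenceFinset z, f e := Finset.sum_sdiff hAsub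
  refine ⟨(G.incidenceFinset z \ A).card, ?_, ?_⟩
  · rw [← hsplit, hSA, Finset.sum_congr rfl hoff]
    simp [mul_comm]
    ring
  · intro hc0 e he
    have hsd : G.incidenceFinset z \ A = ∅ := Finset.card_eq_zero.mp hc0
    have heA : e ∈ A := by
      by_contra heA
      have : e ∈ G.incidenceFinset z \ A := Finset.mem_sdiff.mpr ⟨he, heA⟩
      rw [hsd] at this
      exact absurd this (Finset.notMem_empty e)
    rw [hA', Finset.mem_filter, List.mem_toFinset] at heA
    exact heA.1

theorem edgeSum_le {g : Sym2 V → ℤ} (hg1 : ∀ e ∈ G.edgeSet, g e = 1 ∨ g e = -1) :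
    edgeSum G g ≤ (G.edgeFinset.card : ℤ) := by
  rw [edgeSum_eq]
  calc ∑ e ∈ G.edgeFinset, g e ≤ ∑ _e ∈ G.edgeFinset, (1 : ℤ) := by
        apply Finset.sum_le_sum
        intro e he
        rcases hg1 e (SimpleGraph.mem_edgeFinset.mp he) with h | h <;> omega
    _ = (G.edgeFinset.card : ℤ) := by simp

theorem le_betaS {g : Sym2 V → ℤ} (hg : IsSignedSubmatching G g (Fintype.card V)) :
    edgeSum G g ≤ betaS G (Fintype.card V) := by
  apply le_csSup
  · refine ⟨(G.edgeFinset.card : ℤ), fun s hs => ?_⟩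
    obtain ⟨g', hg', rfl⟩ := hs
    exact edgeSum_le hg'.1
  · exact ⟨g, hg, rfl⟩

theorem submatching_of_all {g : Sym2 V → ℤ} (hg1 : ∀ e ∈ G.edgeSet, g e = 1 ∨ g e = -1)
    (hallg : ∀ v, vertexSum G g v ≤ 1) : IsSignedSubmatching G g (Fintype.card V) := by
  refine ⟨hg1, ?_⟩
  have h : {v | vertexSum G g v ≤ 1} = Set.univ := Set.eq_univ_of_forall hallg
  rw [h, Set.ncard_univ, Nat.card_eq_fintype_card]

theorem flip_walk_vertexSum {v₀ z : V} (W : G.Walk v₀ z) (hW : W.IsTrail) {t : ℤ}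
    (hA : AltL (-1) t (W.edges.map f)) (u : V) :
    vertexSum G (flip f W.edges) u
      = vertexSum G f u - 2 * ((if u = v₀ then -1 else 0) + (if u = z then t else 0)) := by
  rw [flip_vertexSum (fun e he => W.edges_subset_edgeSet he) u, alt_count W hW _ _ hA u]

theorem flip_walk_edgeSum {v₀ z : V} (W : G.Walk v₀ z) (hW : W.IsTrail) {t : ℤ}
    (hA : AltL (-1) t (W.edges.map f)) :
    edgeSum G (flip f W.edges) = edgeSum G f - (-1 + t) := by
  rw [flip_edgeSum hW.edges_nodup (fun e he => W.edges_subset_edgeSet he)]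
  have := hA.sum_eq
  linarith

theorem odd_degree_of_sum_odd (hf1 : ∀ e ∈ G.edgeSet, f e = 1 ∨ f e = -1) {v : V} {k : ℤ}
    (hk : vertexSum G f v = 2 * k + 1) : Odd (G.degree v) := by
  obtain ⟨N, hN⟩ := vertexSum_parity hf1 v
  rw [← Nat.not_even_iff_odd]
  intro hev
  obtain ⟨m, hm⟩ := hev
  have : (G.degree v : ℤ) = m + m := by exact_mod_cast hm
  omega

/-- Case A: a trail ending with a negative edge whose flip beats the optimum. -/
theorem caseA_contra (hf : IsSignedSubmatching G f (Fintype.card V))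
    (hopt : edgeSum G f = betaS G (Fintype.card V))
    {v₀ z : V} (W : G.Walk v₀ z) (hW : W.IsTrail) (hA : AltL (-1) (-1) (W.edges.map f))
    (hnew : ∀ u, vertexSum G f u
      - 2 * ((if u = v₀ then (-1 : ℤ) else 0) + (if u = z then -1 else 0)) ≤ 1) :
    False := by
  set g := flip f W.edges with hg
  have hg1 := flip_values hf.1 W.edges
  have hallg : ∀ u, vertexSum G g u ≤ 1 := by
    intro u
    rw [hg, flip_walk_vertexSum W hW hA u]
    exact hnew u
  have hsum : edgeSum G g = edgeSum G f + 2 := by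
    rw [hg, flip_walk_edgeSum W hW hA]; ring
  have hle := le_betaS (G := G) (submatching_of_all hg1 hallg)
  rw [hsum, hopt] at hle
  omega

/-- Case B: a trail ending with a positive edge at a vertex of sum 1 enlarges `O_f`. -/
theorem caseB_contra (hf : IsSignedSubmatching G f (Fintype.card V))
    (hall : ∀ v, vertexSum G f v ≤ 1)
    (hopt : edgeSum G f = betaS G (Fintype.card V))
    (hmax : ∀ g : Sym2 V → ℤ, IsSignedSubmatching G g (Fintype.card V) →
      (∀ v, vertexSum G g v ≤ 1) →
      edgeSum G g = betaS G (Fintype.card V) →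
      {v | Odd (G.degree v) ∧ vertexSum G g v < 1}.ncard ≤
        {v | Odd (G.degree v) ∧ vertexSum G f v < 1}.ncard)
    {v₀ z : V} (hzv : z ≠ v₀) (W : G.Walk v₀ z) (hW : W.IsTrail)
    (hA : AltL (-1) 1 (W.edges.map f))
    (hv₀ : vertexSum G f v₀ ≤ -2) (hz : vertexSum G f z = 1) : False := by
  set g := flip f W.edges with hg
  have hg1 := flip_values hf.1 W.edges
  have hvs : ∀ u, vertexSum G g u
      = vertexSum G f u - 2 * ((if u = v₀ then -1 else 0) + (if u = z then 1 else 0)) := by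
    intro u
    rw [hg, flip_walk_vertexSum W hW hA u]
  have hvsz : vertexSum G g z = -1 := by rw [hvs z, if_neg hzv, if_pos rfl, hz]; ring
  have hvsv₀ : vertexSum G g v₀ = vertexSum G f v₀ + 2 := by
    rw [hvs v₀, if_pos rfl, if_neg (fun h => hzv h.symm)]; ring
  have hvso : ∀ u, u ≠ v₀ → u ≠ z → vertexSum G g u = vertexSum G f u := by
    intro u h1 h2
    rw [hvs u, if_neg h1, if_neg h2]; ring
  have hallg : ∀ u, vertexSum G g u ≤ 1 := by
    intro u
    by_cases h1 : u = v₀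
    · subst h1; omega
    · by_cases h2 : u = z
      · subst h2; omega
      · rw [hvso u h1 h2]; exact hall u
  have hes : edgeSum G g = edgeSum G f := by
    rw [hg, flip_walk_edgeSum W hW hA]; ring
  have hodd : Odd (G.degree z) := odd_degree_of_sum_odd hf.1 (k := 0) (by omega)
  have hsub : {v | Odd (G.degree v) ∧ vertexSum G f v < 1}
      ⊂ {v | Odd (G.degree v) ∧ vertexSum G g v < 1} := by
    constructor
    · intro u hu
      obtain ⟨h1, h2⟩ := hu
      refine ⟨h1, ?_⟩
      by_cases hu1 : u = v₀
      · subst hu1; omega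
      · by_cases hu2 : u = z
        · subst hu2; omega
        · rw [hvso u hu1 hu2]; exact h2
    · intro hEq
      have hzin : z ∈ {v | Odd (G.degree v) ∧ vertexSum G g v < 1} := ⟨hodd, by omega⟩
      have hmem := hEq hzin
      obtain ⟨_, h2⟩ := hmem
      omega
  have hlt := Set.ncard_lt_ncard hsub (Set.toFinite _)
  have hle := hmax g (submatching_of_all hg1 hallg) hallg (by rw [hes, hopt])
  omega

theorem edges_ne_nil {a b : V} (p : G.Walk a b) (h : a ≠ b) : p.edges ≠ [] := by
  cases p with
  | nil => exact absurd rfl h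
  | cons h' p' => simp

/-- From a closed alternating trail through `u ≠ v₀`, extract an alternating trail
from `v₀` to `u` with either prescribed final sign. -/
theorem trick {v₀ u : V} (M : G.Walk v₀ v₀) (hM : M.IsTrail)
    (hA : AltL (-1) (-1) (M.edges.map f)) (hu : u ∈ M.support) (hne : u ≠ v₀)
    (τ : ℤ) (hτ : τ = 1 ∨ τ = -1) :
    ∃ D : G.Walk v₀ u, D.IsTrail ∧ AltL (-1) τ (D.edges.map f) ∧
      ∀ e ∈ D.edges, e ∈ M.edges := by
  have hspec : (M.takeUntil u hu).append (M.dropUntil u hu) = M := M.take_spec hu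
  set pre := M.takeUntil u hu with hpre
  set suf := M.dropUntil u hu with hsuf
  have hedges : pre.edges ++ suf.edges = M.edges := by rw [← Walk.edges_append, hspec]
  have hprene : pre.edges ≠ [] := edges_ne_nil pre (fun h => hne h.symm)
  have hsufne : suf.edges ≠ [] := edges_ne_nil suf hne
  have hnodup : (pre.edges ++ suf.edges).Nodup := by rw [hedges]; exact hM.edges_nodup
  rw [List.nodup_append] at hnodup
  have hA' : AltL (-1) (-1) ((pre.edges.map f) ++ (suf.edges.map f)) := by
    rw [← List.map_append, hedges]; exact hA
  obtain ⟨t₁, h1, h2⟩ := hA'.append_split (by simpa using hprene) (by simpa using hsufne)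
  have ht₁ : t₁ = -1 ∨ t₁ = 1 := by simpa using h1.end_eq
  by_cases hcase : τ = t₁
  · subst hcase
    refine ⟨pre, ⟨hnodup.1⟩, h1, ?_⟩
    intro e he
    rw [← hedges]
    exact List.mem_append_left _ he
  · have hτ' : τ = -t₁ := by omega
    subst hτ'
    refine ⟨suf.reverse, ?_, ?_, ?_⟩
    · exact ⟨by rw [Walk.edges_reverse]; exact List.nodup_reverse.mpr hnodup.2.1⟩
    · rw [Walk.edges_reverse, List.map_reverse]
      exact h2.reverse
    · intro e he
      rw [Walk.edges_reverse, List.mem_reverse] at he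
      rw [← hedges]
      exact List.mem_append_right _ he

theorem master (hconn : G.Connected) (hnotEuler : ¬ ∀ v, Even (G.degree v))
    (hf : IsSignedSubmatching G f (Fintype.card V))
    (hall : ∀ v, vertexSum G f v ≤ 1)
    (hopt : edgeSum G f = betaS G (Fintype.card V))
    (hmax : ∀ g : Sym2 V → ℤ, IsSignedSubmatching G g (Fintype.card V) →
      (∀ v, vertexSum G g v ≤ 1) →
      edgeSum G g = betaS G (Fintype.card V) →
      {v | Odd (G.degree v) ∧ vertexSum G g v < 1}.ncard ≤
        {v | Odd (G.degree v) ∧ vertexSum G f v < 1}.ncard) :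
    ∀ v, -1 ≤ vertexSum G f v := by
  by_contra hcon
  push_neg at hcon
  obtain ⟨v₀, hv⟩ := hcon
  have hv₀ : vertexSum G f v₀ ≤ -2 := by omega
  -- an initial negative edge at v₀
  have hex : ∃ x, G.Adj v₀ x ∧ f s(v₀, x) = -1 := by
    by_contra hno
    push_neg at hno
    have hpos : 0 ≤ vertexSum G f v₀ := by
      rw [vertexSum_eq]
      apply Finset.sum_nonneg
      intro e he
      obtain ⟨x, hadj, rfl⟩ := exists_adj_of_mem_inc he
      have h1 := hf.1 _ ((mem_incF.mp he).1)
      have h2 := hno x hadj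
      omega
    omega
  obtain ⟨x₀, hadj₀, hf₀⟩ := hex
  have hW₀T : (Walk.cons hadj₀ Walk.nil).IsTrail := by
    constructor
    simp
  have hW₀A : AltL (-1) (-1) ((Walk.cons hadj₀ (Walk.nil : G.Walk x₀ x₀)).edges.map f) := by
    have : (Walk.cons hadj₀ (Walk.nil : G.Walk x₀ x₀)).edges.map f = [(-1 : ℤ)] := by
      simp [hf₀]
    rw [this]
    exact AltL.single (-1)
  -- key property of maximal alternating trails
  have hkey : ∀ (z : V) (M : G.Walk v₀ z) (t : ℤ), M.IsTrail → AltL (-1) t (M.edges.map f) →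
      (∀ x, G.Adj z x → f s(z, x) = -t → s(z, x) ∈ M.edges) →
      z = v₀ ∧ t = -1 ∧ (∀ e ∈ G.incidenceFinset v₀, e ∈ M.edges) := by
    intro z M t hMT hMA hMmax
    have ht : t = 1 ∨ t = -1 := by
      have := hMA.end_eq
      omega
    obtain ⟨c, hc, hc0⟩ := maximal_endpoint M t hMT hMA hf.1 ht hMmax
    by_cases hzv : z = v₀
    · subst hzv
      rw [if_pos rfl] at hc
      rcases ht with rfl | rfl
      · exfalso
        have : (0 : ℤ) ≤ c := Int.ofNat_nonneg c
        omega
      · refine ⟨rfl, rfl, ?_⟩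
        by_cases hcz : c = 0
        · exact hc0 hcz
        · exfalso
          have hcge : (1 : ℤ) ≤ c := by
            exact_mod_cast Nat.one_le_iff_ne_zero.mpr hcz
          apply caseA_contra hf hopt M hMT hMA
          intro u
          by_cases hu : u = z
          · subst hu
            rw [if_pos rfl]
            omega
          · rw [if_neg hu]
            have := hall u
            omega
    · exfalso
      rw [if_neg hzv] at hc
      rcases ht with rfl | rfl
      · have hz1 : vertexSum G f z = 1 := by
          have h1 := hall z
          have : (0 : ℤ) ≤ c := Int.ofNat_nonneg c
          omega
        exact caseB_contra hf hall hopt hmax hzv M hMT hMA hv₀ hz1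
      · apply caseA_contra hf hopt M hMT hMA
        intro u
        by_cases h1 : u = v₀
        · subst h1
          rw [if_pos rfl, if_neg (fun h => hzv h.symm)]
          omega
        · by_cases h2 : u = z
          · subst h2
            rw [if_neg h1, if_pos rfl]
            have : (0 : ℤ) ≤ c := Int.ofNat_nonneg c
            omega
          · rw [if_neg h1, if_neg h2]
            have := hall u
            omega
  -- the set of vertices lying on some closed maximal alternating trail
  set R : Set V := {u | ∃ M : G.Walk v₀ v₀, M.IsTrail ∧ AltL (-1) (-1) (M.edges.map f) ∧
    (∀ e ∈ G.incidenceFinset v₀, e ∈ M.edges) ∧ u ∈ M.support} with hR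
  have hv₀R : v₀ ∈ R := by
    obtain ⟨z', M, t', hT, hAl, hsup, hmx⟩ :=
      exists_maximal v₀ G.edgeFinset.card x₀ (Walk.cons hadj₀ Walk.nil) (-1) hW₀T hW₀A
        (Nat.le_add_left _ _)
    obtain ⟨hz, ht', hincl⟩ := hkey z' M t' hT hAl hmx
    subst hz
    subst ht'
    exact ⟨M, hT, hAl, hincl, M.start_mem_support⟩
  have hclosed : ∀ u ∈ R, ∀ y, G.Adj u y → y ∈ R := by
    intro u hu y hadj
    obtain ⟨M, hT, hAl, hincl, husup⟩ := hu
    by_cases hey : s(u, y) ∈ M.edges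
    · exact ⟨M, hT, hAl, hincl, M.snd_mem_support_of_mem_edges hey⟩
    · have hunev : u ≠ v₀ := by
        rintro rfl
        exact hey (hincl _ (mem_incF.mpr ⟨G.mem_edgeSet.mpr hadj,
          Sym2.mem_mk_left _ _⟩))
      have hfe := hf.1 (s(u, y)) (G.mem_edgeSet.mpr hadj)
      obtain ⟨D, hDT, hDA, hDsub⟩ := trick M hT hAl husup hunev (-(f s(u, y))) (by omega)
      have hnotinD : s(u, y) ∉ D.edges := fun h => hey (hDsub _ h)
      have hDA' : AltL (-1) (f s(u, y)) ((D.concat hadj).edges.map f) := by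
        have := concat_alt hDA hadj (by ring)
        simpa using this
      obtain ⟨z', M', t', hT', hAl', hsup', hmx'⟩ :=
        exists_maximal v₀ G.edgeFinset.card y (D.concat hadj) (f s(u, y))
          (concat_trail hDT hadj hnotinD) hDA' (Nat.le_add_left _ _)
      obtain ⟨hz', ht'', hincl'⟩ := hkey z' M' t' hT' hAl' hmx'
      subst hz'
      subst ht''
      exact ⟨M', hT', hAl', hincl', hsup' y (D.concat hadj).end_mem_support⟩
  have hstep : ∀ (a b : V) (q : G.Walk a b), a ∈ R → b ∈ R := by
    intro a b q
    induction q with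
    | nil => exact id
    | cons h' p' ih' =>
      intro ha
      exact ih' (hclosed _ ha _ h')
  have hRall : ∀ u, u ∈ R := by
    intro u
    obtain ⟨p⟩ := hconn.preconnected v₀ u
    exact hstep _ _ p hv₀R
  -- a vertex other than v₀ with nonzero sum exists
  have hz'ex : ∃ z', z' ≠ v₀ ∧ vertexSum G f z' ≠ 0 := by
    by_contra hno
    push_neg at hno
    apply hnotEuler
    have heven : ∀ v, v ≠ v₀ → Even (G.degree v) := by
      intro v hvne
      obtain ⟨N, hN⟩ := vertexSum_parity hf.1 v
      have h0 := hno v hvne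
      have : (G.degree v : ℤ) = 2 * N := by omega
      have : G.degree v = 2 * N := by exact_mod_cast this
      exact ⟨N, by omega⟩
    intro v
    by_cases hvv : v = v₀
    · subst hvv
      obtain ⟨k, hk⟩ := G.even_card_odd_degree_vertices
      by_contra hodd
      rw [Nat.not_even_iff_odd] at hodd
      have hsub : Finset.univ.filter (fun v => Odd (G.degree v)) = {v} := by
        apply Finset.eq_singleton_iff_unique_mem.mpr
        refine ⟨Finset.mem_filter.mpr ⟨Finset.mem_univ _, hodd⟩, ?_⟩
        intro x hx
        rw [Finset.mem_filter] at hx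
        by_contra hxv
        exact (Nat.not_odd_iff_even.mpr (heven x hxv)) hx.2
      rw [hsub] at hk
      simp at hk
      omega
    · exact heven v hvv
  obtain ⟨z', hz'ne, hz'sum⟩ := hz'ex
  obtain ⟨M, hT, hAl, _, hsupz'⟩ := hRall z'
  by_cases hcase : vertexSum G f z' = 1
  · obtain ⟨D, hDT, hDA, _⟩ := trick M hT hAl hsupz' hz'ne 1 (Or.inl rfl)
    exact caseB_contra hf hall hopt hmax hz'ne D hDT hDA hv₀ hcase
  · have hneg : vertexSum G f z' ≤ -1 := by
      have := hall z'
      omega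
    obtain ⟨D, hDT, hDA, _⟩ := trick M hT hAl hsupz' hz'ne (-1) (Or.inr rfl)
    apply caseA_contra hf hopt D hDT hDA
    intro u
    by_cases h1 : u = v₀
    · subst h1
      rw [if_pos rfl, if_neg (fun h => hz'ne h.symm)]
      omega
    · by_cases h2 : u = z'
      · subst h2
        rw [if_neg h1, if_pos rfl]
        omega
      · rw [if_neg h1, if_neg h2]
        have := hall u
        omega

end SignedProof

theorem optimal_max_Of_vertexSum_ge [Fintype V] (G : SimpleGraph V) [DecidableRel G.Adj]
    (hconn : G.Connected) (hnotEuler : ¬ ∀ v, Even (G.degree v))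
    (f : Sym2 V → ℤ) (hf : IsSignedSubmatching G f (Fintype.card V))
    (hall : ∀ v, vertexSum G f v ≤ 1)
    (hopt : edgeSum G f = betaS G (Fintype.card V))
    (hmax : ∀ g : Sym2 V → ℤ, IsSignedSubmatching G g (Fintype.card V) →
      (∀ v, vertexSum G g v ≤ 1) →
      edgeSum G g = betaS G (Fintype.card V) →
      {v | Odd (G.degree v) ∧ vertexSum G g v < 1}.ncard ≤
        {v | Odd (G.degree v) ∧ vertexSum G f v < 1}.ncard) :
    ∀ v, -1 ≤ vertexSum G f v := by
  have : DecidableEq V := Classical.decEq V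
  exact SignedProof.master hconn hnotEuler hf hall hopt hmax
end

section
/- Let G be a simple graph, f a signed submatching of G, and let T be a good (−1,−1)-trail in G whose endpoints u and v are distinct and satisfy f(E_G(u)) ≤ −1 and f(E_G(v)) ≤ −1. Let g be obtained from f by negating f on every edge of T. Then g(E_G(x)) = f(E_G(x)) for all vertices x ∉ {u, v}, g(E_G(u)) = f(E_G(u)) + 2, g(E_G(v)) = f(E_G(v)) + 2, g is a signed submatching of G, and g(E(G)) = f(E(G)) + 2. -/
open Finset

variable {V : Type*}

private lemma alt_sum {α : Type*} (f : α → ℤ) :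
    ∀ (l : List α) (hne : l ≠ []), List.Chain' (fun a b => f b = - f a) l →
      2 * (l.map f).sum = f (l.head hne) + f (l.getLast hne)
  | [], hne, _ => absurd rfl hne
  | [e], _, _ => by simp; ring
  | (e₀ :: e₁ :: t), _, hch => by
      rw [List.Chain', List.isChain_cons_cons] at hch
      have ih := alt_sum f (e₁ :: t) (by simp) hch.2
      simp only [List.map_cons, List.sum_cons, List.head_cons] at *
      rw [List.getLast_cons (by simp : e₁ :: t ≠ [])]
      have h1 : f e₁ = - f e₀ := hch.1
      linarith

section
variable [DecidableEq V]

private lemma vsum_eq [Fintype V] (G : SimpleGraph V) (h : Sym2 V → ℤ) (x : V) :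
    vertexSum G h x = ∑ e ∈ (Set.toFinite {e ∈ G.edgeSet | x ∈ e}).toFinset, h e := by
  exact finsum_mem_eq_finite_toFinset_sum h (Set.toFinite _)

private lemma esum_eq [Fintype V] (G : SimpleGraph V) (h : Sym2 V → ℤ) :
    edgeSum G h = ∑ e ∈ (Set.toFinite G.edgeSet).toFinset, h e := by
  exact finsum_mem_eq_finite_toFinset_sum h (Set.toFinite _)

end
private lemma trail_sum [DecidableEq V] (G : SimpleGraph V) (f : Sym2 V → ℤ) :
    ∀ {u v : V} (W : G.Walk u v) (hne : W.edges ≠ []),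
      List.Chain' (fun a b => f b = - f a) W.edges →
      ∀ x : V, ((W.edges.filter (fun e => x ∈ e)).map f).sum =
        (if x = u then f (W.edges.head hne) else 0) +
        (if x = v then f (W.edges.getLast hne) else 0) := by
  intro u v W
  induction W with
  | nil => intro hne; simp at hne
  | @cons u w v h p ih =>
    intro hne hch x
    cases p with
    | nil =>
      simp only [SimpleGraph.Walk.edges_cons, SimpleGraph.Walk.edges_nil,
        List.filter_cons, List.filter_nil, List.head_cons, List.getLast_singleton]
      by_cases hxu : x = u <;> by_cases hxw : x = w
      · exact absurd (hxu ▸ hxw : u = w) h.ne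
      all_goals simp [hxu, hxw, Sym2.mem_iff, h.ne, Ne.symm h.ne]
    | @cons w w' v h' p' =>
      simp only [SimpleGraph.Walk.edges_cons] at *
      have hne' : s(w, w') :: p'.edges ≠ [] := by simp
      rw [List.Chain', List.isChain_cons] at hch
      have hrel : f s(w, w') = - f s(u, w) := hch.1 s(w, w') rfl
      have ihx := ih hne' hch.2 x
      rw [List.head_cons] at ihx
      rw [List.filter_cons, List.head_cons, List.getLast_cons hne']
      by_cases hxu : x = u <;> by_cases hxw : x = w
      · exact absurd (hxu ▸ hxw : u = w) h.ne
      · rw [if_pos (by simp [Sym2.mem_iff, hxu]), List.map_cons, List.sum_cons, ihx]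
        simp [hxu, hxw, h.ne, Ne.symm h.ne]
      · rw [if_pos (by simp [Sym2.mem_iff, hxw]), List.map_cons, List.sum_cons, ihx, hrel]
        simp only [hxw, if_pos rfl, if_neg hxu]
        by_cases hwv : w = v
        · subst hwv; simp [Ne.symm h.ne]
        · simp [hwv, Ne.symm h.ne]
      · rw [if_neg (by simp [Sym2.mem_iff, hxu, hxw]), ihx]
        simp [hxu, hxw]

theorem switch_good_trail [Fintype V] [DecidableEq V] (G : SimpleGraph V)
    (f : Sym2 V → ℤ) (hf : IsSignedSubmatching G f (Fintype.card V))
    (hall : ∀ x, vertexSum G f x ≤ 1)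
    (u v : V) (huv : u ≠ v) (W : G.Walk u v) (hT : W.IsTrail)
    (hchain : List.Chain' (fun a b => f b = - f a) W.edges)
    (hne : W.edges ≠ [])
    (hhead : f (W.edges.head hne) = -1) (hlast : f (W.edges.getLast hne) = -1)
    (hu : vertexSum G f u ≤ -1) (hv : vertexSum G f v ≤ -1)
    (g : Sym2 V → ℤ) (hg : ∀ e, g e = if e ∈ W.edges then - f e else f e) :
    (∀ x, x ≠ u → x ≠ v → vertexSum G g x = vertexSum G f x) ∧
    vertexSum G g u = vertexSum G f u + 2 ∧
    vertexSum G g v = vertexSum G f v + 2 ∧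
    IsSignedSubmatching G g (Fintype.card V) ∧
    edgeSum G g = edgeSum G f + 2 := by
  classical
  have hnd : W.edges.Nodup := hT.edges_nodup
  have hL : ∀ x : V, ((W.edges.filter (fun e => x ∈ e)).map f).sum =
      (if x = u then (-1:ℤ) else 0) + (if x = v then (-1:ℤ) else 0) := by
    intro x
    rw [trail_sum G f W hne hchain x, hhead, hlast]
  have hgf : ∀ e, g e = f e + (if e ∈ W.edges then -2 * f e else 0) := by
    intro e; rw [hg e]; split <;> ring
  have hdiff : ∀ x : V, vertexSum G g x = vertexSum G f x +
      ((if x = u then (2:ℤ) else 0) + (if x = v then (2:ℤ) else 0)) := by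
    intro x
    rw [vsum_eq G g x, vsum_eq G f x]
    have h1 : ∑ e ∈ (Set.toFinite {e ∈ G.edgeSet | x ∈ e}).toFinset, g e
        = ∑ e ∈ (Set.toFinite {e ∈ G.edgeSet | x ∈ e}).toFinset, f e
          + ∑ e ∈ (Set.toFinite {e ∈ G.edgeSet | x ∈ e}).toFinset,
              (if e ∈ W.edges then -2 * f e else 0) := by
      rw [← Finset.sum_add_distrib]
      exact Finset.sum_congr rfl fun e _ => hgf e
    have h2 : ((Set.toFinite {e ∈ G.edgeSet | x ∈ e}).toFinset.filter (· ∈ W.edges))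
        = (W.edges.filter (fun e => x ∈ e)).toFinset := by
      ext e
      simp only [Finset.mem_filter, Set.Finite.mem_toFinset, Set.mem_setOf_eq,
        List.mem_toFinset, List.mem_filter, decide_eq_true_eq]
      constructor
      · rintro ⟨⟨_, hx⟩, hm⟩; exact ⟨hm, hx⟩
      · rintro ⟨hm, hx⟩; exact ⟨⟨W.edges_subset_edgeSet hm, hx⟩, hm⟩
    rw [h1, ← Finset.sum_filter, h2,
      List.sum_toFinset _ (hnd.filter _), List.sum_map_mul_left, hL x]
    by_cases hxu : x = u <;> by_cases hxv : x = v <;> simp [hxu, hxv, huv, Ne.symm huv] <;> ring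
  refine ⟨fun x hxu hxv => by rw [hdiff x]; simp [hxu, hxv],
    by rw [hdiff u]; simp [huv], by rw [hdiff v]; simp [Ne.symm huv], ⟨?_, ?_⟩, ?_⟩
  · intro e he
    rw [hg e]
    split
    · rcases hf.1 e he with h | h <;> simp [h]
    · exact hf.1 e he
  · have hU : {x | vertexSum G g x ≤ 1} = Set.univ := by
      apply Set.eq_univ_of_forall
      intro x
      simp only [Set.mem_setOf_eq]
      rw [hdiff x]
      by_cases hxu : x = u
      · subst hxu; simp [huv]; linarith [hu]
      by_cases hxv : x = v
      · subst hxv; simp [hxu]; linarith [hv]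
      · simp [hxu, hxv]; linarith [hall x]
    rw [hU, Set.ncard_univ, Nat.card_eq_fintype_card]
  · rw [esum_eq G g, esum_eq G f]
    have h1 : ∑ e ∈ (Set.toFinite G.edgeSet).toFinset, g e
        = ∑ e ∈ (Set.toFinite G.edgeSet).toFinset, f e
          + ∑ e ∈ (Set.toFinite G.edgeSet).toFinset,
              (if e ∈ W.edges then -2 * f e else 0) := by
      rw [← Finset.sum_add_distrib]
      exact Finset.sum_congr rfl fun e _ => hgf e
    have h2 : ((Set.toFinite G.edgeSet).toFinset.filter (· ∈ W.edges))
        = W.edges.toFinset := by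
      ext e
      simp only [Finset.mem_filter, Set.Finite.mem_toFinset, List.mem_toFinset]
      exact ⟨fun h => h.2, fun h => ⟨W.edges_subset_edgeSet h, h⟩⟩
    have h3 : 2 * (W.edges.map f).sum = -2 := by
      rw [alt_sum f W.edges hne hchain, hhead, hlast]; norm_num
    have h4 : ∑ e ∈ W.edges.toFinset, f e = (W.edges.map f).sum :=
      List.sum_toFinset _ hnd
    rw [h1, ← Finset.sum_filter, h2]
    have h5 : ∑ e ∈ W.edges.toFinset, -2 * f e = -2 * ∑ e ∈ W.edges.toFinset, f e := by
      rw [Finset.mul_sum]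
    rw [h5, h4]
    linarith
end

section
/- Let G be a connected simple graph which is not a tree, let C be a cycle in G, v ∈ V(C) with d(v) ≥ 3, u, w ∈ N(v) ∩ V(C), and x ∈ N(v) \ {u, w}. Let G' be obtained from G by deleting edges vw and vx, adding a new vertex v', and adding edges v'x and v'w. Then G' is connected and |E(G')| − |V(G')| = |E(G)| − |V(G)| − 1. -/
variable {V : Type*}

/-- The graph obtained from `G` by deleting edges `vw, vx`, adding a new vertex `v'`
and joining it to `w` and `x`. -/
def splitGraph (G : SimpleGraph V) (v w x : V) : SimpleGraph (V ⊕ Unit) :=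
  SimpleGraph.fromEdgeSet
    ((Sym2.map Sum.inl '' G.edgeSet \ {s(Sum.inl v, Sum.inl w), s(Sum.inl v, Sum.inl x)}) ∪
      {s(Sum.inr (), Sum.inl w), s(Sum.inr (), Sum.inl x)})

open SimpleGraph

/-- In a walk with no repeated vertices, any two support vertices other than the
endpoint are joined by a walk avoiding the endpoint. -/
private lemma walk_avoid {G : SimpleGraph V} :
    ∀ {a b : V} (p : G.Walk a b), p.support.Nodup →
      ∀ {y z : V}, y ∈ p.support → z ∈ p.support → y ≠ b → z ≠ b →
        ∃ r : G.Walk y z, b ∉ r.support := by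
  intro a b p
  induction p with
  | nil =>
    intro _ y z hy _ hyb _
    simp only [Walk.support_nil, List.mem_singleton] at hy
    exact absurd hy hyb
  | @cons a c b h p ih =>
    intro hnd y z hy hz hyb hzb
    simp only [Walk.support_cons, List.nodup_cons] at hnd
    have hab : a ≠ b := fun e => hnd.1 (e ▸ p.end_mem_support)
    have helper : ∀ {t : V}, t ∈ p.support → t ≠ b → ∃ r : G.Walk t a, b ∉ r.support := by
      intro t ht htb
      have hcb : c ≠ b := by
        intro hcb
        subst hcb
        have hpath : p.IsPath := (Walk.isPath_def p).mpr hnd.2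
        have : p = Walk.nil := Walk.isPath_iff_eq_nil.mp hpath
        subst this
        simp only [Walk.support_nil, List.mem_singleton] at ht
        exact htb ht
      obtain ⟨r, hr⟩ := ih hnd.2 ht p.start_mem_support htb hcb
      refine ⟨r.append (Walk.cons h.symm Walk.nil), ?_⟩
      simp only [Walk.support_append, List.mem_append, Walk.support_cons, Walk.support_nil,
        List.tail_cons, List.mem_singleton]
      rintro (hb | rfl)
      · exact hr hb
      · exact hab rfl
    simp only [Walk.support_cons, List.mem_cons] at hy hz
    rcases hy with rfl | hy
    · rcases hz with rfl | hz
      · exact ⟨Walk.nil, by simpa using hab.symm⟩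
      · obtain ⟨r, hr⟩ := helper hz hzb
        exact ⟨r.reverse, by simpa using hr⟩
    · rcases hz with rfl | hz
      · exact helper hy hyb
      · exact ih hnd.2 hy hz hyb hzb

private lemma splitGraph_adj_inl {G : SimpleGraph V} {v w x a b : V} (hab : G.Adj a b)
    (h1 : s(a, b) ≠ s(v, w)) (h2 : s(a, b) ≠ s(v, x)) :
    (splitGraph G v w x).Adj (Sum.inl a) (Sum.inl b) := by
  rw [splitGraph, fromEdgeSet_adj]
  refine ⟨Or.inl ⟨⟨s(a, b), (SimpleGraph.mem_edgeSet G).mpr hab, by simp⟩, ?_⟩, by simp [hab.ne]⟩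
  simp only [Set.mem_insert_iff, Set.mem_singleton_iff, not_or]
  constructor
  · intro hh
    exact h1 (Sym2.eq_iff.mpr (by simpa [Sym2.eq_iff] using hh))
  · intro hh
    exact h2 (Sym2.eq_iff.mpr (by simpa [Sym2.eq_iff] using hh))

private lemma reach_of_walk {G : SimpleGraph V} {v w x : V} :
    ∀ {a b : V} (r : G.Walk a b),
      (∀ e ∈ r.edges, e ≠ s(v, w) ∧ e ≠ s(v, x)) →
      (splitGraph G v w x).Reachable (Sum.inl a) (Sum.inl b) := by
  intro a b r
  induction r with
  | nil => exact fun _ => Reachable.refl _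
  | @cons a c b h p ih =>
    intro he
    have h0 := he s(a, c) (by simp)
    exact (splitGraph_adj_inl h h0.1 h0.2).reachable.trans
      (ih fun e hee => he e (by simp [hee]))

private lemma reach_aux {G : SimpleGraph V} {v w x : V} :
    ∀ {y z : V}, G.Walk y z →
      (splitGraph G v w x).Reachable (Sum.inl v) (Sum.inl w) →
      (splitGraph G v w x).Reachable (Sum.inl v) (Sum.inl x) →
      (splitGraph G v w x).Reachable (Sum.inl y) (Sum.inl z) := by
  intro y z p
  induction p with
  | nil => exact fun _ _ => Reachable.refl _
  | @cons a c' _ h q ih =>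
    intro Rvw Rvx
    refine Reachable.trans ?_ (ih Rvw Rvx)
    by_cases h1 : s(a, c') = s(v, w)
    · rcases Sym2.eq_iff.mp h1 with ⟨rfl, rfl⟩ | ⟨rfl, rfl⟩
      · exact Rvw
      · exact Rvw.symm
    · by_cases h2 : s(a, c') = s(v, x)
      · rcases Sym2.eq_iff.mp h2 with ⟨rfl, rfl⟩ | ⟨rfl, rfl⟩
        · exact Rvx
        · exact Rvx.symm
      · exact (splitGraph_adj_inl h h1 h2).reachable

theorem splitGraph_connected_and_count [Fintype V]
    (G : SimpleGraph V) [DecidableRel G.Adj]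
    (hconn : G.Connected) (hnt : ¬ G.IsAcyclic)
    (v : V) (c : G.Walk v v) (hc : c.IsCycle) (hdeg : 3 ≤ G.degree v)
    (u w : V) (hu : G.Adj v u) (hw : G.Adj v w)
    (huc : u ∈ c.support) (hwc : w ∈ c.support) (huw : u ≠ w)
    (x : V) (hx : G.Adj v x) (hxu : x ≠ u) (hxw : x ≠ w) :
    (splitGraph G v w x).Connected ∧
    ((splitGraph G v w x).edgeSet.ncard : ℤ) - Nat.card (V ⊕ Unit)
      = (G.edgeSet.ncard : ℤ) - Nat.card V - 1 := by
  classical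
  have hwadj : (splitGraph G v w x).Adj (Sum.inr ()) (Sum.inl w) := by
    rw [splitGraph, fromEdgeSet_adj]; simp
  have hxadj : (splitGraph G v w x).Adj (Sum.inr ()) (Sum.inl x) := by
    rw [splitGraph, fromEdgeSet_adj]; simp
  have hpath : ∃ r : G.Walk u w, v ∉ r.support := by
    cases c with
    | nil => exact absurd rfl hc.ne_nil
    | cons h p =>
      have hnd : p.support.Nodup := by simpa using hc.support_nodup
      have hu' : u ∈ p.support := by
        rcases (by simpa using huc : u = v ∨ u ∈ p.support) with rfl | h'
        · exact absurd rfl hu.ne'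
        · exact h'
      have hw' : w ∈ p.support := by
        rcases (by simpa using hwc : w = v ∨ w ∈ p.support) with rfl | h'
        · exact absurd rfl hw.ne'
        · exact h'
      exact walk_avoid p hnd hu' hw' hu.ne' hw.ne'
  obtain ⟨r, hr⟩ := hpath
  have hne_edges : ∀ e ∈ r.edges, e ≠ s(v, w) ∧ e ≠ s(v, x) := by
    intro e he
    constructor <;> rintro rfl <;>
      exact hr (r.fst_mem_support_of_mem_edges (by simpa using he))
  have Ruw : (splitGraph G v w x).Reachable (Sum.inl u) (Sum.inl w) :=
    reach_of_walk r hne_edges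
  have hvu_adj : (splitGraph G v w x).Adj (Sum.inl v) (Sum.inl u) := by
    refine splitGraph_adj_inl hu ?_ ?_
    · intro hh
      rcases Sym2.eq_iff.mp hh with ⟨_, rfl⟩ | ⟨rfl, _⟩
      · exact huw rfl
      · exact hw.ne rfl
    · intro hh
      rcases Sym2.eq_iff.mp hh with ⟨_, rfl⟩ | ⟨rfl, _⟩
      · exact hxu rfl
      · exact hx.ne rfl
  have Rvw : (splitGraph G v w x).Reachable (Sum.inl v) (Sum.inl w) :=
    hvu_adj.reachable.trans Ruw
  have Rvr : (splitGraph G v w x).Reachable (Sum.inl v) (Sum.inr ()) :=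
    Rvw.trans hwadj.reachable.symm
  have Rvx : (splitGraph G v w x).Reachable (Sum.inl v) (Sum.inl x) :=
    Rvr.trans hxadj.reachable
  have main : ∀ y : V, (splitGraph G v w x).Reachable (Sum.inl y) (Sum.inl v) := by
    intro y
    obtain ⟨p⟩ := hconn.preconnected y v
    exact reach_aux p Rvw Rvx
  have hconn' : (splitGraph G v w x).Connected := by
    haveI : Nonempty (V ⊕ Unit) := ⟨Sum.inr ()⟩
    have RA : ∀ a : V ⊕ Unit, (splitGraph G v w x).Reachable a (Sum.inl v) := by
      rintro (y | ⟨⟩)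
      · exact main y
      · exact Rvr.symm
    exact Connected.mk fun a b => (RA a).trans (RA b).symm
  refine ⟨hconn', ?_⟩
  have hBA : ∀ (y : V) (e : Sym2 V),
      s(Sum.inr (), (Sum.inl y : V ⊕ Unit)) ≠ Sym2.map Sum.inl e := by
    intro y e
    induction e using Sym2.ind with
    | _ p q => simp [Sym2.eq_iff]
  have hE' : (splitGraph G v w x).edgeSet =
      (Sym2.map Sum.inl '' G.edgeSet \ {s(Sum.inl v, Sum.inl w), s(Sum.inl v, Sum.inl x)}) ∪
        {s(Sum.inr (), Sum.inl w), s(Sum.inr (), Sum.inl x)} := by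
    rw [splitGraph, edgeSet_fromEdgeSet, sdiff_eq_left]
    rw [Set.disjoint_left]
    rintro e hmem hdiag
    rcases hmem with ⟨⟨e', he', rfl⟩, -⟩ | hmem
    · exact not_isDiag_of_mem_edgeSet _ he'
        ((Sym2.isDiag_map Sum.inl_injective).mp hdiag)
    · rcases hmem with rfl | rfl <;> simp [Sym2.isDiag_iff_proj_eq] at hdiag
  set A : Set (Sym2 (V ⊕ Unit)) := Sym2.map Sum.inl '' G.edgeSet with hA
  set D : Set (Sym2 (V ⊕ Unit)) := {s(Sum.inl v, Sum.inl w), s(Sum.inl v, Sum.inl x)} with hD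
  set B : Set (Sym2 (V ⊕ Unit)) := {s(Sum.inr (), Sum.inl w), s(Sum.inr (), Sum.inl x)} with hB
  have hDA : D ⊆ A := by
    rintro e (rfl | rfl)
    · exact ⟨s(v, w), (SimpleGraph.mem_edgeSet G).mpr hw, by simp⟩
    · exact ⟨s(v, x), (SimpleGraph.mem_edgeSet G).mpr hx, by simp⟩
  have hDcard : D.ncard = 2 := by
    apply Set.ncard_pair
    simp [Sym2.eq_iff, hxw.symm, hx.ne]
  have hBcard : B.ncard = 2 := by
    apply Set.ncard_pair
    simp [Sym2.eq_iff, hxw.symm]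
  have hdisj : Disjoint (A \ D) B := by
    rw [Set.disjoint_right]
    rintro e (rfl | rfl) ⟨⟨e', he', hee⟩, -⟩
    · exact hBA w e' hee.symm
    · exact hBA x e' hee.symm
  have hAcard : A.ncard = G.edgeSet.ncard :=
    Set.ncard_image_of_injective _ (Sym2.map.injective Sum.inl_injective)
  have hEcard2 : 2 ≤ G.edgeSet.ncard := by
    have hsub : ({s(v, w), s(v, x)} : Set (Sym2 V)) ⊆ G.edgeSet := by
      rintro e (rfl | rfl)
      · exact (SimpleGraph.mem_edgeSet G).mpr hw
      · exact (SimpleGraph.mem_edgeSet G).mpr hx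
    calc 2 = ({s(v, w), s(v, x)} : Set (Sym2 V)).ncard := by
            rw [Set.ncard_pair]
            simp [Sym2.eq_iff, hxw.symm, hx.ne]
      _ ≤ G.edgeSet.ncard := Set.ncard_le_ncard hsub (Set.toFinite _)
  have hcard : (splitGraph G v w x).edgeSet.ncard = G.edgeSet.ncard := by
    rw [hE', Set.ncard_union_eq hdisj (Set.toFinite _) (Set.toFinite _),
      Set.ncard_diff hDA (Set.toFinite _), hAcard, hDcard, hBcard]
    omega
  have hVcard : Nat.card (V ⊕ Unit) = Nat.card V + 1 := by
    simp [Nat.card_sum]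
  rw [hcard, hVcard]
  push_cast
  ring
end

section
/- With G, G', v, v', w, x as in the cycle-splitting construction (G' obtained from G by replacing edges vw, vx with v'w, v'x for a new vertex v'), for every positive integer k ≤ |V(G)| we have β_S^k(G) ≥ β_S^{k+1}(G'). -/
open Finset

variable {V : Type*}

open Classical in
noncomputable def phiMap (v w x : V) : Sym2 V → Sym2 (V ⊕ Unit) := fun e =>
  if e = s(v, w) then s(Sum.inr (), Sum.inl w)
  else if e = s(v, x) then s(Sum.inr (), Sum.inl x)
  else Sym2.map Sum.inl e

lemma map_inl_ne_pair (e : Sym2 V) (a : V) :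
    Sym2.map (Sum.inl : V → V ⊕ Unit) e ≠ s(Sum.inr (), Sum.inl a) := by
  intro h
  have hm : (Sum.inr () : V ⊕ Unit) ∈ Sym2.map (Sum.inl : V → V ⊕ Unit) e := by
    rw [h]; simp
  rw [Sym2.mem_map] at hm
  obtain ⟨b, -, hb⟩ := hm
  simp at hb

lemma phiMap_injective {v w x : V} (hvw : v ≠ w) (hvx : v ≠ x) (hxw : x ≠ w) :
    Function.Injective (phiMap v w x) := by
  intro e e' h
  unfold phiMap at h
  split_ifs at h with h1 h2 h3 h4 h5 h6 h7 h8
  all_goals first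
    | (subst_vars; rfl)
    | (simp [Sym2.eq_iff] at h;
       first | exact absurd h (Ne.symm hxw) | exact absurd h hxw)
    | exact absurd h.symm (map_inl_ne_pair _ _)
    | exact absurd h (map_inl_ne_pair _ _)
    | exact Sym2.map.injective Sum.inl_injective h

lemma phiMap_vw {v w x : V} : phiMap v w x s(v, w) = s(Sum.inr (), Sum.inl w) := by
  simp [phiMap]

lemma pair_vx_ne_vw {v w x : V} (hvw : v ≠ w) (hxw : x ≠ w) : s(v, x) ≠ s(v, w) := by
  simp [Sym2.eq_iff, hxw, hvw]

lemma phiMap_vx {v w x : V} (hvw : v ≠ w) (hxw : x ≠ w) :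
    phiMap v w x s(v, x) = s(Sum.inr (), Sum.inl x) := by
  simp [phiMap, pair_vx_ne_vw hvw hxw]

lemma phiMap_other {v w x : V} {e : Sym2 V} (h1 : e ≠ s(v, w)) (h2 : e ≠ s(v, x)) :
    phiMap v w x e = Sym2.map Sum.inl e := by
  simp [phiMap, h1, h2]

lemma splitGraph_edgeSet {G : SimpleGraph V} {v w x : V} (hw : G.Adj v w) (hx : G.Adj v x)
    (hxw : x ≠ w) :
    (splitGraph G v w x).edgeSet = phiMap v w x '' G.edgeSet := by
  rw [splitGraph, SimpleGraph.edgeSet_fromEdgeSet]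
  ext e'
  constructor
  · rintro ⟨h, -⟩
    rcases h with ⟨⟨e, he, rfl⟩, hne⟩ | h
    · refine ⟨e, he, ?_⟩
      have h1 : e ≠ s(v, w) := by
        rintro rfl
        exact hne (by rw [Sym2.map_pair_eq]; exact Set.mem_insert _ _)
      have h2 : e ≠ s(v, x) := by
        rintro rfl
        exact hne (by rw [Sym2.map_pair_eq]; exact Set.mem_insert_of_mem _ rfl)
      rw [phiMap_other h1 h2]
    · rw [Set.mem_insert_iff, Set.mem_singleton_iff] at h
      rcases h with rfl | rfl
      · exact ⟨s(v, w), hw, phiMap_vw⟩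
      · exact ⟨s(v, x), hx, phiMap_vx hw.ne hxw⟩
  · rintro ⟨e, he, rfl⟩
    by_cases h1 : e = s(v, w)
    · subst h1
      rw [phiMap_vw]
      constructor
      · exact Or.inr (Set.mem_insert _ _)
      · simp
    · by_cases h2 : e = s(v, x)
      · subst h2
        rw [phiMap_vx hw.ne hxw]
        constructor
        · exact Or.inr (Set.mem_insert_of_mem _ rfl)
        · simp
      · rw [phiMap_other h1 h2]
        induction e using Sym2.ind with
        | _ a b =>
          rw [SimpleGraph.mem_edgeSet] at he
          constructor
          · refine Or.inl ⟨⟨s(a, b), he, rfl⟩, ?_⟩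
            intro hmem
            rw [Set.mem_insert_iff, Set.mem_singleton_iff, Sym2.map_pair_eq] at hmem
            rcases hmem with hh | hh
            · apply h1
              simp only [Sym2.eq_iff, Sum.inl.injEq] at hh ⊢
              exact hh
            · apply h2
              simp only [Sym2.eq_iff, Sum.inl.injEq] at hh ⊢
              exact hh
          · rw [Sym2.map_pair_eq]
            simp [he.ne]

lemma mem_phiMap_iff {v w x : V} {a : V} (hav : a ≠ v) (e : Sym2 V) :
    a ∈ e ↔ Sum.inl a ∈ phiMap v w x e := by
  unfold phiMap
  split_ifs with h1 h2
  · subst h1; simp [Sym2.mem_iff, hav]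
  · subst h2; simp [Sym2.mem_iff, hav]
  · simp [Sym2.mem_map]

lemma mem_v_phiMap_iff {v w x : V} (e : Sym2 V) :
    v ∈ e ↔ (Sum.inl v ∈ phiMap v w x e ∨ Sum.inr () ∈ phiMap v w x e) := by
  unfold phiMap
  split_ifs with h1 h2
  · subst h1; simp
  · subst h2; simp
  · simp [Sym2.mem_map]

lemma not_both_mem {G : SimpleGraph V} {v w x : V} (hw : G.Adj v w) (hx : G.Adj v x)
    {e : Sym2 V} :
    ¬ (Sum.inl v ∈ phiMap v w x e ∧ Sum.inr () ∈ phiMap v w x e) := by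
  unfold phiMap
  split_ifs with h1 h2
  · simp [hw.ne]
  · simp [hx.ne]
  · rintro ⟨-, hr⟩
    rw [Sym2.mem_map] at hr
    obtain ⟨b, -, hb⟩ := hr
    simp at hb

lemma split_step [Fintype V] (G : SimpleGraph V) (v w x : V)
    (hw : G.Adj v w) (hx : G.Adj v x) (hxw : x ≠ w) (k : ℕ)
    (f : Sym2 (V ⊕ Unit) → ℤ)
    (hf : IsSignedSubmatching (splitGraph G v w x) f (k + 1)) :
    ∃ g : Sym2 V → ℤ, IsSignedSubmatching G g k ∧
      edgeSum G g = edgeSum (splitGraph G v w x) f := by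
  classical
  set G' := splitGraph G v w x with hG'
  have hinj : Function.Injective (phiMap v w x) := phiMap_injective hw.ne hx.ne hxw
  have himg : G'.edgeSet = phiMap v w x '' G.edgeSet := splitGraph_edgeSet hw hx hxw
  set g : Sym2 V → ℤ := fun e => f (phiMap v w x e) with hg
  -- vertexSum for a ≠ v
  have hvsum : ∀ a : V, a ≠ v → vertexSum G g a = vertexSum G' f (Sum.inl a) := by
    intro a hav
    have hset : phiMap v w x '' {e ∈ G.edgeSet | a ∈ e} = {e ∈ G'.edgeSet | Sum.inl a ∈ e} := by
      ext e'
      constructor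
      · rintro ⟨e, ⟨he, hae⟩, rfl⟩
        exact ⟨himg ▸ ⟨e, he, rfl⟩, (mem_phiMap_iff hav e).mp hae⟩
      · rintro ⟨he', ha'⟩
        rw [himg] at he'
        obtain ⟨e, he, rfl⟩ := he'
        exact ⟨e, ⟨he, (mem_phiMap_iff hav e).mpr ha'⟩, rfl⟩
    rw [vertexSum, vertexSum, ← hset, finsum_mem_image hinj.injOn]
  -- vertexSum at v
  have hvsplit : phiMap v w x '' {e ∈ G.edgeSet | v ∈ e} =
      {e ∈ G'.edgeSet | Sum.inl v ∈ e} ∪ {e ∈ G'.edgeSet | Sum.inr () ∈ e} := by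
    ext e'
    constructor
    · rintro ⟨e, ⟨he, hae⟩, rfl⟩
      rcases (mem_v_phiMap_iff (w := w) (x := x) e).mp hae with h | h
      · exact Or.inl ⟨himg ▸ ⟨e, he, rfl⟩, h⟩
      · exact Or.inr ⟨himg ▸ ⟨e, he, rfl⟩, h⟩
    · rintro (⟨he', ha'⟩ | ⟨he', ha'⟩) <;>
      · rw [himg] at he'
        obtain ⟨e, he, rfl⟩ := he'
        exact ⟨e, ⟨he, (mem_v_phiMap_iff e).mpr (by tauto)⟩, rfl⟩
  have hdisj : Disjoint {e ∈ G'.edgeSet | Sum.inl v ∈ e} {e ∈ G'.edgeSet | Sum.inr () ∈ e} := by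
    rw [Set.disjoint_left]
    rintro e' ⟨he', h1⟩ ⟨-, h2⟩
    rw [himg] at he'
    obtain ⟨e, he, rfl⟩ := he'
    exact not_both_mem hw hx ⟨h1, h2⟩
  have hvv : vertexSum G g v = vertexSum G' f (Sum.inl v) + vertexSum G' f (Sum.inr ()) := by
    rw [vertexSum, vertexSum, vertexSum, ← finsum_mem_union hdisj (Set.toFinite _)
      (Set.toFinite _), ← hvsplit, finsum_mem_image hinj.injOn]
  -- vertexSum of G' at the new vertex
  have e1mem : s(Sum.inr (), Sum.inl w) ∈ G'.edgeSet := himg ▸ ⟨s(v, w), hw, phiMap_vw⟩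
  have e2mem : s(Sum.inr (), Sum.inl x) ∈ G'.edgeSet :=
    himg ▸ ⟨s(v, x), hx, phiMap_vx hw.ne hxw⟩
  have hrset : {e ∈ G'.edgeSet | Sum.inr () ∈ e} =
      {s(Sum.inr (), Sum.inl w), s(Sum.inr (), Sum.inl x)} := by
    ext e'
    constructor
    · rintro ⟨he', hr⟩
      rw [himg] at he'
      obtain ⟨e, he, rfl⟩ := he'
      by_cases h1 : e = s(v, w)
      · subst h1; rw [phiMap_vw]; exact Set.mem_insert _ _
      by_cases h2 : e = s(v, x)
      · subst h2; rw [phiMap_vx hw.ne hxw]; exact Set.mem_insert_of_mem _ rfl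
      · rw [phiMap_other h1 h2, Sym2.mem_map] at hr
        obtain ⟨b, -, hb⟩ := hr
        simp at hb
    · rintro (rfl | rfl)
      · exact ⟨e1mem, by simp⟩
      · exact ⟨e2mem, by simp⟩
  have hrne : s(Sum.inr (), Sum.inl w) ≠ s(Sum.inr (), Sum.inl x) := by
    simp [Sym2.eq_iff, Ne.symm hxw]
  have hrsum : vertexSum G' f (Sum.inr ()) =
      f s(Sum.inr (), Sum.inl w) + f s(Sum.inr (), Sum.inl x) := by
    rw [vertexSum, hrset, finsum_mem_pair hrne]
  have hrle : vertexSum G' f (Sum.inr ()) ≤ 1 → vertexSum G' f (Sum.inr ()) ≤ 0 := by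
    intro hle
    rw [hrsum] at hle ⊢
    rcases hf.1 _ e1mem with h1 | h1 <;> rcases hf.1 _ e2mem with h2 | h2 <;>
      rw [h1, h2] at hle ⊢ <;> omega
  refine ⟨g, ⟨?_, ?_⟩, ?_⟩
  · intro e he
    exact hf.1 _ (himg ▸ ⟨e, he, rfl⟩)
  · -- counting good vertices
    have hS' := hf.2
    set S' : Set (V ⊕ Unit) := {a | vertexSum G' f a ≤ 1} with hS'def
    set S : Set V := {b | vertexSum G g b ≤ 1} with hSdef
    by_cases hr : vertexSum G' f (Sum.inr ()) ≤ 1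
    · set T : Set V := {a | Sum.inl a ∈ S'} with hTdef
      have hTS : T ⊆ S := by
        intro a ha
        by_cases hav : a = v
        · have h1 : vertexSum G' f (Sum.inl a) ≤ 1 := ha
          have h0 := hrle hr
          show vertexSum G g a ≤ 1
          rw [hav] at h1 ⊢
          rw [hvv]
          omega
        · have h1 : vertexSum G' f (Sum.inl a) ≤ 1 := ha
          show vertexSum G g a ≤ 1
          rw [hvsum a hav]
          exact h1
      have hsub : S' ⊆ insert (Sum.inr ()) (Sum.inl '' T) := by
        rintro (a | u) ha
        · exact Set.mem_insert_of_mem _ ⟨a, ha, rfl⟩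
        · cases u; exact Set.mem_insert _ _
      have hcount : k + 1 ≤ T.ncard + 1 := by
        calc k + 1 ≤ S'.ncard := hS'
          _ ≤ (insert (Sum.inr ()) (Sum.inl '' T)).ncard :=
              Set.ncard_le_ncard hsub (Set.toFinite _)
          _ ≤ (Sum.inl '' T).ncard + 1 := Set.ncard_insert_le _ _
          _ = T.ncard + 1 := by rw [Set.ncard_image_of_injective _ Sum.inl_injective]
      have : T.ncard ≤ S.ncard := Set.ncard_le_ncard hTS (Set.toFinite _)
      omega
    · set T : Set V := {a | a ≠ v ∧ Sum.inl a ∈ S'} with hTdef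
      have hTS : T ⊆ S := by
        rintro a ⟨hav, ha⟩
        have h1 : vertexSum G' f (Sum.inl a) ≤ 1 := ha
        show vertexSum G g a ≤ 1
        rw [hvsum a hav]
        exact h1
      have hsub : S' ⊆ insert (Sum.inl v) (Sum.inl '' T) := by
        rintro (a | u) ha
        · by_cases hav : a = v
          · subst hav; exact Set.mem_insert _ _
          · exact Set.mem_insert_of_mem _ ⟨a, ⟨hav, ha⟩, rfl⟩
        · cases u; exact absurd ha hr
      have hcount : k + 1 ≤ T.ncard + 1 := by
        calc k + 1 ≤ S'.ncard := hS'
          _ ≤ (insert (Sum.inl v) (Sum.inl '' T)).ncard :=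
              Set.ncard_le_ncard hsub (Set.toFinite _)
          _ ≤ (Sum.inl '' T).ncard + 1 := Set.ncard_insert_le _ _
          _ = T.ncard + 1 := by rw [Set.ncard_image_of_injective _ Sum.inl_injective]
      have : T.ncard ≤ S.ncard := Set.ncard_le_ncard hTS (Set.toFinite _)
      omega
  · rw [edgeSum, edgeSum, himg, finsum_mem_image hinj.injOn]

lemma vertexSum_neg_one_le {W : Type*} [Finite W] (H : SimpleGraph W) (a : W) :
    vertexSum H (fun _ => (-1 : ℤ)) a ≤ 1 := by
  rw [vertexSum, finsum_mem_eq_sum _ (Set.toFinite _), Finset.sum_const, nsmul_eq_mul,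
    mul_neg_one]
  omega

theorem betaS_splitGraph [Fintype V] (G : SimpleGraph V) [DecidableRel G.Adj]
    (hconn : G.Connected) (hnt : ¬ G.IsAcyclic)
    (v : V) (c : G.Walk v v) (hc : c.IsCycle) (hdeg : 3 ≤ G.degree v)
    (u w : V) (hu : G.Adj v u) (hw : G.Adj v w)
    (huc : u ∈ c.support) (hwc : w ∈ c.support) (huw : u ≠ w)
    (x : V) (hx : G.Adj v x) (hxu : x ≠ u) (hxw : x ≠ w)
    (k : ℕ) (hk1 : 1 ≤ k) (hk : k ≤ Fintype.card V) :
    betaS (splitGraph G v w x) (k + 1) ≤ betaS G k := by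
  classical
  rw [betaS, betaS]
  have hA : Set.Nonempty {s : ℤ | ∃ f, IsSignedSubmatching (splitGraph G v w x) f (k + 1) ∧
      s = edgeSum (splitGraph G v w x) f} := by
    refine ⟨edgeSum (splitGraph G v w x) (fun _ => -1), fun _ => -1, ⟨?_, ?_⟩, rfl⟩
    · intro e _
      exact Or.inr rfl
    · have huniv : {a : V ⊕ Unit |
          vertexSum (splitGraph G v w x) (fun _ => (-1 : ℤ)) a ≤ 1} = Set.univ := by
        ext a
        simp [vertexSum_neg_one_le]
      rw [huniv, Set.ncard_univ, Nat.card_sum, Nat.card_eq_fintype_card, Nat.card_unique]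
      omega
  have hB : BddAbove {s : ℤ | ∃ f, IsSignedSubmatching G f k ∧ s = edgeSum G f} := by
    refine ⟨(G.edgeFinset.card : ℤ), ?_⟩
    rintro s ⟨g, hg, rfl⟩
    rw [edgeSum, ← SimpleGraph.coe_edgeFinset, finsum_mem_coe_finset]
    calc ∑ e ∈ G.edgeFinset, g e ≤ G.edgeFinset.card • (1 : ℤ) := by
          apply Finset.sum_le_card_nsmul
          intro e he
          rcases hg.1 e (SimpleGraph.mem_edgeFinset.mp he) with h | h <;> omega
      _ = G.edgeFinset.card := by simp
  apply csSup_le hA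
  rintro s ⟨f, hf, rfl⟩
  obtain ⟨g, hg, hsum⟩ := split_step G v w x hw hx hxw k f hf
  rw [← hsum]
  exact le_csSup hB ⟨g, hg, rfl⟩
end

section
/- Let G be a cycle of length n. Then for every positive integer k ≤ n, β_S^k(G) ≥ n − k − 1. -/
open Finset

variable {V : Type*}

namespace CycleAux
variable {p : ℕ}

lemma val_succ (i : Fin (p+3)) :
    ((i+1).val = i.val + 1 ∧ i.val + 1 < p + 3) ∨ ((i+1).val = 0 ∧ i.val + 1 = p + 3) := by
  have h : ((i+1 : Fin (p+3))).val = (i.val + 1) % (p+3) := by simp [Fin.add_def]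
  rcases Nat.lt_or_ge (i.val + 1) (p+3) with h1 | h1
  · exact Or.inl ⟨by rw [h, Nat.mod_eq_of_lt h1], h1⟩
  · have h2 : i.val + 1 = p + 3 := le_antisymm (by omega) h1
    exact Or.inr ⟨by rw [h, h2, Nat.mod_self], h2⟩

lemma phi_inj : Function.Injective (fun i : Fin (p+3) => s(i, i+1)) := by
  intro i j h
  simp only [Sym2.eq_iff] at h
  rcases h with ⟨h1, _⟩ | ⟨h1, h2⟩
  · exact h1
  · exfalso
    have e1 := congrArg Fin.val h1
    have e2 := congrArg Fin.val h2
    rcases val_succ j with ⟨hj, hj'⟩ | ⟨hj, hj'⟩ <;>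
      rcases val_succ i with ⟨hi, hi'⟩ | ⟨hi, hi'⟩ <;> omega

lemma val_one' : ((1 : Fin (p+3))).val = 1 := Fin.val_one (p+1)

lemma adj_iff {u v : Fin (p+3)} :
    (SimpleGraph.cycleGraph (p+3)).Adj u v ↔ u = v + 1 ∨ v = u + 1 := by
  rw [SimpleGraph.cycleGraph_adj']
  constructor
  · rintro (h | h)
    · have h1 : u - v = 1 := Fin.ext (by rw [h, val_one'])
      exact Or.inl (by rw [← h1]; abel)
    · have h1 : v - u = 1 := Fin.ext (by rw [h, val_one'])
      exact Or.inr (by rw [← h1]; abel)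
  · rintro (rfl | rfl)
    · exact Or.inl (by rw [show v + 1 - v = 1 by abel, val_one'])
    · exact Or.inr (by rw [show u + 1 - u = 1 by abel, val_one'])

lemma edgeSet_eq : (SimpleGraph.cycleGraph (p+3)).edgeSet
    = Set.range (fun i : Fin (p+3) => s(i, i+1)) := by
  ext e
  induction e using Sym2.ind with
  | _ u v =>
    rw [SimpleGraph.mem_edgeSet, adj_iff]
    constructor
    · rintro (rfl | rfl)
      · exact ⟨v, by rw [Sym2.eq_iff]; exact Or.inr ⟨rfl, rfl⟩⟩
      · exact ⟨u, rfl⟩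
    · rintro ⟨i, hi⟩
      simp only [Sym2.eq_iff] at hi
      rcases hi with ⟨rfl, rfl⟩ | ⟨rfl, rfl⟩
      · exact Or.inr rfl
      · exact Or.inl rfl

lemma incident_eq (v : Fin (p+3)) :
    {e ∈ (SimpleGraph.cycleGraph (p+3)).edgeSet | v ∈ e} = {s(v-1, v), s(v, v+1)} := by
  ext e
  simp only [Set.mem_setOf_eq, edgeSet_eq, Set.mem_range, Set.mem_insert_iff,
    Set.mem_singleton_iff]
  constructor
  · rintro ⟨⟨i, rfl⟩, hv⟩
    rw [Sym2.mem_iff] at hv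
    rcases hv with rfl | rfl
    · exact Or.inr rfl
    · exact Or.inl (by rw [add_sub_cancel_right])
  · rintro (rfl | rfl)
    · exact ⟨⟨v - 1, by rw [sub_add_cancel]⟩, by simp⟩
    · exact ⟨⟨v, rfl⟩, by simp⟩

lemma pair_ne (v : Fin (p+3)) : s(v-1, v) ≠ s(v, v+1) := by
  intro h
  rw [Sym2.eq_iff] at h
  rcases h with h
  revert h
  rintro (⟨h1, h2⟩ | ⟨h1, h2⟩)
  · have := congrArg Fin.val h2
    rcases val_succ v with ⟨hv, hv'⟩ | ⟨hv, hv'⟩ <;> omega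
  · have h3 : v = v + 1 + 1 := by conv_lhs => rw [← sub_add_cancel v 1, h1]
    have := congrArg Fin.val h3
    rcases val_succ v with ⟨hv, hv'⟩ | ⟨hv, hv'⟩ <;>
      rcases val_succ (v+1) with ⟨hv1, hv1'⟩ | ⟨hv1, hv1'⟩ <;> omega

open Classical in
noncomputable def mySign (p m : ℕ) (e : Sym2 (Fin (p+3))) : ℤ :=
  if ∃ i : Fin (p+3), i.val % 2 = 0 ∧ i.val < 2*m ∧ e = s(i, i+1) then -1 else 1

lemma mySign_mem (m : ℕ) (e : Sym2 (Fin (p+3))) : mySign p m e = 1 ∨ mySign p m e = -1 := by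
  rw [mySign]; split <;> simp

lemma mySign_le_one (m : ℕ) (e : Sym2 (Fin (p+3))) : mySign p m e ≤ 1 := by
  rcases mySign_mem m e with h | h <;> omega

lemma mySign_eq (m : ℕ) (j : Fin (p+3)) :
    mySign p m s(j, j+1) = if j.val % 2 = 0 ∧ j.val < 2*m then -1 else 1 := by
  rw [mySign]
  by_cases h : j.val % 2 = 0 ∧ j.val < 2*m
  · rw [if_pos ⟨j, h.1, h.2, rfl⟩, if_pos h]
  · rw [if_neg ?_, if_neg h]
    rintro ⟨i, h1, h2, h3⟩
    obtain rfl := phi_inj h3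
    exact h ⟨h1, h2⟩

lemma edgeSum_mySign (m : ℕ) :
    (p + 3 : ℤ) - 2*m ≤ edgeSum (SimpleGraph.cycleGraph (p+3)) (mySign p m) := by
  rw [edgeSum, edgeSet_eq]
  have h1 : Set.range (fun i : Fin (p+3) => s(i, i+1))
      = ↑(Finset.image (fun i : Fin (p+3) => s(i, i+1)) univ) := by simp
  rw [h1, finsum_mem_coe_finset, Finset.sum_image (fun a _ b _ h => phi_inj h)]
  have h2 : ∀ i : Fin (p+3), mySign p m s(i, i+1)
      = if i.val % 2 = 0 ∧ i.val < 2*m then (-1 : ℤ) else 1 := fun i => mySign_eq m i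
  rw [Finset.sum_congr rfl (fun i _ => h2 i), Finset.sum_ite, Finset.sum_const, Finset.sum_const]
  have hcard : (univ.filter (fun i : Fin (p+3) => i.val % 2 = 0 ∧ i.val < 2*m)).card ≤ m := by
    refine le_trans (Finset.card_le_card_of_injOn (fun i : Fin (p+3) => i.val / 2)
      (t := Finset.range m) ?_ ?_) (le_of_eq (Finset.card_range m))
    · intro i hi
      simp only [Finset.mem_coe, Finset.mem_filter, Finset.mem_univ, true_and] at hi
      simp only [Finset.mem_coe, Finset.mem_range]
      show i.val / 2 < m
      omega
    · intro i hi j hj hij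
      simp only [Finset.coe_filter, Finset.mem_univ, true_and, Set.mem_setOf_eq] at hi hj
      have hij' : i.val / 2 = j.val / 2 := hij
      exact Fin.val_injective (by omega)
  have hcardc : (univ.filter (fun i : Fin (p+3) => ¬(i.val % 2 = 0 ∧ i.val < 2*m))).card
      = (p + 3) - (univ.filter (fun i : Fin (p+3) => i.val % 2 = 0 ∧ i.val < 2*m)).card := by
    have := Finset.card_filter_add_card_filter_not
      (s := (univ : Finset (Fin (p+3)))) (p := fun i : Fin (p+3) => i.val % 2 = 0 ∧ i.val < 2*m)
    simp only [Finset.card_univ, Fintype.card_fin] at this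
    omega
  rw [hcardc]
  have hT3 : (univ.filter (fun i : Fin (p+3) => i.val % 2 = 0 ∧ i.val < 2*m)).card ≤ p + 3 :=
    le_trans (Finset.card_le_card (Finset.filter_subset _ _)) (by simp)
  simp only [nsmul_eq_mul, mul_one, mul_neg]
  push_cast [Nat.cast_sub hT3]
  have : ((univ.filter (fun i : Fin (p+3) => i.val % 2 = 0 ∧ i.val < 2*m)).card : ℤ) ≤ m := by
    exact_mod_cast hcard
  linarith

lemma vertexSum_mySign (m : ℕ) (v : Fin (p+3)) (hv : v.val < 2*m) :
    vertexSum (SimpleGraph.cycleGraph (p+3)) (mySign p m) v ≤ 1 := by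
  rw [vertexSum, incident_eq, finsum_mem_pair (pair_ne v)]
  rcases Nat.even_or_odd v.val with he | ho
  · have h1 : mySign p m s(v, v+1) = -1 := by
      rw [mySign_eq, if_pos ⟨Nat.even_iff.mp he, hv⟩]
    have := mySign_le_one (p := p) m s(v-1, v)
    omega
  · have hv0 : v.val ≠ 0 := by rcases ho with ⟨t, ht⟩; omega
    have hvv : ((v-1)+1) = v := sub_add_cancel v 1
    have hval : (v-1).val = v.val - 1 := by
      have := val_succ (v - 1)
      rw [hvv] at this
      omega
    have h1 : mySign p m s(v-1, (v-1)+1) = -1 := by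
      rw [mySign_eq, if_pos]
      constructor
      · rw [hval]; rcases ho with ⟨t, ht⟩; omega
      · omega
    rw [hvv] at h1
    have := mySign_le_one (p := p) m s(v, v+1)
    omega

end CycleAux

theorem cycleGraph_betaS_lower_bound (n : ℕ) (hn : 3 ≤ n)
    (k : ℕ) (hk1 : 1 ≤ k) (hk : k ≤ n) :
    (n : ℤ) - k - 1 ≤ betaS (SimpleGraph.cycleGraph n) k := by
  obtain ⟨p, rfl⟩ : ∃ p, n = p + 3 := ⟨n - 3, by omega⟩
  set m := (k+1)/2 with hm
  have hsub : IsSignedSubmatching (SimpleGraph.cycleGraph (p+3)) (CycleAux.mySign p m) k := by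
    constructor
    · exact fun e _ => CycleAux.mySign_mem m e
    · have hsubset : {v : Fin (p+3) | v.val < 2*m}
          ⊆ {v | vertexSum (SimpleGraph.cycleGraph (p+3)) (CycleAux.mySign p m) v ≤ 1} :=
        fun v hv => CycleAux.vertexSum_mySign m v hv
      have h0 : k ≤ {v : Fin (p+3) | v.val < 2*m}.ncard := by
        have heq : {v : Fin (p+3) | v.val < 2*m}
            = ↑(univ.filter fun v : Fin (p+3) => v.val < 2*m) := by
          ext v; simp
        rw [heq, Set.ncard_coe_finset]
        have hk2m : k ≤ 2*m := by rw [hm]; omega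
        refine le_trans (le_of_eq (Finset.card_range k).symm) ?_
        apply Finset.card_le_card_of_injOn
          (fun j => (⟨j % (p+3), Nat.mod_lt j (by omega)⟩ : Fin (p+3)))
        · intro j hj
          simp only [Finset.mem_coe, Finset.mem_range] at hj
          simp only [Finset.mem_coe, Finset.mem_filter, Finset.mem_univ, true_and]
          show (j % (p+3)) < 2*m
          have : j % (p+3) = j := Nat.mod_eq_of_lt (by omega)
          omega
        · intro a ha b hb hab
          have ha' : a < k := Finset.mem_range.mp (Finset.mem_coe.mp ha)
          have hb' : b < k := Finset.mem_range.mp (Finset.mem_coe.mp hb)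
          have h1 : a % (p+3) = b % (p+3) := congrArg Fin.val hab
          have h2 : a % (p+3) = a := Nat.mod_eq_of_lt (by omega)
          have h3 : b % (p+3) = b := Nat.mod_eq_of_lt (by omega)
          omega
      exact le_trans h0 (Set.ncard_le_ncard hsubset (Set.toFinite _))
  have hbdd : BddAbove {s : ℤ | ∃ f, IsSignedSubmatching (SimpleGraph.cycleGraph (p+3)) f k
      ∧ s = edgeSum (SimpleGraph.cycleGraph (p+3)) f} := by
    refine ⟨(Fintype.card (Sym2 (Fin (p+3))) : ℤ), ?_⟩
    rintro s ⟨g, hg, rfl⟩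
    rw [edgeSum]
    have hfin : (SimpleGraph.cycleGraph (p+3)).edgeSet
        = ↑(SimpleGraph.cycleGraph (p+3)).edgeSet.toFinset := by simp
    rw [hfin, finsum_mem_coe_finset]
    calc ∑ e ∈ (SimpleGraph.cycleGraph (p+3)).edgeSet.toFinset, g e
        ≤ ∑ _e ∈ (SimpleGraph.cycleGraph (p+3)).edgeSet.toFinset, (1 : ℤ) := by
          apply Finset.sum_le_sum
          intro e he
          rcases hg.1 e (by simpa using he) with h | h <;> omega
      _ = ((SimpleGraph.cycleGraph (p+3)).edgeSet.toFinset.card : ℤ) := by simp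
      _ ≤ _ := by exact_mod_cast Finset.card_le_univ _
  have hle := le_csSup hbdd
    (Set.mem_setOf_eq ▸ ⟨CycleAux.mySign p m, hsub, rfl⟩ :
      edgeSum (SimpleGraph.cycleGraph (p+3)) (CycleAux.mySign p m)
        ∈ {s : ℤ | ∃ f, IsSignedSubmatching (SimpleGraph.cycleGraph (p+3)) f k
            ∧ s = edgeSum (SimpleGraph.cycleGraph (p+3)) f})
  have hge := CycleAux.edgeSum_mySign (p := p) m
  rw [betaS]
  have h2m : 2*m ≤ k + 1 := by rw [hm]; omega
  have h2m' : (2*m : ℤ) ≤ (k : ℤ) + 1 := by exact_mod_cast h2m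
  push_cast
  push_cast at hge
  linarith
end

section
/- Let T be a tree of order n ≥ 2. Then for every positive integer k ≤ n, β_S^k(T) ≥ n − k − 1. -/
open Finset

variable {V : Type*}

lemma greedy_aux (n : ℕ) (PAR : ℕ → ℕ)
    (hPAR : ∀ i, i < n - 1 → i < PAR i ∧ PAR i < n) :
    ∀ t, t ≤ n → ∃ g : ℕ → ℤ,
      (∀ i, i < n - 1 → g i = 1 ∨ g i = -1) ∧
      (∀ i, t ≤ i → i < n - 1 → g i = 1) ∧
      (∀ j, j < t →
        (∑ i ∈ (range (n-1)).filter (fun i => PAR i = j), g i)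
          + (if j < n - 1 then g j else 0) ≤ 1) ∧
      2 * ((range (n-1)).filter (fun i => g i = -1)).card
        + ((range (n-1)).filter (fun i => g i = 1 ∧ i < t ∧ t ≤ PAR i)).card ≤ t := by
  classical
  intro t
  induction t with
  | zero =>
    intro _
    refine ⟨fun _ => 1, fun _ _ => Or.inl rfl, fun _ _ _ => rfl, fun j hj => by omega, ?_⟩
    have h1 : (range (n-1)).filter (fun i => (1:ℤ) = -1) = ∅ := by
      apply filter_false_of_mem; intro i _; norm_num
    have h2 : (range (n-1)).filter (fun i => (1:ℤ) = 1 ∧ i < 0 ∧ 0 ≤ PAR i) = ∅ := by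
      apply filter_false_of_mem; intro i _; omega
    rw [h1, h2]; simp
  | succ t ih =>
    intro htn
    obtain ⟨g, H1, H3, H2, H4⟩ := ih (by omega)
    set C := (range (n-1)).filter (fun i => PAR i = t) with hC
    have hClt : ∀ i ∈ C, i < t ∧ i < n - 1 := by
      intro i hi
      rw [hC, mem_filter, mem_range] at hi
      have := (hPAR i hi.1).1
      omega
    set A := C.filter (fun i => g i = 1) with hA
    set B := C.filter (fun i => g i = -1) with hB
    have hBiff : ∀ i ∈ C, (g i = -1 ↔ ¬ g i = 1) := by
      intro i hi
      rcases H1 i (hClt i hi).2 with h | h <;> simp [h]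
    have hcard : A.card + B.card = C.card := by
      rw [hA, hB]
      rw [filter_congr (p := fun i => g i = -1) (q := fun i => ¬ g i = 1) (by
        intro i hi; exact hBiff i hi)]
      exact card_filter_add_card_filter_not _
    have hAC : A ⊆ C := filter_subset _ _
    have hBC : B ⊆ C := filter_subset _ _
    have hsumC : ∑ i ∈ C, g i = (A.card : ℤ) - B.card := by
      have hsplit : ∑ i ∈ C, g i = ∑ i ∈ A, g i + ∑ i ∈ B, g i := by
        rw [hA, hB]
        rw [filter_congr (p := fun i => g i = -1) (q := fun i => ¬ g i = 1) (by
          intro i hi; exact hBiff i hi)]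
        exact (sum_filter_add_sum_filter_not _ _ _).symm
      have hsA : ∑ i ∈ A, g i = (A.card : ℤ) := by
        rw [sum_congr rfl (fun i hi => (mem_filter.mp hi).2)]; simp; rfl
      have hsB : ∑ i ∈ B, g i = -(B.card : ℤ) := by
        rw [sum_congr rfl (fun i hi => (mem_filter.mp hi).2)]; simp; rfl
      rw [hsplit, hsA, hsB]; ring
    set P := (range (n-1)).filter (fun i => g i = 1 ∧ i < t ∧ t ≤ PAR i) with hP
    have hAP : A ⊆ P := by
      intro i hi
      have hiC := hAC hi
      have h1 := (mem_filter.mp hi).2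
      have hco := hClt i hiC
      have hPARi : PAR i = t := (mem_filter.mp hiC).2
      rw [hP, mem_filter, mem_range]
      exact ⟨hco.2, h1, hco.1, by omega⟩
    by_cases hroot : t < n - 1
    · by_cases hflip : B.card < A.card
      · -- non-root, flip case
        set s := (A.card - B.card - 1)/2 with hs
        have hdm := Nat.div_add_mod (A.card - B.card - 1) 2
        have hmod := Nat.mod_lt (A.card - B.card - 1) (show 0 < 2 by norm_num)
        have hsA : s ≤ A.card := by omega
        obtain ⟨F, hFA, hFcard⟩ := Finset.exists_subset_card_eq hsA
        have hgt : g t = 1 := H3 t le_rfl hroot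
        have hFmem : ∀ i ∈ F, i ∈ C ∧ g i = 1 := fun i hi => mem_filter.mp (hFA hi)
        have hFC : F ⊆ C := fun i hi => (hFmem i hi).1
        have hFlt : ∀ i ∈ F, i < t := fun i hi => (hClt i (hFC hi)).1
        have hFt : t ∉ F := fun h => absurd (hFlt t h) (lt_irrefl t)
        set g' : ℕ → ℤ := fun i => if i ∈ F ∨ i = t then -1 else g i with hg'
        have hg'pm : ∀ i, i < n - 1 → g' i = 1 ∨ g' i = -1 := by
          intro i hi; rw [hg']; dsimp only; split
          · exact Or.inr rfl
          · exact H1 i hi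
        have hg'mono : ∀ i, i < n - 1 → g' i ≤ g i := by
          intro i hi; rw [hg']; dsimp only; split
          · rcases H1 i hi with h | h <;> omega
          · exact le_rfl
        have hg'F : ∀ i ∈ F, g' i = -1 := by
          intro i hi; rw [hg']; simp [hi]
        have hg't : g' t = -1 := by rw [hg']; simp
        have hg'eq : ∀ i, i ∉ F → i ≠ t → g' i = g i := by
          intro i h1 h2; rw [hg']; simp [h1, h2]
        refine ⟨g', hg'pm, ?_, ?_, ?_⟩
        · intro i hi hi2
          rw [hg'eq i (fun h => by have := hFlt i h; omega) (by omega)]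
          exact H3 i (by omega) hi2
        · intro j hj
          rcases Nat.lt_succ_iff_lt_or_eq.mp hj with hjt | rfl
          · have h2 := H2 j hjt
            have hsum : ∑ i ∈ (range (n-1)).filter (fun i => PAR i = j), g' i
                ≤ ∑ i ∈ (range (n-1)).filter (fun i => PAR i = j), g i :=
              Finset.sum_le_sum (fun i hi => hg'mono i (mem_range.mp (mem_filter.mp hi).1))
            have hif : (if j < n - 1 then g' j else 0) ≤ (if j < n - 1 then g j else 0) := by
              split
              · exact hg'mono j ‹_›
              · exact le_rfl
            linarith
          · -- j = t
            have hsC' : ∑ i ∈ C, g' i = (A.card : ℤ) - B.card - 2 * s := by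
              have hsplit : ∑ i ∈ C, g' i = ∑ i ∈ C \ F, g' i + ∑ i ∈ F, g' i :=
                (sum_sdiff hFC).symm
              have hsumC2 : ∑ i ∈ C \ F, g i + ∑ i ∈ F, g i = (A.card : ℤ) - B.card := by
                rw [sum_sdiff hFC]; exact hsumC
              have h1 : ∑ i ∈ C \ F, g' i = ∑ i ∈ C \ F, g i :=
                sum_congr rfl (fun i hi => hg'eq i (mem_sdiff.mp hi).2
                  (by have := (hClt i (mem_sdiff.mp hi).1).1; omega))
              have h2 : ∑ i ∈ F, g' i = -(s : ℤ) := by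
                rw [sum_congr rfl (fun i hi => hg'F i hi)]; simp [hFcard]
              have h3 : ∑ i ∈ F, g i = (s : ℤ) := by
                rw [sum_congr rfl (fun i hi => (hFmem i hi).2)]; simp [hFcard]
              rw [hsplit, h1, h2]
              rw [h3] at hsumC2
              linarith
            rw [← hC, hsC', if_pos hroot, hg't]
            have : (A.card : ℤ) - B.card ≤ 2 * s + 2 := by
              push_cast
              omega
            linarith
        · -- potential
          have hmset : (range (n-1)).filter (fun i => g' i = -1)
              = (((range (n-1)).filter (fun i => g i = -1)) ∪ F) ∪ {t} := by
            ext i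
            simp only [mem_union, mem_filter, mem_singleton]
            constructor
            · rintro ⟨hir, hival⟩
              by_cases hF : i ∈ F ∨ i = t
              · rcases hF with h | h
                · exact Or.inl (Or.inr h)
                · exact Or.inr h
              · push_neg at hF
                rw [hg'eq i hF.1 hF.2] at hival
                exact Or.inl (Or.inl ⟨hir, hival⟩)
            · rintro ((⟨hir, hival⟩ | hF) | rfl)
              · refine ⟨hir, ?_⟩
                have hiF : i ∉ F := fun h => by rw [(hFmem i h).2] at hival; norm_num at hival
                have hit : i ≠ t := fun h => by rw [h, hgt] at hival; norm_num at hival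
                rw [hg'eq i hiF hit]; exact hival
              · exact ⟨mem_range.mpr (hClt i (hFC hF)).2, hg'F i hF⟩
              · exact ⟨mem_range.mpr hroot, hg't⟩
          have hd1 : Disjoint ((range (n-1)).filter (fun i => g i = -1)) F := by
            rw [disjoint_right]
            intro i hiF hio
            have h1 := (hFmem i hiF).2
            have h2 := (mem_filter.mp hio).2
            rw [h1] at h2
            norm_num at h2
          have hd2 : Disjoint (((range (n-1)).filter (fun i => g i = -1)) ∪ F) {t} := by
            rw [disjoint_right]
            intro i hi hio
            rw [mem_singleton] at hi; subst hi
            rcases mem_union.mp hio with h | h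
            · have h2 := (mem_filter.mp h).2
              rw [hgt] at h2
              norm_num at h2
            · exact hFt h
          have hmcard : ((range (n-1)).filter (fun i => g' i = -1)).card
              = ((range (n-1)).filter (fun i => g i = -1)).card + s + 1 := by
            rw [hmset, card_union_of_disjoint hd2, card_union_of_disjoint hd1, hFcard,
              card_singleton]
          set P' := (range (n-1)).filter (fun i => g' i = 1 ∧ i < t + 1 ∧ t + 1 ≤ PAR i) with hP'
          have hP'P : P' ⊆ P := by
            intro i hi
            rw [hP', mem_filter] at hi
            obtain ⟨hir, hval, hlt, hpar⟩ := hi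
            have hiF : i ∉ F := fun h => by rw [hg'F i h] at hval; norm_num at hval
            have hit : i ≠ t := fun h => by rw [h, hg't] at hval; norm_num at hval
            rw [hg'eq i hiF hit] at hval
            rw [hP, mem_filter]
            exact ⟨hir, hval, by omega, by omega⟩
          have hdPA : Disjoint P' A := by
            rw [disjoint_right]
            intro i hiA hiP
            have h1 : PAR i = t := (mem_filter.mp (hAC hiA)).2
            have h2 := (mem_filter.mp hiP).2.2.2
            omega
          have hcards : P'.card + A.card ≤ P.card := by
            rw [← card_union_of_disjoint hdPA]
            exact card_le_card (union_subset hP'P hAP)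
          have h2s : 2 * s + 1 ≤ A.card := by omega
          rw [hmcard]
          omega
      · -- non-root, no flip
        push_neg at hflip
        refine ⟨g, H1, fun i hi hi2 => H3 i (by omega) hi2, ?_, ?_⟩
        · intro j hj
          rcases Nat.lt_succ_iff_lt_or_eq.mp hj with hjt | rfl
          · exact H2 j hjt
          · rw [← hC, hsumC, if_pos hroot, H3 j le_rfl hroot]
            have : (A.card : ℤ) ≤ B.card := by exact_mod_cast hflip
            linarith
        · set P' := (range (n-1)).filter (fun i => g i = 1 ∧ i < t + 1 ∧ t + 1 ≤ PAR i) with hP'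
          have hP'P : P' ⊆ insert t P := by
            intro i hi
            rw [hP', mem_filter] at hi
            obtain ⟨hir, hval, hlt, hpar⟩ := hi
            rcases Nat.lt_succ_iff_lt_or_eq.mp hlt with h | rfl
            · refine mem_insert_of_mem (mem_filter.mpr ⟨hir, hval, h, ?_⟩)
              omega
            · exact mem_insert_self _ _
          have := card_le_card hP'P
          have := card_insert_le t P
          omega
    · -- root case: ¬ (t < n - 1)
      push_neg at hroot
      by_cases hflip : B.card < A.card
      · set s := (A.card - B.card)/2 with hs
        have hdm := Nat.div_add_mod (A.card - B.card) 2
        have hmod := Nat.mod_lt (A.card - B.card) (show 0 < 2 by norm_num)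
        have hsA : s ≤ A.card := by omega
        obtain ⟨F, hFA, hFcard⟩ := Finset.exists_subset_card_eq hsA
        have hFmem : ∀ i ∈ F, i ∈ C ∧ g i = 1 := fun i hi => mem_filter.mp (hFA hi)
        have hFC : F ⊆ C := fun i hi => (hFmem i hi).1
        have hFlt : ∀ i ∈ F, i < t := fun i hi => (hClt i (hFC hi)).1
        set g' : ℕ → ℤ := fun i => if i ∈ F then -1 else g i with hg'
        have hg'pm : ∀ i, i < n - 1 → g' i = 1 ∨ g' i = -1 := by
          intro i hi; rw [hg']; dsimp only; split
          · exact Or.inr rfl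
          · exact H1 i hi
        have hg'mono : ∀ i, i < n - 1 → g' i ≤ g i := by
          intro i hi; rw [hg']; dsimp only; split
          · rcases H1 i hi with h | h <;> omega
          · exact le_rfl
        have hg'F : ∀ i ∈ F, g' i = -1 := by
          intro i hi; rw [hg']; simp [hi]
        have hg'eq : ∀ i, i ∉ F → g' i = g i := by
          intro i h1; rw [hg']; simp [h1]
        refine ⟨g', hg'pm, ?_, ?_, ?_⟩
        · intro i hi hi2; omega
        · intro j hj
          rcases Nat.lt_succ_iff_lt_or_eq.mp hj with hjt | rfl
          · have h2 := H2 j hjt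
            have hsum : ∑ i ∈ (range (n-1)).filter (fun i => PAR i = j), g' i
                ≤ ∑ i ∈ (range (n-1)).filter (fun i => PAR i = j), g i :=
              Finset.sum_le_sum (fun i hi => hg'mono i (mem_range.mp (mem_filter.mp hi).1))
            have hif : (if j < n - 1 then g' j else 0) ≤ (if j < n - 1 then g j else 0) := by
              split
              · exact hg'mono j ‹_›
              · exact le_rfl
            linarith
          · have hsC' : ∑ i ∈ C, g' i = (A.card : ℤ) - B.card - 2 * s := by
              have hsplit : ∑ i ∈ C, g' i = ∑ i ∈ C \ F, g' i + ∑ i ∈ F, g' i :=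
                (sum_sdiff hFC).symm
              have hsumC2 : ∑ i ∈ C \ F, g i + ∑ i ∈ F, g i = (A.card : ℤ) - B.card := by
                rw [sum_sdiff hFC]; exact hsumC
              have h1 : ∑ i ∈ C \ F, g' i = ∑ i ∈ C \ F, g i :=
                sum_congr rfl (fun i hi => hg'eq i (mem_sdiff.mp hi).2)
              have h2 : ∑ i ∈ F, g' i = -(s : ℤ) := by
                rw [sum_congr rfl (fun i hi => hg'F i hi)]; simp [hFcard]
              have h3 : ∑ i ∈ F, g i = (s : ℤ) := by
                rw [sum_congr rfl (fun i hi => (hFmem i hi).2)]; simp [hFcard]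
              rw [hsplit, h1, h2]
              rw [h3] at hsumC2
              linarith
            rw [← hC, hsC', if_neg (by omega)]
            have : (A.card : ℤ) - B.card ≤ 2 * s + 1 := by
              push_cast
              omega
            linarith
        · have hmset : (range (n-1)).filter (fun i => g' i = -1)
              = ((range (n-1)).filter (fun i => g i = -1)) ∪ F := by
            ext i
            simp only [mem_union, mem_filter]
            constructor
            · rintro ⟨hir, hival⟩
              by_cases hF : i ∈ F
              · exact Or.inr hF
              · rw [hg'eq i hF] at hival
                exact Or.inl ⟨hir, hival⟩
            · rintro (⟨hir, hival⟩ | hF)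
              · refine ⟨hir, ?_⟩
                have hiF : i ∉ F := fun h => by rw [(hFmem i h).2] at hival; norm_num at hival
                rw [hg'eq i hiF]; exact hival
              · exact ⟨mem_range.mpr (hClt i (hFC hF)).2, hg'F i hF⟩
          have hd1 : Disjoint ((range (n-1)).filter (fun i => g i = -1)) F := by
            rw [disjoint_right]
            intro i hiF hio
            have h1 := (hFmem i hiF).2
            have h2 := (mem_filter.mp hio).2
            rw [h1] at h2
            norm_num at h2
          have hmcard : ((range (n-1)).filter (fun i => g' i = -1)).card
              = ((range (n-1)).filter (fun i => g i = -1)).card + s := by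
            rw [hmset, card_union_of_disjoint hd1, hFcard]
          set P' := (range (n-1)).filter (fun i => g' i = 1 ∧ i < t + 1 ∧ t + 1 ≤ PAR i) with hP'
          have hP'P : P' ⊆ P := by
            intro i hi
            rw [hP', mem_filter] at hi
            obtain ⟨hir, hval, hlt, hpar⟩ := hi
            have hiF : i ∉ F := fun h => by rw [hg'F i h] at hval; norm_num at hval
            rw [hg'eq i hiF] at hval
            have hin : i < n - 1 := mem_range.mp hir
            rw [hP, mem_filter]
            exact ⟨hir, hval, by omega, by omega⟩
          have hdPA : Disjoint P' A := by
            rw [disjoint_right]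
            intro i hiA hiP
            have h1 : PAR i = t := (mem_filter.mp (hAC hiA)).2
            have h2 := (mem_filter.mp hiP).2.2.2
            omega
          have hcards : P'.card + A.card ≤ P.card := by
            rw [← card_union_of_disjoint hdPA]
            exact card_le_card (union_subset hP'P hAP)
          have h2s : 2 * s ≤ A.card := by omega
          rw [hmcard]
          omega
      · push_neg at hflip
        refine ⟨g, H1, fun i hi hi2 => by omega, ?_, ?_⟩
        · intro j hj
          rcases Nat.lt_succ_iff_lt_or_eq.mp hj with hjt | rfl
          · exact H2 j hjt
          · rw [← hC, hsumC, if_neg (by omega)]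
            have : (A.card : ℤ) ≤ B.card := by exact_mod_cast hflip
            linarith
        · set P' := (range (n-1)).filter (fun i => g i = 1 ∧ i < t + 1 ∧ t + 1 ≤ PAR i) with hP'
          have hP'P : P' ⊆ P := by
            intro i hi
            rw [hP', mem_filter] at hi
            obtain ⟨hir, hval, hlt, hpar⟩ := hi
            have hin : i < n - 1 := mem_range.mp hir
            rw [hP, mem_filter]
            exact ⟨hir, hval, by omega, by omega⟩
          have := card_le_card hP'P
          omega

lemma greedyA (n k : ℕ) (hk : k ≤ n) (PAR : ℕ → ℕ)
    (hPAR : ∀ i, i < n - 1 → i < PAR i ∧ PAR i < n) :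
    ∃ g : ℕ → ℤ,
      (∀ i, i < n - 1 → g i = 1 ∨ g i = -1) ∧
      (∀ j, j < k →
        (∑ i ∈ (range (n-1)).filter (fun i => PAR i = j), g i)
          + (if j < n - 1 then g j else 0) ≤ 1) ∧
      (n : ℤ) - 1 - k ≤ ∑ i ∈ range (n-1), g i := by
  classical
  obtain ⟨g, H1, _, H2, H4⟩ := greedy_aux n PAR hPAR k hk
  refine ⟨g, H1, H2, ?_⟩
  set M := (range (n-1)).filter (fun i => g i = -1) with hM
  have hsplit : ∑ i ∈ range (n-1), g i
      = ∑ i ∈ M, g i + ∑ i ∈ (range (n-1)).filter (fun i => ¬ g i = -1), g i := by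
    rw [hM]
    exact (sum_filter_add_sum_filter_not (range (n-1)) (fun i => g i = -1) g).symm
  have h1 : ∑ i ∈ (range (n-1)).filter (fun i => ¬ g i = -1), g i
      = (((range (n-1)).filter (fun i => ¬ g i = -1)).card : ℤ) := by
    have hone : ∀ i ∈ (range (n-1)).filter (fun i => ¬ g i = -1), g i = 1 := by
      intro i hi
      have hm := mem_filter.mp hi
      rcases H1 i (mem_range.mp hm.1) with h | h
      · exact h
      · exact absurd h hm.2
    rw [sum_congr rfl hone]
    simp
  have h2 : ∑ i ∈ M, g i = -(M.card : ℤ) := by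
    rw [sum_congr rfl (fun i hi => (mem_filter.mp hi).2)]
    simp; rfl
  have hcards : M.card + ((range (n-1)).filter (fun i => ¬ g i = -1)).card = n - 1 := by
    rw [hM, card_filter_add_card_filter_not (p := fun i => g i = -1), card_range]
  have hH4 : 2 * M.card ≤ k := by omega
  rw [hsplit, h1, h2]
  omega
lemma tree_adj_dist {G : SimpleGraph V} (hT : G.IsTree) (r : V) {u w : V} (h : G.Adj u w) :
    G.dist w r + 1 = G.dist u r ∨ G.dist u r + 1 = G.dist w r := by
  classical
  have hconn := hT.isConnected
  have hle1 : G.dist u r ≤ G.dist w r + 1 := by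
    obtain ⟨p, hl⟩ := (hconn w r).exists_walk_length_eq_dist
    have := SimpleGraph.dist_le (SimpleGraph.Walk.cons h p)
    simpa [hl] using this
  have hle2 : G.dist w r ≤ G.dist u r + 1 := by
    obtain ⟨p, hl⟩ := (hconn u r).exists_walk_length_eq_dist
    have := SimpleGraph.dist_le (SimpleGraph.Walk.cons h.symm p)
    simpa [hl] using this
  have hne : G.dist u r ≠ G.dist w r := by
    intro heq
    have hne' : u ≠ w := h.ne
    obtain ⟨pu, hpu, hlu⟩ := (hconn u r).exists_path_of_dist
    obtain ⟨pw, hpw, hlw⟩ := (hconn w r).exists_path_of_dist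
    have huw : u ∉ pw.support := by
      intro hmem
      have hdrop := SimpleGraph.dist_le (pw.dropUntil u hmem)
      have htake : (pw.takeUntil u hmem).length ≠ 0 := by
        intro h0
        exact hne' (SimpleGraph.Walk.eq_of_length_eq_zero h0).symm
      have hsum : (pw.takeUntil u hmem).length + (pw.dropUntil u hmem).length = pw.length := by
        have h2 := congrArg SimpleGraph.Walk.length (pw.take_spec hmem)
        rw [SimpleGraph.Walk.length_append] at h2
        exact h2
      have hpos : 0 < G.dist u r := by
        rw [heq]
        have : G.dist w r ≠ 0 ∨ True := Or.inr trivial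
        omega
      omega
    have hcons : (SimpleGraph.Walk.cons h pw).IsPath := hpw.cons huw
    have := (hT.existsUnique_path u r).unique hpu hcons
    have hlen := congrArg SimpleGraph.Walk.length this
    rw [hlu] at hlen
    simp [SimpleGraph.Walk.length_cons, hlw, heq] at hlen
  omega

lemma tree_parent_exists {G : SimpleGraph V} (hT : G.IsTree) (r : V) {v : V} (hv : v ≠ r) :
    ∃ w, G.Adj v w ∧ G.dist w r + 1 = G.dist v r := by
  classical
  have hconn := hT.isConnected
  have hd0 : G.dist v r ≠ 0 := by
    rw [SimpleGraph.dist_ne_zero_iff_ne_and_reachable]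
    exact ⟨hv, hconn v r⟩
  obtain ⟨p, hl⟩ := (hconn v r).exists_walk_length_eq_dist
  cases p with
  | nil => simp at hd0
  | @cons _ w _ h q =>
    refine ⟨w, h, ?_⟩
    have h1 : G.dist w r ≤ q.length := SimpleGraph.dist_le q
    have h2 : G.dist v r ≤ G.dist w r + 1 := by
      obtain ⟨p', hl'⟩ := (hconn w r).exists_walk_length_eq_dist
      have := SimpleGraph.dist_le (SimpleGraph.Walk.cons h p')
      simpa [hl'] using this
    simp [SimpleGraph.Walk.length_cons] at hl
    omega

lemma tree_parent_unique {G : SimpleGraph V} [Fintype V] (hT : G.IsTree) (r : V) {v w1 w2 : V}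
    (h1 : G.Adj v w1) (hd1 : G.dist w1 r + 1 = G.dist v r)
    (h2 : G.Adj v w2) (hd2 : G.dist w2 r + 1 = G.dist v r) : w1 = w2 := by
  classical
  have hconn := hT.isConnected
  have key : ∀ (w : V), G.Adj v w → G.dist w r + 1 = G.dist v r →
      ∃ (q : G.Walk w r), q.IsPath ∧ q.length = G.dist w r ∧ v ∉ q.support := by
    intro w hw hdw
    obtain ⟨q, hq, hlq⟩ := (hconn w r).exists_path_of_dist
    refine ⟨q, hq, hlq, ?_⟩
    intro hmem
    have hdrop := SimpleGraph.dist_le (q.dropUntil v hmem)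
    have hdle := SimpleGraph.Walk.length_dropUntil_le q hmem
    have htake : (q.takeUntil v hmem).length ≠ 0 := by
      intro h0
      exact hw.ne' (SimpleGraph.Walk.eq_of_length_eq_zero h0)
    have hsum : (q.takeUntil v hmem).length + (q.dropUntil v hmem).length = q.length := by
      have h2 := congrArg SimpleGraph.Walk.length (q.take_spec hmem)
      rw [SimpleGraph.Walk.length_append] at h2
      exact h2
    omega
  obtain ⟨q1, hq1, hl1, hv1⟩ := key w1 h1 hd1
  obtain ⟨q2, hq2, hl2, hv2⟩ := key w2 h2 hd2
  have heq := (hT.existsUnique_path v r).unique (hq1.cons hv1 (h := h1)) (hq2.cons hv2 (h := h2))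
  have hsup := congrArg SimpleGraph.Walk.support heq
  rw [SimpleGraph.Walk.support_cons, SimpleGraph.Walk.support_cons,
    q1.support_eq_cons, q2.support_eq_cons] at hsup
  simp only [List.cons.injEq] at hsup
  exact hsup.2.1

theorem tree_betaS_lower_bound [Fintype V] (G : SimpleGraph V) (hT : G.IsTree)
    (hn : 2 ≤ Fintype.card V) (k : ℕ) (hk1 : 1 ≤ k) (hk : k ≤ Fintype.card V) :
    (Fintype.card V : ℤ) - k - 1 ≤ betaS G k := by
  classical
  have hconn := hT.isConnected
  have hnon : Nonempty V := Fintype.card_pos_iff.mp (by omega)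
  obtain ⟨r⟩ := hnon
  set n := Fintype.card V with hn'
  -- distances
  have hdlt : ∀ v : V, G.dist v r < n := by
    intro v
    obtain ⟨p, hp, hl⟩ := (hconn v r).exists_path_of_dist
    rw [← hl]
    exact hp.length_lt
  have hd0 : ∀ v : V, G.dist v r = 0 ↔ v = r := by
    intro v
    constructor
    · intro h
      by_contra hne
      exact (SimpleGraph.dist_ne_zero_iff_ne_and_reachable.mpr ⟨hne, hconn v r⟩) h
    · rintro rfl
      exact SimpleGraph.dist_self
  -- encoding
  set code : V → ℕ := fun v => ((Fintype.equivFin V) v : ℕ) with hcodedef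
  have hcodelt : ∀ v, code v < n := fun v => ((Fintype.equivFin V) v).isLt
  have hcodeinj : Function.Injective code := by
    intro u v h
    exact (Fintype.equivFin V).injective (Fin.val_injective h)
  set ω : V → ℕ := fun v => n * (n - G.dist v r) + code v with hωdef
  have hωmod : ∀ v, ω v % n = code v := by
    intro v
    rw [hωdef]
    simp only
    rw [Nat.mul_add_mod, Nat.mod_eq_of_lt (hcodelt v)]
  have hωinj : Function.Injective ω := by
    intro u v h
    apply hcodeinj
    rw [← hωmod u, ← hωmod v, h]
  have hωlt : ∀ u v : V, G.dist u r < G.dist v r → ω v < ω u := by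
    intro u v h
    have h1 : n - G.dist v r + 1 ≤ n - G.dist u r := by
      have := hdlt v
      omega
    have h2 : n * (n - G.dist v r + 1) ≤ n * (n - G.dist u r) :=
      Nat.mul_le_mul_left n h1
    have h3 : n * (n - G.dist v r + 1) = n * (n - G.dist v r) + n := by ring
    have h4 : n * (n - G.dist v r) + n ≤ n * (n - G.dist u r) := by
      rw [← h3]
      exact h2
    have h5 := hcodelt v
    calc ω v = n * (n - G.dist v r) + code v := rfl
      _ < n * (n - G.dist v r) + n := by omega
      _ ≤ n * (n - G.dist u r) := h4
      _ ≤ ω u := Nat.le_add_right _ _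
  letI : LinearOrder V := LinearOrder.lift' ω hωinj
  have hlt : ∀ u v : V, u < v ↔ ω u < ω v := fun u v => Iff.rfl
  let σ : Fin n ≃o V := monoEquivOfFin V hn'.symm
  set vertOf : ℕ → V := fun i => if h : i < n then σ ⟨i, h⟩ else r with hvertOfdef
  set idx : V → ℕ := fun v => (σ.symm v : ℕ) with hidxdef
  have hidxlt : ∀ v, idx v < n := fun v => (σ.symm v).isLt
  have h_vi : ∀ i, i < n → idx (vertOf i) = i := by
    intro i h
    rw [hvertOfdef, hidxdef]
    simp only [dif_pos h]
    rw [OrderIso.symm_apply_apply]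
  have h_iv : ∀ v, vertOf (idx v) = v := by
    intro v
    rw [hvertOfdef, hidxdef]
    simp only [dif_pos (σ.symm v).isLt, Fin.eta]
    rw [OrderIso.apply_symm_apply]
  have hmono : ∀ u v : V, u < v ↔ idx u < idx v := by
    intro u v
    rw [hidxdef]
    simp only
    rw [← Fin.lt_def]
    exact (OrderIso.lt_iff_lt σ.symm).symm
  have hvr : ∀ v : V, v ≠ r → v < r := by
    intro v hv
    have hne0 : G.dist v r ≠ 0 := fun h0 => hv ((hd0 v).mp h0)
    have h1 : G.dist r r < G.dist v r := by
      rw [SimpleGraph.dist_self]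
      omega
    exact (hlt v r).mpr (hωlt r v h1)
  have hidxr : idx r = n - 1 := by
    by_contra hne2
    have h1 : idx r < n - 1 := by
      have := hidxlt r
      omega
    have h2 : vertOf (n-1) ≠ r := by
      intro h
      have h3 := h_vi (n-1) (by omega)
      rw [h] at h3
      omega
    have h4 : idx (vertOf (n-1)) < idx r := (hmono _ _).mp (hvr _ h2)
    rw [h_vi (n-1) (by omega)] at h4
    omega
  have hidxne : ∀ v : V, v ≠ r → idx v < n - 1 := by
    intro v hv
    have h1 := hidxlt v
    have h2 : idx v ≠ n - 1 := by
      intro h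
      apply hv
      calc v = vertOf (idx v) := (h_iv v).symm
        _ = vertOf (idx r) := by rw [h, hidxr]
        _ = r := h_iv r
    omega
  -- parent
  have hparex : ∀ v : V, v ≠ r → ∃ w, G.Adj v w ∧ G.dist w r + 1 = G.dist v r :=
    fun v hv => tree_parent_exists hT r hv
  set parV : V → V := fun v => if h : v = r then r else (hparex v h).choose with hparVdef
  have hpar : ∀ v : V, v ≠ r → G.Adj v (parV v) ∧ G.dist (parV v) r + 1 = G.dist v r := by
    intro v hv
    rw [hparVdef]
    simp only [dif_neg hv]
    exact (hparex v hv).choose_spec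
  have hparlt : ∀ v : V, v ≠ r → v < parV v := by
    intro v hv
    have h := (hpar v hv).2
    exact (hlt v (parV v)).mpr (hωlt (parV v) v (by omega))
  have horient : ∀ u w : V, G.Adj u w → u < w → parV u = w := by
    intro u w huw hlt2
    rcases tree_adj_dist hT r huw with hcase | hcase
    · have hur : u ≠ r := by
        intro h
        rw [h, SimpleGraph.dist_self] at hcase
        omega
      exact tree_parent_unique hT r (hpar u hur).1 (hpar u hur).2 huw hcase
    · exfalso
      have : w < u := (hlt w u).mpr (hωlt u w (by omega))
      exact absurd hlt2 (not_lt.mpr (le_of_lt this))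
  set PAR : ℕ → ℕ := fun i => idx (parV (vertOf i)) with hPARdef
  have hvne : ∀ i, i < n - 1 → vertOf i ≠ r := by
    intro i hi h
    have h3 := h_vi i (by omega)
    rw [h, hidxr] at h3
    omega
  have hPAR : ∀ i, i < n - 1 → i < PAR i ∧ PAR i < n := by
    intro i hi
    have hv := hvne i hi
    constructor
    · have h5 := (hmono _ _).mp (hparlt (vertOf i) hv)
      rw [h_vi i (by omega)] at h5
      exact h5
    · exact hidxlt _
  obtain ⟨g, H1, H2, H3⟩ := greedyA n k hk PAR hPAR
  -- the signed function
  have hfsymm : ∀ a b : V, (if a < b then g (idx a) else if b < a then g (idx b) else g (idx a))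
      = (if b < a then g (idx b) else if a < b then g (idx a) else g (idx b)) := by
    intro a b
    rcases lt_trichotomy a b with h | rfl | h
    · rw [if_pos h, if_neg (asymm h), if_pos h]
    · simp
    · rw [if_neg (asymm h), if_pos h, if_pos h]
  set f : Sym2 V → ℤ := Sym2.lift ⟨fun a b => if a < b then g (idx a) else
      if b < a then g (idx b) else g (idx a), hfsymm⟩ with hfdef
  have hfval : ∀ a b : V, f s(a, b) = if a < b then g (idx a) else
      if b < a then g (idx b) else g (idx a) := by
    intro a b
    rw [hfdef, Sym2.lift_mk]
  have hfE : ∀ v : V, v ≠ r → f s(v, parV v) = g (idx v) := by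
    intro v hv
    rw [hfval, if_pos (hparlt v hv)]
  have hEedge : ∀ v : V, v ≠ r → s(v, parV v) ∈ G.edgeSet := by
    intro v hv
    rw [SimpleGraph.mem_edgeSet]
    exact (hpar v hv).1
  have hsurj : ∀ e ∈ G.edgeSet, ∃ v, v ≠ r ∧ s(v, parV v) = e := by
    intro e he
    induction e using Sym2.ind with
    | _ u w =>
      rw [SimpleGraph.mem_edgeSet] at he
      rcases lt_trichotomy u w with h | h | h
      · have hur : u ≠ r := by
          intro hh
          subst hh
          exact absurd h (not_lt.mpr (le_of_lt (hvr w he.ne')))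
        exact ⟨u, hur, by rw [horient u w he h]⟩
      · exact absurd h he.ne
      · have hwr : w ≠ r := by
          intro hh
          subst hh
          exact absurd h (not_lt.mpr (le_of_lt (hvr u he.ne)))
        refine ⟨w, hwr, ?_⟩
        rw [horient w u he.symm h, Sym2.eq_swap]
  have hEinj : ∀ v1 v2 : V, v1 ≠ r → v2 ≠ r → s(v1, parV v1) = s(v2, parV v2) → v1 = v2 := by
    intro v1 v2 h1 h2 he
    rw [Sym2.eq_iff] at he
    rcases he with ⟨h, _⟩ | ⟨ha, hb⟩
    · exact h
    · exfalso
      have l1 := hparlt v1 h1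
      have l2 := hparlt v2 h2
      rw [hb] at l1
      rw [← ha] at l2
      exact absurd l1 (not_lt.mpr (le_of_lt l2))
  -- sums
  have hconv : edgeSum G f = ∑ e ∈ G.edgeFinset, f e := by
    rw [edgeSum, ← SimpleGraph.coe_edgeFinset, finsum_mem_coe_finset]
  have h_edge : ∑ i ∈ range (n-1), g i = ∑ e ∈ G.edgeFinset, f e := by
    refine sum_bij (fun i _ => s(vertOf i, parV (vertOf i))) ?_ ?_ ?_ ?_
    · intro i hi
      rw [SimpleGraph.mem_edgeFinset]
      exact hEedge _ (hvne i (mem_range.mp hi))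
    · intro i1 h1 i2 h2 heq
      have h0 := hEinj _ _ (hvne i1 (mem_range.mp h1)) (hvne i2 (mem_range.mp h2)) heq
      have e1 := h_vi i1 (by have := mem_range.mp h1; omega)
      have e2 := h_vi i2 (by have := mem_range.mp h2; omega)
      rw [← e1, ← e2, h0]
    · intro e he
      obtain ⟨v, hv, hev⟩ := hsurj e (SimpleGraph.mem_edgeFinset.mp he)
      refine ⟨idx v, mem_range.mpr (hidxne v hv), ?_⟩
      show s(vertOf (idx v), parV (vertOf (idx v))) = e
      rw [h_iv v]
      exact hev
    · intro i hi
      have h5 := hfE (vertOf i) (hvne i (mem_range.mp hi))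
      rw [h_vi i (by have := mem_range.mp hi; omega)] at h5
      exact h5.symm
  have hconvV : ∀ v : V, vertexSum G f v = ∑ e ∈ G.edgeFinset.filter (fun e => v ∈ e), f e := by
    intro v
    rw [vertexSum]
    rw [show {e ∈ G.edgeSet | v ∈ e} = ↑(G.edgeFinset.filter (fun e => v ∈ e)) by
      ext e
      simp [SimpleGraph.mem_edgeFinset]]
    rw [finsum_mem_coe_finset]
  have h_vert : ∀ j, j < n → ∑ i ∈ (range (n-1)).filter (fun i => PAR i = j ∨ i = j), g i
      = ∑ e ∈ G.edgeFinset.filter (fun e => vertOf j ∈ e), f e := by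
    intro j hj
    refine sum_bij (fun i _ => s(vertOf i, parV (vertOf i))) ?_ ?_ ?_ ?_
    · intro i hi
      obtain ⟨hir, hcase⟩ := mem_filter.mp hi
      have hir' := mem_range.mp hir
      refine mem_filter.mpr ⟨SimpleGraph.mem_edgeFinset.mpr (hEedge _ (hvne i hir')), ?_⟩
      rw [Sym2.mem_iff]
      rcases hcase with h | rfl
      · right
        calc vertOf j = vertOf (PAR i) := by rw [h]
          _ = vertOf (idx (parV (vertOf i))) := rfl
          _ = parV (vertOf i) := h_iv _
      · left
        rfl
    · intro i1 h1 i2 h2 heq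
      have h1' := mem_range.mp (mem_filter.mp h1).1
      have h2' := mem_range.mp (mem_filter.mp h2).1
      have h0 := hEinj _ _ (hvne i1 h1') (hvne i2 h2') heq
      have e1 := h_vi i1 (by omega)
      have e2 := h_vi i2 (by omega)
      rw [← e1, ← e2, h0]
    · intro e he
      obtain ⟨he1, he2⟩ := mem_filter.mp he
      obtain ⟨v, hv, hev⟩ := hsurj e (SimpleGraph.mem_edgeFinset.mp he1)
      refine ⟨idx v, ?_, ?_⟩
      swap
      · show s(vertOf (idx v), parV (vertOf (idx v))) = e
        rw [h_iv v]
        exact hev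
      refine mem_filter.mpr ⟨mem_range.mpr (hidxne v hv), ?_⟩
      rw [← hev, Sym2.mem_iff] at he2
      rcases he2 with h | h
      · right
        rw [← h, h_vi j hj]
      · left
        calc PAR (idx v) = idx (parV (vertOf (idx v))) := rfl
          _ = idx (parV v) := by rw [h_iv v]
          _ = idx (vertOf j) := by rw [h]
          _ = j := h_vi j hj
    · intro i hi
      have hir' := mem_range.mp (mem_filter.mp hi).1
      have h5 := hfE (vertOf i) (hvne i hir')
      rw [h_vi i (by omega)] at h5
      exact h5.symm
  have hsplitsum : ∀ j, j < n → ∑ i ∈ (range (n-1)).filter (fun i => PAR i = j ∨ i = j), g i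
      = (∑ i ∈ (range (n-1)).filter (fun i => PAR i = j), g i)
        + (if j < n - 1 then g j else 0) := by
    intro j hj
    rw [filter_or]
    rw [sum_union (by
      rw [disjoint_left]
      intro i hi1 hi2
      have h1 := mem_filter.mp hi1
      have h2 := mem_filter.mp hi2
      have := (hPAR i (mem_range.mp h1.1)).1
      omega)]
    congr 1
    by_cases hj2 : j < n - 1
    · have hsingle : (range (n-1)).filter (fun i => i = j) = {j} := by
        ext i
        simp only [mem_filter, mem_range, mem_singleton]
        constructor
        · exact fun h => h.2
        · rintro rfl
          exact ⟨hj2, rfl⟩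
      rw [hsingle, sum_singleton, if_pos hj2]
    · have hempty : (range (n-1)).filter (fun i => i = j) = ∅ := by
        refine eq_empty_iff_forall_notMem.mpr (fun i hi => ?_)
        obtain ⟨h1, rfl⟩ := mem_filter.mp hi
        exact hj2 (mem_range.mp h1)
      rw [hempty, sum_empty, if_neg hj2]
  have hsat : ∀ j, j < k → vertexSum G f (vertOf j) ≤ 1 := by
    intro j hjk
    have hjn : j < n := by omega
    rw [hconvV, ← h_vert j hjn, hsplitsum j hjn]
    exact H2 j hjk
  have hinj : Set.InjOn vertOf ↑(range k) := by
    intro i1 h1 i2 h2 he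
    rw [mem_coe, mem_range] at h1 h2
    have e1 := h_vi i1 (by omega)
    have e2 := h_vi i2 (by omega)
    rw [← e1, ← e2, he]
  have hcount : k ≤ {v : V | vertexSum G f v ≤ 1}.ncard := by
    have hsub : ↑((range k).image vertOf) ⊆ {v : V | vertexSum G f v ≤ 1} := by
      intro v hv
      simp only [coe_image, Set.mem_image, mem_coe, mem_range] at hv
      obtain ⟨j, hj, rfl⟩ := hv
      exact hsat j hj
    have h1 : ((range k).image vertOf).card = k := by
      rw [card_image_of_injOn hinj, card_range]
    calc k = (↑((range k).image vertOf) : Set V).ncard := by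
          rw [Set.ncard_coe_finset, h1]
      _ ≤ _ := Set.ncard_le_ncard hsub (Set.toFinite _)
  have hsm : IsSignedSubmatching G f k := by
    constructor
    · intro e he
      obtain ⟨v, hv, rfl⟩ := hsurj e he
      rw [hfE v hv]
      exact H1 (idx v) (hidxne v hv)
    · exact hcount
  have hBdd : BddAbove {s : ℤ | ∃ f', IsSignedSubmatching G f' k ∧ s = edgeSum G f'} := by
    refine ⟨(G.edgeFinset.card : ℤ), ?_⟩
    rintro s ⟨f', hf', rfl⟩
    rw [edgeSum, ← SimpleGraph.coe_edgeFinset, finsum_mem_coe_finset]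
    calc ∑ e ∈ G.edgeFinset, f' e ≤ ∑ _e ∈ G.edgeFinset, (1:ℤ) := by
          refine sum_le_sum (fun e he => ?_)
          rcases hf'.1 e (SimpleGraph.mem_edgeFinset.mp he) with h | h <;> omega
      _ = G.edgeFinset.card := by simp
  have hmem : edgeSum G f ∈ {s : ℤ | ∃ f', IsSignedSubmatching G f' k ∧ s = edgeSum G f'} :=
    ⟨f, hsm, rfl⟩
  have hfinal : (n:ℤ) - k - 1 ≤ edgeSum G f := by
    rw [hconv, ← h_edge]
    linarith [H3]
  calc ((n:ℕ):ℤ) - k - 1 ≤ edgeSum G f := hfinal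
    _ ≤ betaS G k := by
        rw [betaS]
        exact le_csSup hBdd hmem
end
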